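/- arXiv:1112.3128 — 15 statements merged into one kernel-verified Lean document; each statement's English description precedes it below -/
import Mathlib

section
/- Let I be an infinite set. The function φ₁ᵖ : (I → ℂ) → ℂ defined by φ₁ᵖ(β) = ∏_{i∈I} β_i (a finite product, since all but finitely many factors are 1) when β_i = 1 for all but finitely many i ∈ I, and φ₁ᵖ(β) = 0 otherwise, is multilinear: for every i₀ ∈ I, every β : I → ℂ, every c ∈ ℂ and all v, w ∈ ℂ one has φ₁ᵖ(Function.update β i₀ (c·v + w)) = c·φ₁ᵖ(Function.update β i₀ v) + φ₁ᵖ(Function.update β i₀ w). Equivalently, there exists a MultilinearMap ℂ (fun _ : I => ℂ) ℂ whose underlying function is φ₁ᵖ. -/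
open scoped TensorProduct Classical

/-- The multilinear functional `φ₁ᵖ` on `Π i : I, ℂ`: the (finite) product of the
coordinates when all but finitely many of them equal `1`, and `0` otherwise. -/
noncomputable def phiOneP (I : Type*) (β : I → ℂ) : ℂ :=
  if {i | β i ≠ 1}.Finite then ∏ᶠ i, β i else 0

lemma phiOneP_update (I : Type*) [DecidableEq I] (i₀ : I) (β : I → ℂ) (x : ℂ) :
    phiOneP I (Function.update β i₀ x) = x * phiOneP I (Function.update β i₀ 1) := by
  set T : Set I := {i | Function.update β i₀ 1 i ≠ 1} with hT
  have hsub : ∀ y : ℂ, {i | Function.update β i₀ y i ≠ 1} ⊆ insert i₀ T := by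
    intro y i hi
    rcases eq_or_ne i i₀ with h | h
    · exact Or.inl h
    · right
      simpa [hT, Function.update_of_ne h] using
        (by simpa [Function.update_of_ne h] using hi : β i ≠ 1)
  have hTsub : T ⊆ {i | Function.update β i₀ x i ≠ 1} := by
    intro i hi
    have hne : i ≠ i₀ := by
      intro h; subst h; simp [hT] at hi
    simpa [Function.update_of_ne hne] using
      (by simpa [hT, Function.update_of_ne hne] using hi : β i ≠ 1)
  by_cases hTf : T.Finite
  · have hxf : {i | Function.update β i₀ x i ≠ 1}.Finite :=
      ((hTf.insert i₀)).subset (hsub x)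
    have h1f : {i | Function.update β i₀ 1 i ≠ 1}.Finite := hTf
    rw [phiOneP, phiOneP, if_pos hxf, if_pos h1f]
    have hi₀T : i₀ ∉ hTf.toFinset := by simp [hT]
    have key : ∀ y : ℂ, ∏ᶠ i, Function.update β i₀ y i =
        y * ∏ i ∈ hTf.toFinset, β i := by
      intro y
      have hsupp : (Function.mulSupport (Function.update β i₀ y)) ⊆
          ↑(insert i₀ hTf.toFinset) := by
        intro i hi
        have := hsub y hi
        simpa using this
      rw [finprod_eq_prod_of_mulSupport_subset _ hsupp,
        Finset.prod_insert hi₀T, Function.update_self]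
      congr 1
      apply Finset.prod_congr rfl
      intro i hi
      have hne : i ≠ i₀ := by rintro rfl; exact hi₀T hi
      simp [Function.update_of_ne hne]
    rw [key x, key 1, one_mul]
  · have hxn : ¬ {i | Function.update β i₀ x i ≠ 1}.Finite := fun h =>
      hTf (h.subset hTsub)
    rw [phiOneP, phiOneP, if_neg hxn, if_neg hTf, mul_zero]

theorem phiOneP_multilinear (I : Type*) [Infinite I] [DecidableEq I] :
    (∀ (i₀ : I) (β : I → ℂ) (c v w : ℂ),
      phiOneP I (Function.update β i₀ (c * v + w)) =
        c * phiOneP I (Function.update β i₀ v) + phiOneP I (Function.update β i₀ w)) ∧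
    ∃ M : MultilinearMap ℂ (fun _ : I => ℂ) ℂ, ⇑M = phiOneP I := by
  have h : ∀ (i₀ : I) (β : I → ℂ) (c v w : ℂ),
      phiOneP I (Function.update β i₀ (c * v + w)) =
        c * phiOneP I (Function.update β i₀ v) + phiOneP I (Function.update β i₀ w) := by
    intro i₀ β c v w
    rw [phiOneP_update I i₀ β (c * v + w), phiOneP_update I i₀ β v,
      phiOneP_update I i₀ β w]
    ring
  refine ⟨h, ⟨{ toFun := phiOneP I
                map_update_add' := ?_
                map_update_smul' := ?_ }, rfl⟩⟩
  · intro _inst β i x y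
    rw [@phiOneP_update I _inst i β (x + y), @phiOneP_update I _inst i β x,
      @phiOneP_update I _inst i β y]
    ring
  · intro _inst β i c x
    rw [smul_eq_mul, smul_eq_mul, @phiOneP_update I _inst i β (c * x),
      @phiOneP_update I _inst i β x]
    ring
end

section
/- Let (X_i)_{i∈I} be a family of complex vector spaces, let u ∈ Π_{i∈I} X_i satisfy u_i ≠ 0 for every i ∈ I, and let F ⊆ I be a finite nonempty subset. Let J_F^u : ⨂_{i∈F} X_i → ⨂_{i∈I} X_i be the ℂ-linear map determined on elementary tensors by J_F^u(⊗_{i∈F} x_i) = ⊗_{i∈I} x̃_i, where x̃_i = x_i for i ∈ F and x̃_i = u_i for i ∈ I∖F. Then J_F^u is injective. -/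
open scoped TensorProduct

open Function in
open scoped Classical in
noncomputable def Pfun {κ : Type*} (x : κ → ℂ) : ℂ :=
  if (Function.mulSupport x).Finite then ∏ᶠ i, x i else 0

open Function in
lemma Pfun_update {κ : Type*} [DecidableEq κ] (x : κ → ℂ) (j : κ) :
    ∃ C : ℂ, ∀ a, Pfun (Function.update x j a) = a * C := by
  by_cases hT : (mulSupport x \ {j}).Finite
  · refine ⟨∏ i ∈ hT.toFinset, x i, fun a => ?_⟩
    have hsub : mulSupport (update x j a) ⊆ ↑(insert j hT.toFinset) := by
      intro i hi
      rcases eq_or_ne i j with rfl | h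
      · simp
      · have : x i ≠ 1 := by rwa [mulSupport, Set.mem_setOf_eq, update_of_ne h] at hi
        simp [hT.mem_toFinset, mulSupport, h, this]
    have hfin : (mulSupport (update x j a)).Finite :=
      Set.Finite.subset (insert j hT.toFinset : Finset κ).finite_toSet hsub
    rw [Pfun, if_pos hfin, finprod_eq_prod_of_mulSupport_subset _ hsub,
      Finset.prod_insert (by simp), update_self]
    congr 1
    refine Finset.prod_congr rfl fun i hi => ?_
    have : i ≠ j := by
      intro h; subst h; simp [hT.mem_toFinset] at hi
    rw [update_of_ne this]
  · refine ⟨0, fun a => ?_⟩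
    rw [Pfun, if_neg, mul_zero]
    intro hfin
    refine hT (hfin.subset fun i hi => ?_)
    rcases hi with ⟨hi, hij⟩
    have hij' : i ≠ j := hij
    rw [mulSupport, Set.mem_setOf_eq, update_of_ne hij']
    exact hi

lemma Pfun_one {κ : Type*} : Pfun (fun _ : κ => (1 : ℂ)) = 1 := by
  rw [Pfun, if_pos]
  · exact finprod_one
  · simp [Function.mulSupport]

/-- If `u` is a family of nonzero vectors and `F` a nonempty finite subset of the infinite
index set `I`, then the linear map `J_F^u : ⨂_{i∈F} X_i → ⨂_{i∈I} X_i`, determined on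
elementary tensors by filling in the coordinates outside `F` with the `u_i`'s, is injective. -/
theorem JFu_injective {I : Type*} [Infinite I] [DecidableEq I]
    (X : I → Type*) [∀ i, AddCommGroup (X i)] [∀ i, Module ℂ (X i)]
    (u : ∀ i, X i) (hu : ∀ i, u i ≠ 0) (F : Finset I) (hF : F.Nonempty)
    (J : (⨂[ℂ] (i : F), X i) →ₗ[ℂ] ⨂[ℂ] i, X i)
    (hJ : ∀ x : ∀ i : F, X i,
      J (PiTensorProduct.tprod ℂ x) =
        PiTensorProduct.tprod ℂ (fun i => if h : i ∈ F then x ⟨i, h⟩ else u i)) :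
    Function.Injective J := by
  -- choose dual functionals with `φ i (u i) = 1`
  have hdual : ∀ i : I, ∃ φ : Module.Dual ℂ (X i), φ (u i) = 1 := by
    intro i
    have := (Module.forall_dual_apply_eq_zero_iff ℂ (u i)).not.mpr (hu i)
    push_neg at this
    obtain ⟨φ, hφ⟩ := this
    exact ⟨(φ (u i))⁻¹ • φ, by simp [inv_mul_cancel₀ hφ]⟩
  choose φ hφ using hdual
  set g : (∀ i, X i) → (I → ℂ) := fun y i => if i ∈ F then 1 else φ i (y i) with hg_def
  have key : ∀ (d : DecidableEq I) (y : ∀ i, X i) (j : I) (v : X j), j ∉ F →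
      g (@Function.update _ _ d y j v) = @Function.update _ _ d (g y) j (φ j v) := by
    intro d y j v hj
    funext i
    rcases eq_or_ne i j with rfl | h
    · simp [hg_def, hj, Function.update_self]
    · simp [hg_def, Function.update_of_ne h]
  have keyF : ∀ (d : DecidableEq I) (y : ∀ i, X i) (j : I) (v : X j), j ∈ F →
      g (@Function.update _ _ d y j v) = g y := by
    intro d y j v hj
    funext i
    rcases eq_or_ne i j with rfl | h
    · simp [hg_def, hj, Function.update_self]
    · simp [hg_def, Function.update_of_ne h]
  have restF : ∀ (d : DecidableEq I) (y : ∀ i, X i) (j : I) (hj : j ∈ F) (v : X j),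
      (fun i : F => @Function.update _ _ d y j v i) =
        Function.update (fun i : F => y i) ⟨j, hj⟩ v := by
    intro d y j hj v
    funext i
    rcases eq_or_ne i ⟨j, hj⟩ with rfl | h
    · simp [Function.update_self]
    · have h' : (i : I) ≠ j := fun hh => h (Subtype.ext hh)
      rw [Function.update_of_ne h, Function.update_of_ne h']
  have restNF : ∀ (d : DecidableEq I) (y : ∀ i, X i) (j : I) (hj : j ∉ F) (v : X j),
      (fun i : F => @Function.update _ _ d y j v i) = fun i : F => y i := by
    intro d y j hj v
    funext i
    exact Function.update_of_ne (fun hh => hj (by rw [← hh]; exact i.2)) _ _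
  let M : MultilinearMap ℂ X (⨂[ℂ] (i : F), X i) :=
  { toFun := fun y => Pfun (g y) • PiTensorProduct.tprod ℂ (fun i : F => y i)
    map_update_add' := by
      intro dec y j a b
      by_cases hj : j ∈ F
      · rw [keyF dec y j _ hj, keyF dec y j _ hj, keyF dec y j _ hj,
          restF dec y j hj, restF dec y j hj, restF dec y j hj,
          MultilinearMap.map_update_add, smul_add]
      · obtain ⟨C, hC⟩ := @Pfun_update _ dec (g y) j
        rw [key dec y j _ hj, key dec y j _ hj, key dec y j _ hj,
          restNF dec y j hj, restNF dec y j hj, restNF dec y j hj,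
          hC, hC, hC, map_add, add_mul, add_smul]
    map_update_smul' := by
      intro dec y j c a
      by_cases hj : j ∈ F
      · rw [keyF dec y j _ hj, keyF dec y j _ hj,
          restF dec y j hj, restF dec y j hj,
          MultilinearMap.map_update_smul, smul_comm]
      · obtain ⟨C, hC⟩ := @Pfun_update _ dec (g y) j
        rw [key dec y j _ hj, key dec y j _ hj,
          restNF dec y j hj, restNF dec y j hj,
          hC, hC, map_smul, smul_eq_mul, smul_smul, mul_assoc] }
  let D := PiTensorProduct.lift M
  have hM : ∀ y : ∀ i, X i,
      M y = Pfun (g y) • PiTensorProduct.tprod ℂ (fun i : F => y i) := fun _ => rfl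
  have hDJ : ∀ x : ∀ i : F, X i,
      D (J (PiTensorProduct.tprod ℂ x)) = PiTensorProduct.tprod ℂ x := by
    intro x
    rw [hJ, PiTensorProduct.lift.tprod, hM]
    have h1 : g (fun i => if h : i ∈ F then x ⟨i, h⟩ else u i) = fun _ => 1 := by
      funext i
      by_cases hi : i ∈ F
      · simp [hg_def, hi]
      · simp [hg_def, hi, hφ]
    have h2 : (fun i : F => (fun i => if h : i ∈ F then x ⟨i, h⟩ else u i) (i : I)) = x := by
      funext i
      simp [i.2]
    rw [h1, h2, Pfun_one, one_smul]
  have hz : ∀ z, D (J z) = z := by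
    intro z
    induction z using PiTensorProduct.induction_on with
    | smul_tprod r x => rw [map_smul, map_smul, hDJ]
    | add x y hx hy => rw [map_add, map_add, hx, hy]
  intro a b hab
  rw [← hz a, ← hz b, hab]
end

section
/- Let (X_i)_{i∈I} be a family of complex vector spaces and let u ∈ Π_{i∈I} X_i satisfy u_i ≠ 0 for every i ∈ I. Then the elementary tensor ⊗u is nonzero in ⨂_{i∈I} X_i. -/
open scoped TensorProduct

open Function in
/-- The value of the "infinite product" functional on `I → ℂ`: the product of the entries
if all but finitely many equal `1`, and `0` otherwise. -/
noncomputable def phiFun {I : Type*} (x : I → ℂ) : ℂ :=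
  open scoped Classical in
  if h : (mulSupport x).Finite then ∏ j ∈ h.toFinset, x j else 0

open Function in
lemma phiFun_update {I : Type*} [DecidableEq I] (x : I → ℂ) (i : I) (a : ℂ) :
    phiFun (update x i a) = a * phiFun (update x i 1) := by
  have hsupp : mulSupport (update x i 1) = mulSupport x \ {i} := mulSupport_update_one x i
  have hsub : mulSupport (update x i 1) ⊆ mulSupport (update x i a) := by
    intro j hj
    rw [hsupp] at hj
    obtain ⟨hjx, hji⟩ := hj
    simp only [mem_mulSupport, update_apply]
    rw [if_neg (by simpa using hji)]
    exact hjx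
  by_cases h : (mulSupport (update x i 1)).Finite
  · have h' : (mulSupport (update x i a)).Finite := by
      have : mulSupport (update x i a) ⊆ insert i (mulSupport (update x i 1)) := by
        intro j hj
        rcases eq_or_ne j i with rfl | hji
        · exact Set.mem_insert _ _
        · refine Set.mem_insert_of_mem _ ?_
          rw [hsupp]
          refine ⟨?_, hji⟩
          simpa [mem_mulSupport, update_apply, if_neg hji] using hj
      exact (h.insert i).subset this
    simp only [phiFun]
    rw [dif_pos h', dif_pos h]
    have hiT : i ∉ h.toFinset := by
      simp [hsupp]
    have hsubT : h'.toFinset ⊆ insert i h.toFinset := by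
      intro j hj
      simp only [Set.Finite.mem_toFinset] at hj
      rcases eq_or_ne j i with rfl | hji
      · exact Finset.mem_insert_self _ _
      · refine Finset.mem_insert_of_mem ?_
        simp only [Set.Finite.mem_toFinset, hsupp]
        refine ⟨?_, hji⟩
        simpa [mem_mulSupport, update_apply, if_neg hji] using hj
    have h1 : ∏ j ∈ h'.toFinset, update x i a j = ∏ j ∈ insert i h.toFinset, update x i a j := by
      refine Finset.prod_subset hsubT ?_
      intro j _ hj
      simp only [Set.Finite.mem_toFinset, mem_mulSupport, not_not] at hj
      exact hj
    rw [h1, Finset.prod_insert hiT, update_self]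
    congr 1
    refine Finset.prod_congr rfl fun j hj => ?_
    have hji : j ≠ i := by
      intro hji; subst hji; exact hiT hj
    rw [update_apply, if_neg hji, update_apply, if_neg hji]
  · have h' : ¬ (mulSupport (update x i a)).Finite := fun hf => h (hf.subset hsub)
    simp only [phiFun]
    rw [dif_neg h', dif_neg h, mul_zero]

/-- The "infinite product" multilinear map on `(I → ℂ)`. -/
noncomputable def phi (I : Type*) : MultilinearMap ℂ (fun _ : I => ℂ) ℂ where
  toFun := phiFun
  map_update_add' m i a b := by
    rw [phiFun_update m i (a+b), phiFun_update m i a, phiFun_update m i b, add_mul]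
  map_update_smul' m i c a := by
    rw [phiFun_update m i (c • a), phiFun_update m i a, smul_eq_mul, smul_eq_mul, mul_assoc]

lemma phi_one (I : Type*) : phi I (fun _ => 1) = 1 := by
  show phiFun (fun _ : I => (1:ℂ)) = 1
  have h : Function.mulSupport (fun _ : I => (1:ℂ)) = ∅ := by
    simp [Function.mulSupport]
  simp only [phiFun]
  rw [dif_pos (by rw [h]; exact Set.finite_empty)]
  apply Finset.prod_eq_one
  intro j hj
  simp [h] at hj

/-- If `u_i ≠ 0` for every `i`, then the elementary tensor `⊗u` is nonzero in the
algebraic tensor product `⨂_{i∈I} X_i` of a family of complex vector spaces. -/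
theorem tprod_ne_zero_of_forall_ne_zero {I : Type*} [Infinite I]
    (X : I → Type*) [∀ i, AddCommGroup (X i)] [∀ i, Module ℂ (X i)]
    (u : ∀ i, X i) (hu : ∀ i, u i ≠ 0) :
    PiTensorProduct.tprod ℂ u ≠ 0 := by
  have hex : ∀ i, ∃ f : X i →ₗ[ℂ] ℂ, f (u i) = 1 := by
    intro i
    have : ¬ ∀ φ : Module.Dual ℂ (X i), φ (u i) = 0 := by
      rw [Module.forall_dual_apply_eq_zero_iff]
      exact hu i
    push_neg at this
    obtain ⟨φ, hφ⟩ := this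
    exact ⟨(φ (u i))⁻¹ • φ, by simp [inv_mul_cancel₀ hφ]⟩
  choose f hf using hex
  intro h0
  have := congrArg (PiTensorProduct.lift ((phi I).compLinearMap f)) h0
  rw [PiTensorProduct.lift.tprod, map_zero] at this
  simp only [MultilinearMap.compLinearMap_apply] at this
  rw [show (fun i => f i (u i)) = fun _ => (1:ℂ) from funext hf, phi_one] at this
  exact one_ne_zero this
end

section
/- Let (X_i)_{i∈I} be a family of nonzero complex vector spaces. For x ∈ Π_{i∈I} X_i with x_i ≠ 0 for all i, let S_x ⊆ ⨂_{i∈I} X_i denote the ℂ-linear span of {⊗y : y ∈ Π_{i∈I} X_i, y_i ≠ 0 for all i, and y ∼ x}. Then: (i) S_x = S_y whenever x ∼ y, so that S descends to a family of submodules (S_ω) indexed by the quotient Ω_{I;X} of {x ∈ Π_{i∈I} X_i : ∀i, x_i ≠ 0} by ∼; (ii) this family is independent: for each class ω ∈ Ω_{I;X}, S_ω intersects the supremum of the S_{ω'} for ω' ≠ ω trivially (iSupIndep); and (iii) the supremum of all S_ω is the whole space ⨂_{i∈I} X_i. In other words, ⨂_{i∈I} X_i is the internal direct sum of the submodules S_ω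 over ω ∈ Ω_{I;X}. -/
open scoped TensorProduct

variable {I : Type*} (X : I → Type*) [∀ i, AddCommGroup (X i)] [∀ i, Module ℂ (X i)]

/-- The equivalence relation `∼` ("equal at all but finitely many coordinates") on the
set of families of nowhere-zero vectors. -/
def nowhereZeroSetoid : Setoid {x : ∀ i, X i // ∀ i, x i ≠ 0} where
  r x y := {i | x.1 i ≠ y.1 i}.Finite
  iseqv := by
    refine ⟨fun x => by simp, fun {x y} h => h.subset fun i hi => ?_,
      fun {x y z} hxy hyz => (hxy.union hyz).subset fun i hi => ?_⟩
    · exact fun e => hi e.symm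
    · by_cases h1 : x.1 i = y.1 i
      · exact Or.inr fun e => hi (h1.trans e)
      · exact Or.inl h1

/-- The linear span `S_x` of the elementary tensors `⊗y` over the nowhere-zero families
`y` equivalent to `x`. -/
def simSpan (x : {x : ∀ i, X i // ∀ i, x i ≠ 0}) : Submodule ℂ (⨂[ℂ] i, X i) :=
  Submodule.span ℂ {t | ∃ y : {x : ∀ i, X i // ∀ i, x i ≠ 0},
    {i | y.1 i ≠ x.1 i}.Finite ∧ t = PiTensorProduct.tprod ℂ y.1}

section Aux

variable {X}

lemma finite_swap {x y : ∀ i, X i} (hxy : {i | x i ≠ y i}.Finite)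
    {z : ∀ i, X i} (h : {i | z i ≠ x i}.Finite) : {i | z i ≠ y i}.Finite := by
  refine (h.union hxy).subset fun i hi => ?_
  by_cases h1 : z i = x i
  · exact Or.inr fun e => hi (h1.trans e)
  · exact Or.inl h1

omit [∀ i, Module ℂ (X i)] in
lemma finite_update [DecidableEq I] {x y : ∀ i, X i} {i : I} {u v : X i}
    (h : {j | Function.update y i u j ≠ x j}.Finite) :
    {j | Function.update y i v j ≠ x j}.Finite := by
  refine (h.union (Set.finite_singleton i)).subset fun j hj => ?_
  by_cases hji : j = i
  · exact Or.inr hji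
  · refine Or.inl ?_
    simp only [Set.mem_setOf_eq, Function.update_of_ne hji] at hj ⊢
    exact hj

open scoped Classical in
/-- The multilinear map sending `y` to `⊗y` if `y ∼ x`, and to `0` otherwise. -/
noncomputable def projML (x : ∀ i, X i) : MultilinearMap ℂ X (⨂[ℂ] i, X i) where
  toFun y := if {j | y j ≠ x j}.Finite then PiTensorProduct.tprod ℂ y else 0
  map_update_add' {_} y i u v := by
    by_cases h : {j | Function.update y i (u + v) j ≠ x j}.Finite
    · rw [if_pos h, if_pos (finite_update h), if_pos (finite_update h),
        MultilinearMap.map_update_add]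
    · rw [if_neg h, if_neg (fun h' => h (finite_update h')),
        if_neg (fun h' => h (finite_update h')), add_zero]
  map_update_smul' {_} y i c u := by
    by_cases h : {j | Function.update y i (c • u) j ≠ x j}.Finite
    · rw [if_pos h, if_pos (finite_update h), MultilinearMap.map_update_smul]
    · rw [if_neg h, if_neg (fun h' => h (finite_update h')), smul_zero]

open scoped Classical in
lemma projF_tprod (x : ∀ i, X i) (y : ∀ i, X i) :
    PiTensorProduct.lift (projML x) (PiTensorProduct.tprod ℂ y) =
      if {j | y j ≠ x j}.Finite then PiTensorProduct.tprod ℂ y else 0 := by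
  rw [PiTensorProduct.lift.tprod]
  rfl

end Aux

/-- `⨂_{i∈I} X_i` is the internal direct sum, over the classes `ω ∈ Ω_{I;X}` of nowhere-zero
families modulo `∼`, of the spans `S_ω` of the elementary tensors with entries in `ω`. -/
theorem piTensorProduct_directSum_simSpan [Infinite I] [∀ i, Nontrivial (X i)] :
    (∀ x y : {x : ∀ i, X i // ∀ i, x i ≠ 0},
      {i | x.1 i ≠ y.1 i}.Finite → simSpan X x = simSpan X y) ∧
    ∃ T : Quotient (nowhereZeroSetoid X) → Submodule ℂ (⨂[ℂ] i, X i),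
      (∀ x, T (Quotient.mk (nowhereZeroSetoid X) x) = simSpan X x) ∧
      iSupIndep T ∧ (⨆ ω, T ω) = ⊤ := by
  have hwd : ∀ x y : {x : ∀ i, X i // ∀ i, x i ≠ 0},
      {i | x.1 i ≠ y.1 i}.Finite → simSpan X x = simSpan X y := by
    intro x y hxy
    unfold simSpan
    congr 1
    ext t
    constructor
    · rintro ⟨z, hz, rfl⟩
      exact ⟨z, finite_swap hxy hz, rfl⟩
    · rintro ⟨z, hz, rfl⟩
      refine ⟨z, finite_swap ?_ hz, rfl⟩
      exact hxy.subset fun i hi => fun e => hi e.symm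
  refine ⟨hwd, Quotient.lift (simSpan X) hwd, fun x => rfl, ?_, ?_⟩
  · -- independence
    intro ω
    induction ω using Quotient.ind with
    | _ x =>
    set F := PiTensorProduct.lift (projML x.1) with hF
    rw [Submodule.disjoint_def]
    intro t ht ht'
    -- on simSpan x, F is the identity
    have hid : ∀ s ∈ simSpan X x, F s = s := by
      intro s hs
      induction hs using Submodule.span_induction with
      | mem s hs =>
        obtain ⟨z, hz, rfl⟩ := hs
        rw [hF, projF_tprod, if_pos hz]
      | zero => simp
      | add a b _ _ ha hb => simp [ha, hb]
      | smul c a _ ha => simp [ha]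
    -- the other spans are in the kernel of F
    have hker : (⨆ ω' ≠ Quotient.mk (nowhereZeroSetoid X) x,
        Quotient.lift (simSpan X) hwd ω') ≤ LinearMap.ker F := by
      refine iSup₂_le fun ω' hω' => ?_
      induction ω' using Quotient.ind with
      | _ y =>
      have hnsim : ¬ {i | y.1 i ≠ x.1 i}.Finite := by
        intro hfin
        exact hω' (Quotient.sound hfin)
      refine Submodule.span_le.2 ?_
      rintro t ⟨z, hz, rfl⟩
      have hzx : ¬ {j | z.1 j ≠ x.1 j}.Finite := by
        intro hfin
        refine hnsim ((hz.union hfin).subset fun i hi => ?_)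
        by_cases h1 : z.1 i = y.1 i
        · exact Or.inr fun e => hi (h1.symm.trans e)
        · exact Or.inl h1
      simp only [SetLike.mem_coe, LinearMap.mem_ker, hF, projF_tprod, if_neg hzx]
    have := hker ht'
    rw [LinearMap.mem_ker] at this
    rw [← hid t ht, this]
  · -- supremum is everything
    rw [eq_top_iff,
      ← (PiTensorProduct.span_tprod_eq_top :
        Submodule.span ℂ (Set.range (PiTensorProduct.tprod ℂ (s := X))) = ⊤),
      Submodule.span_le]
    rintro t ⟨y, rfl⟩
    by_cases hy : ∀ i, y i ≠ 0
    · refine Submodule.mem_iSup_of_mem (Quotient.mk (nowhereZeroSetoid X) ⟨y, hy⟩) ?_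
      exact Submodule.subset_span ⟨⟨y, hy⟩, by simp, rfl⟩
    · push_neg at hy
      obtain ⟨i, hi⟩ := hy
      have : PiTensorProduct.tprod ℂ y = 0 := by
        have := (PiTensorProduct.tprod ℂ (s := X)).map_coord_zero (m := y) i hi
        exact this
      rw [SetLike.mem_coe, this]
      exact Submodule.zero_mem _
end

section
/- Let (X_i)_{i∈I} and (Y_i)_{i∈I} be families of complex vector spaces and let Φ_i : X_i → Y_i be injective ℂ-linear maps for every i ∈ I. Then the induced ℂ-linear map ⨂Φ : ⨂_{i∈I} X_i → ⨂_{i∈I} Y_i, determined on elementary tensors by (⨂Φ)(⊗x) = ⊗(Φ_i(x_i)) (Mathlib's PiTensorProduct.map), is injective. -/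
open scoped TensorProduct

/-- If `Φ_i : X_i → Y_i` are injective linear maps between complex vector spaces, then the
induced map `⨂Φ : ⨂_{i∈I} X_i → ⨂_{i∈I} Y_i` is injective. -/
theorem piTensorProduct_map_injective {I : Type*} [Infinite I]
    (X : I → Type*) (Y : I → Type*)
    [∀ i, AddCommGroup (X i)] [∀ i, Module ℂ (X i)]
    [∀ i, AddCommGroup (Y i)] [∀ i, Module ℂ (Y i)]
    (Φ : ∀ i, X i →ₗ[ℂ] Y i) (hΦ : ∀ i, Function.Injective (Φ i)) :
    Function.Injective (PiTensorProduct.map Φ) := by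
  have h : ∀ i, ∃ g : Y i →ₗ[ℂ] X i, g ∘ₗ Φ i = LinearMap.id := fun i =>
    LinearMap.exists_leftInverse_of_injective _ (LinearMap.ker_eq_bot.2 (hΦ i))
  choose g hg using h
  have : (PiTensorProduct.map g) ∘ₗ (PiTensorProduct.map Φ) = LinearMap.id := by
    rw [← PiTensorProduct.map_comp]
    simp [hg, PiTensorProduct.map_id]
  exact Function.LeftInverse.injective (g := PiTensorProduct.map g)
    fun x => by simpa using congrArg (· x) this
end

section
/- Let (X_i)_{i∈I} and (Y_i)_{i∈I} be families of nonzero complex vector spaces indexed by an infinite set I. The canonical ℂ-linear map Ψ : ⨂_{i∈I} (X_i →ₗ[ℂ] Y_i) → ((⨂_{i∈I} X_i) →ₗ[ℂ] (⨂_{i∈I} Y_i)), determined on elementary tensors by Ψ(⊗T)(⊗x) = ⊗(T_i(x_i)), is injective. -/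
open Function

namespace PTHAux

variable {V : Type*} [AddCommGroup V] [Module ℂ V]

lemma exists_dual_eq_one {v : V} (hv : v ≠ 0) : ∃ g : Module.Dual ℂ V, g v = 1 := by
  have h : ¬ ∀ φ : Module.Dual ℂ V, φ v = 0 := by
    rw [Module.forall_dual_apply_eq_zero_iff]; exact hv
  push_neg at h
  obtain ⟨φ, hφ⟩ := h
  refine ⟨(φ v)⁻¹ • φ, ?_⟩
  simp [smul_eq_mul, inv_mul_cancel₀ hφ]

lemma exists_dual_one_ne_zero {u v : V} (hu : u ≠ 0) (hv : v ≠ 0) :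
    ∃ g : Module.Dual ℂ V, g u = 1 ∧ g v ≠ 0 := by
  obtain ⟨g₁, hg₁⟩ := exists_dual_eq_one hu
  by_cases h : g₁ v = 0
  · obtain ⟨g₂, hg₂⟩ := exists_dual_eq_one hv
    refine ⟨g₁ + (g₂ - g₂ u • g₁), ?_, ?_⟩
    · simp [hg₁, smul_eq_mul]
    · simp [h, hg₂, smul_eq_mul]
  · exact ⟨g₁, hg₁, h⟩

variable {X Yv : Type*} [AddCommGroup X] [Module ℂ X] [AddCommGroup Yv] [Module ℂ Yv]

lemma exists_apply_ne_zero {T : X →ₗ[ℂ] Yv} (hT : T ≠ 0) : ∃ x, T x ≠ 0 := by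
  by_contra h
  push_neg at h
  exact hT (LinearMap.ext fun x => by simp [h x])

lemma exists_eval_one {T : X →ₗ[ℂ] Yv} (hT : T ≠ 0) :
    ∃ (x : X) (g : Module.Dual ℂ Yv), g (T x) = 1 := by
  obtain ⟨x, hx⟩ := exists_apply_ne_zero hT
  obtain ⟨g, hg⟩ := exists_dual_eq_one hx
  exact ⟨x, g, hg⟩

lemma exists_eval_sep {T S : X →ₗ[ℂ] Yv} (hT : T ≠ 0) (hS : S ≠ T) :
    ∃ (x : X) (g : Module.Dual ℂ Yv), g (T x) = 1 ∧ g (S x) ≠ 1 := by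
  by_contra hcon
  push_neg at hcon
  apply hS
  have step1 : ∀ x, T x ≠ 0 → S x = T x := by
    intro x hx
    by_contra hne
    have hv : S x - T x ≠ 0 := sub_ne_zero.mpr hne
    obtain ⟨g, hg1, hg2⟩ := exists_dual_one_ne_zero hx hv
    have h2 := hcon x g hg1
    rw [map_sub, h2, hg1, sub_self] at hg2
    exact hg2 rfl
  obtain ⟨y, hy⟩ := exists_apply_ne_zero hT
  ext x
  by_cases hx : T x = 0
  · have h1 : T (x + y) ≠ 0 := by rwa [map_add, hx, zero_add]
    have e1 := step1 _ h1
    have e2 := step1 _ hy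
    rw [map_add, map_add, e2, hx, zero_add] at e1
    have : S x = 0 := by
      have := add_right_cancel (e1.trans (zero_add (T y)).symm)
      exact this
    rw [this, hx]
  · exact step1 x hx




variable {I : Type*}

noncomputable def prodFun (f : I → ℂ) : ℂ :=
  @ite _ ((Function.mulSupport f).Finite) (Classical.propDecidable _) (∏ᶠ i, f i) 0

lemma prodFun_of_finite {f : I → ℂ} (h : (Function.mulSupport f).Finite) :
    prodFun f = ∏ᶠ i, f i := if_pos h

lemma prodFun_of_infinite {f : I → ℂ} (h : ¬ (Function.mulSupport f).Finite) :
    prodFun f = 0 := if_neg h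

lemma mulSupport_update_one_subset {f : I → ℂ} {j : I} [DecidableEq I] (x : ℂ) :
    Function.mulSupport (Function.update f j 1) ⊆ Function.mulSupport (Function.update f j x) := by
  intro i hi
  have hij : i ≠ j := by
    rintro rfl
    simp [Function.mulSupport, Function.update_self] at hi
  rw [Function.mem_mulSupport, Function.update_of_ne hij] at hi ⊢
  exact hi

lemma prodFun_update_infinite {f : I → ℂ} {j : I} [DecidableEq I]
    (h : ¬ (Function.mulSupport (Function.update f j 1)).Finite) (x : ℂ) :
    prodFun (Function.update f j x) = 0 :=
  prodFun_of_infinite (fun hf => h (hf.subset (mulSupport_update_one_subset x)))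

lemma prodFun_update_finite {f : I → ℂ} {j : I} [DecidableEq I]
    (hfin : (Function.mulSupport (Function.update f j 1)).Finite) (x : ℂ) :
    prodFun (Function.update f j x) = x * ∏ i ∈ hfin.toFinset, f i := by
  have hj : j ∉ hfin.toFinset := by
    simp [Set.Finite.mem_toFinset, Function.mem_mulSupport]
  have hsub : Function.mulSupport (Function.update f j x) ⊆ ↑(insert j hfin.toFinset) := by
    intro i hi
    by_cases hij : i = j
    · subst hij; simp
    · rw [Function.mem_mulSupport, Function.update_of_ne hij] at hi
      have : i ∈ hfin.toFinset := by
        rw [Set.Finite.mem_toFinset, Function.mem_mulSupport, Function.update_of_ne hij]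
        exact hi
      exact Finset.mem_coe.mpr (Finset.mem_insert_of_mem this)
  have hfin' : (Function.mulSupport (Function.update f j x)).Finite :=
    Set.Finite.subset (insert j hfin.toFinset).finite_toSet hsub
  rw [prodFun_of_finite hfin', finprod_eq_prod_of_mulSupport_subset _ hsub,
    Finset.prod_insert hj, Function.update_self]
  congr 1
  refine Finset.prod_congr rfl fun i hi => ?_
  have hij : i ≠ j := fun h => hj (h ▸ hi)
  rw [Function.update_of_ne hij]

variable (Y : I → Type*) [∀ i, AddCommGroup (Y i)] [∀ i, Module ℂ (Y i)]

lemma comp_update (g : ∀ i, Module.Dual ℂ (Y i)) [DecidableEq I] (m : ∀ i, Y i) (j : I)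
    (v : Y j) :
    (fun i => g i (Function.update m j v i)) = Function.update (fun i => g i (m i)) j (g j v) := by
  funext i
  by_cases h : i = j
  · subst h; simp
  · simp [Function.update_of_ne h]

noncomputable def prodML (g : ∀ i, Module.Dual ℂ (Y i)) : MultilinearMap ℂ Y ℂ where
  toFun y := prodFun (fun i => g i (y i))
  map_update_add' := by
    intro dec m j a b
    show prodFun (fun i => g i (Function.update m j (a + b) i)) =
      prodFun (fun i => g i (Function.update m j a i)) +
        prodFun (fun i => g i (Function.update m j b i))
    rw [comp_update, comp_update, comp_update]
    by_cases hfin : (Function.mulSupport (Function.update (fun i => g i (m i)) j 1)).Finite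
    · rw [prodFun_update_finite hfin, prodFun_update_finite hfin, prodFun_update_finite hfin,
        map_add]
      ring
    · rw [prodFun_update_infinite hfin, prodFun_update_infinite hfin, prodFun_update_infinite hfin]
      ring
  map_update_smul' := by
    intro dec m j c a
    show prodFun (fun i => g i (Function.update m j (c • a) i)) =
      c • prodFun (fun i => g i (Function.update m j a i))
    rw [comp_update, comp_update]
    by_cases hfin : (Function.mulSupport (Function.update (fun i => g i (m i)) j 1)).Finite
    · rw [prodFun_update_finite hfin, prodFun_update_finite hfin, map_smul]
      simp [smul_eq_mul]; ring
    · rw [prodFun_update_infinite hfin, prodFun_update_infinite hfin]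
      simp

@[simp] lemma prodML_apply (g : ∀ i, Module.Dual ℂ (Y i)) (y : ∀ i, Y i) :
    prodML Y g y = prodFun (fun i => g i (y i)) := rfl


lemma exists_span_extension {V : Type*} [AddCommGroup V] [Module ℂ V]
    {Φ : Set (Module.Dual ℂ V)} (hΦ : ∀ v : V, v ≠ 0 → ∃ φ ∈ Φ, φ v ≠ 0)
    (U : Submodule ℂ V) [FiniteDimensional ℂ U] (ξ : Module.Dual ℂ U) :
    ∃ ψ ∈ Submodule.span ℂ Φ, ∀ u : U, ψ u = ξ u := by
  have hs : Submodule.span ℂ (U.subtype.dualMap '' Φ) = ⊤ := by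
    apply Submodule.span_eq_top_of_ne_zero
    intro z hz
    have hz' : (z : V) ≠ 0 := fun h => hz (Subtype.coe_injective (by simpa using h))
    obtain ⟨φ, hφΦ, hφz⟩ := hΦ z hz'
    exact ⟨U.subtype.dualMap φ, Set.mem_image_of_mem _ hφΦ, hφz⟩
  have hξ : ξ ∈ Submodule.span ℂ (U.subtype.dualMap '' Φ) := hs ▸ Submodule.mem_top
  rw [Submodule.span_image] at hξ
  obtain ⟨ψ, hψ, hrψ⟩ := Submodule.mem_map.mp hξ
  exact ⟨ψ, hψ, fun u => by rw [← hrψ]; rfl⟩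

variable {I : Type*} (W : I → Type*) [∀ i, AddCommGroup (W i)] [∀ i, Module ℂ (W i)]

lemma multilinear_kill (Φ : ∀ i, Set (W i →ₗ[ℂ] ℂ))
    (hΦ : ∀ i (w : W i), w ≠ 0 → ∃ φ ∈ Φ i, φ w ≠ 0)
    {κ : Type*} (t : Finset κ)
    {Z : Type*} [AddCommGroup Z] [Module ℂ Z] (M : MultilinearMap ℂ W Z)
    (S : Finset I) :
    ∀ (d : κ → ℂ) (v : κ → ∀ i, W i) (w₀ : ∀ i, W i),
      (∀ k ∈ t, ∀ i, i ∉ S → v k i = w₀ i) →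
      (∀ φ : ∀ i, (W i →ₗ[ℂ] ℂ), (∀ i ∈ S, φ i ∈ Φ i) →
        ∑ k ∈ t, d k * ∏ i ∈ S, φ i (v k i) = 0) →
      ∑ k ∈ t, d k • M (v k) = 0 := by
  classical
  induction S using Finset.induction_on with
  | empty =>
    intro d v w₀ hv h
    have h0 := h (fun _ => 0) (by simp)
    simp only [Finset.prod_empty, mul_one] at h0
    have : ∀ k ∈ t, d k • M (v k) = d k • M w₀ := by
      intro k hk
      rw [show v k = w₀ from funext fun i => hv k hk i (Finset.notMem_empty i)]
    rw [Finset.sum_congr rfl this, ← Finset.sum_smul, h0, zero_smul]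
  | @insert j S' hjS' ih =>
    intro d v w₀ hv h
    -- extended hypothesis: linear in the functional at coordinate j
    have hext : ∀ ψ ∈ Submodule.span ℂ (Φ j), ∀ φ : (∀ i, W i →ₗ[ℂ] ℂ),
        (∀ i ∈ S', φ i ∈ Φ i) →
        ∑ k ∈ t, (d k * ψ (v k j)) * ∏ i ∈ S', φ i (v k i) = 0 := by
      intro ψ hψ
      induction hψ using Submodule.span_induction with
      | mem φ₀ hφ₀ =>
        intro φ hφ
        have hmem : ∀ i ∈ insert j S', (Function.update φ j φ₀) i ∈ Φ i := by
          intro i hi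
          rcases Finset.mem_insert.mp hi with rfl | hi'
          · rwa [Function.update_self]
          · rw [Function.update_of_ne (by rintro rfl; exact hjS' hi')]
            exact hφ i hi'
        have h0 := h _ hmem
        rw [← h0]
        refine Finset.sum_congr rfl fun k hk => ?_
        rw [Finset.prod_insert hjS', Function.update_self]
        have : ∏ i ∈ S', (Function.update φ j φ₀) i (v k i) = ∏ i ∈ S', φ i (v k i) :=
          Finset.prod_congr rfl fun i hi => by
            rw [Function.update_of_ne (by rintro rfl; exact hjS' hi)]
        rw [this]; ring
      | zero =>
        intro φ hφ; simp
      | add ψ₁ ψ₂ h₁ h₂ ih₁ ih₂ =>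
        intro φ hφ
        have e1 := ih₁ φ hφ
        have e2 := ih₂ φ hφ
        simp only [LinearMap.add_apply, mul_add, add_mul, Finset.sum_add_distrib]
        rw [e1, e2, add_zero]
      | smul a ψ₁ h₁ ih₁ =>
        intro φ hφ
        have e1 := ih₁ φ hφ
        simp only [LinearMap.smul_apply, smul_eq_mul]
        calc ∑ k ∈ t, d k * (a * ψ₁ (v k j)) * ∏ i ∈ S', φ i (v k i)
            = a * ∑ k ∈ t, d k * ψ₁ (v k j) * ∏ i ∈ S', φ i (v k i) := by
              rw [Finset.mul_sum]; exact Finset.sum_congr rfl fun k _ => by ring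
          _ = 0 := by rw [e1, mul_zero]
    set U : Submodule ℂ (W j) := Submodule.span ℂ ((fun k => v k j) '' ↑t) with hU
    haveI : FiniteDimensional ℂ U :=
      FiniteDimensional.span_of_finite ℂ (t.finite_toSet.image _)
    let b := Module.finBasis ℂ U
    have hψq : ∀ q, ∃ ψ ∈ Submodule.span ℂ (Φ j), ∀ u : U, ψ u = b.coord q u :=
      fun q => exists_span_extension (hΦ j) U (b.coord q)
    choose ψ hψmem hψval using hψq
    have hmemU : ∀ k ∈ t, v k j ∈ U := fun k hk =>
      Submodule.subset_span ⟨k, hk, rfl⟩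
    have expand : ∀ k ∈ t, M (v k) =
        ∑ q, (ψ q (v k j)) • M (Function.update (v k) j ((b q : U) : W j)) := by
      intro k hk
      set u : U := ⟨v k j, hmemU k hk⟩ with hu
      have hv' : v k j = ∑ q, b.repr u q • ((b q : U) : W j) := by
        have h1 := congrArg (Submodule.subtype U) (b.sum_repr u)
        simp only [map_sum, LinearMapClass.map_smul, Submodule.coe_subtype] at h1
        exact h1.symm
      let L : W j →ₗ[ℂ] Z :=
        { toFun := fun z => M (Function.update (v k) j z),
          map_add' := fun a b' => M.map_update_add _ _ _ _,
          map_smul' := fun c a => M.map_update_smul _ _ _ _ }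
      have hL : M (v k) = L (v k j) := by
        simp only [L, LinearMap.coe_mk, AddHom.coe_mk, Function.update_eq_self]
      rw [hL]
      conv_lhs => rw [hv']
      rw [map_sum]
      refine Finset.sum_congr rfl fun q _ => ?_
      rw [map_smul]
      congr 1
      have := hψval q u
      rw [Module.Basis.coord_apply] at this
      exact (this.trans rfl).symm
    calc ∑ k ∈ t, d k • M (v k)
        = ∑ k ∈ t, ∑ q, (d k * ψ q (v k j)) • M (Function.update (v k) j ((b q : U) : W j)) := by
          refine Finset.sum_congr rfl fun k hk => ?_
          rw [expand k hk, Finset.smul_sum]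
          exact Finset.sum_congr rfl fun q _ => by rw [smul_smul]
      _ = ∑ q, ∑ k ∈ t, (d k * ψ q (v k j)) • M (Function.update (v k) j ((b q : U) : W j)) :=
          Finset.sum_comm
      _ = 0 := by
          refine Finset.sum_eq_zero fun q _ => ?_
          refine ih (fun k => d k * ψ q (v k j))
            (fun k => Function.update (v k) j ((b q : U) : W j))
            (Function.update w₀ j ((b q : U) : W j)) ?_ ?_
          · intro k hk i hiS'
            show Function.update (v k) j ((b q : U) : W j) i =
              Function.update w₀ j ((b q : U) : W j) i
            by_cases hij : i = j
            · subst hij; simp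
            · rw [Function.update_of_ne hij, Function.update_of_ne hij]
              exact hv k hk i (by simp [hij, hiS'])
          · intro φ hφ
            have := hext (ψ q) (hψmem q) φ hφ
            rw [← this]
            refine Finset.sum_congr rfl fun k hk => ?_
            congr 1
            refine Finset.prod_congr rfl fun i hi => ?_
            show (φ i) (Function.update (v k) j ((b q : U) : W j) i) = (φ i) (v k i)
            rw [Function.update_of_ne (by rintro rfl; exact hjS' hi)]



lemma exists_disjoint_infinite_subsets {I κ : Type*} [Infinite I]
    (ι : κ → ℕ) (hι : Function.Injective ι)
    (K : Finset κ) (A : κ → Set I) (hA : ∀ k ∈ K, (A k).Infinite) :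
    ∃ J : κ → Set I, (∀ k ∈ K, J k ⊆ A k ∧ (J k).Infinite) ∧
      (∀ k ∈ K, ∀ k' ∈ K, k ≠ k' → Disjoint (J k) (J k')) := by
  classical
  set P : I → Finset κ := fun i => K.filter (fun k => i ∈ A k) with hP
  set F : Finset κ → Set I := fun Q => {i | P i = Q} with hF
  have hQex : ∀ k ∈ K, ∃ Q : Finset κ, k ∈ Q ∧ (F Q).Infinite := by
    intro k hk
    by_contra hcon
    push_neg at hcon
    have hsub : A k ⊆ ⋃ Q ∈ (↑(K.powerset.filter (fun Q => k ∈ Q)) : Set (Finset κ)),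
        F Q := by
      intro i hi
      have h1 : k ∈ P i := Finset.mem_filter.mpr ⟨hk, hi⟩
      have h2 : P i ∈ (↑(K.powerset.filter (fun Q => k ∈ Q)) : Set (Finset κ)) :=
        Finset.mem_coe.mpr
          (Finset.mem_filter.mpr ⟨Finset.mem_powerset.mpr (Finset.filter_subset _ _), h1⟩)
      exact Set.mem_biUnion h2 rfl
    have hfin : (A k).Finite := by
      refine Set.Finite.subset (Set.Finite.biUnion
        (K.powerset.filter (fun Q => k ∈ Q)).finite_toSet
        (fun Q hQ => ?_)) hsub
      by_contra hinf
      exact hinf (hcon Q (Finset.mem_filter.mp (Finset.mem_coe.mp hQ)).2)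
    exact hA k hk hfin
  have hQex' : ∀ k : κ, ∃ Q : Finset κ, k ∈ K → (k ∈ Q ∧ (F Q).Infinite) := by
    intro k
    by_cases hk : k ∈ K
    · obtain ⟨Q, h1, h2⟩ := hQex k hk; exact ⟨Q, fun _ => ⟨h1, h2⟩⟩
    · exact ⟨∅, fun h => absurd h hk⟩
  choose Qc hQc using hQex'
  have hEex : ∀ Q : Finset κ, ∃ e : ℕ → I,
      (F Q).Infinite → (Function.Injective e ∧ ∀ m, e m ∈ F Q) := by
    intro Q
    by_cases hQ : (F Q).Infinite
    · let e := Set.Infinite.natEmbedding _ hQ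
      exact ⟨fun m => (e m : I), fun _ =>
        ⟨Subtype.coe_injective.comp e.injective, fun m => (e m).2⟩⟩
    · exact ⟨fun _ => Classical.arbitrary I, fun h => absurd h hQ⟩
  choose E hE using hEex
  refine ⟨fun k => Set.range (fun m => E (Qc k) (Nat.pair (ι k) m)), fun k hk => ⟨?_, ?_⟩, ?_⟩
  · rintro i ⟨m, rfl⟩
    have hmem := (hE (Qc k) (hQc k hk).2).2 (Nat.pair (ι k) m)
    have hPi : P (E (Qc k) (Nat.pair (ι k) m)) = Qc k := hmem
    have hkQ : k ∈ P (E (Qc k) (Nat.pair (ι k) m)) := by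
      rw [hPi]; exact (hQc k hk).1
    exact (Finset.mem_filter.mp hkQ).2
  · apply Set.infinite_range_of_injective
    intro m m' hmm
    have := (hE (Qc k) (hQc k hk).2).1 hmm
    exact (Nat.pair_eq_pair.mp this).2
  · intro k hk k' hk' hne
    rw [Set.disjoint_left]
    rintro i ⟨m, rfl⟩ ⟨m', hm'⟩
    have hm'' : E (Qc k') (Nat.pair (ι k') m') = E (Qc k) (Nat.pair (ι k) m) := hm'
    have h1 : P (E (Qc k) (Nat.pair (ι k) m)) = Qc k := (hE (Qc k) (hQc k hk).2).2 _
    have h2 : P (E (Qc k') (Nat.pair (ι k') m')) = Qc k' := (hE (Qc k') (hQc k' hk').2).2 _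
    rw [hm''] at h2
    have hQQ : Qc k = Qc k' := h1.symm.trans h2
    rw [← hQQ] at hm''
    have := (hE (Qc k) (hQc k hk).2).1 hm''
    exact hne (hι (Nat.pair_eq_pair.mp this).1).symm



open PiTensorProduct

section Core

variable {I : Type*} [Infinite I] {X Y : I → Type*}
  [∀ i, AddCommGroup (X i)] [∀ i, Module ℂ (X i)]
  [∀ i, AddCommGroup (Y i)] [∀ i, Module ℂ (Y i)]

def evAt {A B : Type*} [AddCommGroup A] [Module ℂ A] [AddCommGroup B] [Module ℂ B] (a : A) :
    (A →ₗ[ℂ] B) →ₗ[ℂ] B where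
  toFun S := S a
  map_add' S T := rfl
  map_smul' c S := rfl

lemma core {n : ℕ} (c : Fin n → ℂ) (T : Fin n → ∀ i, X i →ₗ[ℂ] Y i) :
    ∀ s : Finset (Fin n),
      (∀ x : ∀ i, X i, ∑ k ∈ s, c k • tprod ℂ (fun i => T k i (x i)) = 0) →
      ∑ k ∈ s, c k • tprod ℂ (T k) = 0 := by
  classical
  intro s
  induction s using Finset.strongInductionOn with
  | _ s ih =>
    intro h
    by_cases hall : ∀ k ∈ s, c k = 0 ∨ ∃ i, T k i = 0
    · refine Finset.sum_eq_zero fun k hk => ?_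
      rcases hall k hk with hc | ⟨i, hi⟩
      · rw [hc, zero_smul]
      · rw [(tprod ℂ : MultilinearMap ℂ (fun i => X i →ₗ[ℂ] Y i) _).map_coord_zero i hi,
          smul_zero]
    · push_neg at hall
      obtain ⟨p, hps, hcp, hTp⟩ := hall
      set D : Fin n → Set I := fun k => {i | T k i ≠ T p i} with hD
      have hDp : (D p).Finite := by
        have he : D p = ∅ := by ext i; simp [hD]
        rw [he]; exact Set.finite_empty
      set C : Finset (Fin n) := s.filter (fun k => (D k).Finite) with hC
      have hpC : p ∈ C := Finset.mem_filter.mpr ⟨hps, hDp⟩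
      have hCfin : (⋃ k ∈ (↑C : Set (Fin n)), D k).Finite :=
        Set.Finite.biUnion C.finite_toSet
          (fun k hk => (Finset.mem_filter.mp (Finset.mem_coe.mp hk)).2)
      set SF : Finset I := hCfin.toFinset with hSF
      have hDC : ∀ k ∈ C, ∀ i, i ∉ SF → T k i = T p i := by
        intro k hk i hiS
        by_contra hne
        exact hiS ((Set.Finite.mem_toFinset hCfin).mpr
          (Set.mem_biUnion (Finset.mem_coe.mpr hk) hne))
      by_cases hgood : ∃ (x : ∀ i, X i) (g : ∀ i, Module.Dual ℂ (Y i)),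
          (∑ k ∈ C, c k * ∏ i ∈ SF, g i (T k i (x i))) ≠ 0
      · exfalso
        obtain ⟨x, g, hne0⟩ := hgood
        set B : Finset (Fin n) := s.filter (fun k => ¬ (D k).Finite) with hB
        have hBinf : ∀ k ∈ B, (D k).Infinite := fun k hk => (Finset.mem_filter.mp hk).2
        obtain ⟨J, hJ1, hJ2⟩ := exists_disjoint_infinite_subsets (fun k : Fin n => (k : ℕ))
          Fin.val_injective B D hBinf
        have hchoice : ∀ i : I, ∃ (xi : X i) (gi : Module.Dual ℂ (Y i)),
            (i ∈ SF → xi = x i ∧ gi = g i) ∧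
            (i ∉ SF → gi (T p i xi) = 1 ∧ ∀ k ∈ B, i ∈ J k → gi (T k i xi) ≠ 1) := by
          intro i
          by_cases hiS : i ∈ SF
          · exact ⟨x i, g i, fun _ => ⟨rfl, rfl⟩, fun hh => absurd hiS hh⟩
          · by_cases hiJ : ∃ k ∈ B, i ∈ J k
            · obtain ⟨k₀, hk₀B, hk₀⟩ := hiJ
              have hne' : T k₀ i ≠ T p i := (hJ1 k₀ hk₀B).1 hk₀
              obtain ⟨xi, gi, h1, h2⟩ := exists_eval_sep (hTp i) hne'
              refine ⟨xi, gi, fun hh => absurd hh hiS, fun _ => ⟨h1, fun k hkB hkJ => ?_⟩⟩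
              have hkk : k = k₀ := by
                by_contra hne''
                exact Set.disjoint_left.mp (hJ2 k hkB k₀ hk₀B hne'') hkJ hk₀
              rw [hkk]; exact h2
            · push_neg at hiJ
              obtain ⟨xi, gi, h1⟩ := exists_eval_one (hTp i)
              exact ⟨xi, gi, fun hh => absurd hh hiS,
                fun _ => ⟨h1, fun k hkB hkJ => absurd hkJ (hiJ k hkB)⟩⟩
        choose x' g' hxg using hchoice
        have h0 := congrArg (PiTensorProduct.lift (prodML Y g')) (h x')
        rw [map_sum, map_zero] at h0
        simp only [LinearMapClass.map_smul, PiTensorProduct.lift.tprod, prodML_apply] at h0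
        rw [← Finset.sum_filter_add_sum_filter_not s (fun k => (D k).Finite)
          (fun k => c k • prodFun (fun i => g' i (T k i (x' i))))] at h0
        rw [← hC, ← hB] at h0
        have e1 : ∑ k ∈ C, c k • prodFun (fun i => g' i (T k i (x' i)))
            = ∑ k ∈ C, c k * ∏ i ∈ SF, g i (T k i (x i)) := by
          refine Finset.sum_congr rfl fun k hk => ?_
          have hsupp : Function.mulSupport (fun i => g' i (T k i (x' i))) ⊆ ↑SF := by
            intro i hi
            by_contra hiS
            have hiS' : i ∉ SF := fun hh => hiS (Finset.mem_coe.mpr hh)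
            have hTk : T k i = T p i := hDC k hk i hiS'
            have h1 := ((hxg i).2 hiS').1
            rw [Function.mem_mulSupport, hTk] at hi
            exact hi h1
          have hfin : (Function.mulSupport (fun i => g' i (T k i (x' i)))).Finite :=
            Set.Finite.subset SF.finite_toSet hsupp
          rw [prodFun_of_finite hfin, finprod_eq_prod_of_mulSupport_subset _ hsupp, smul_eq_mul]
          congr 1
          refine Finset.prod_congr rfl fun i hi => ?_
          obtain ⟨hx1, hx2⟩ := (hxg i).1 hi
          rw [hx1, hx2]
        have e2 : ∑ k ∈ B, c k • prodFun (fun i => g' i (T k i (x' i))) = 0 := by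
          refine Finset.sum_eq_zero fun k hk => ?_
          have hsub : (J k \ ↑SF : Set I) ⊆
              Function.mulSupport (fun i => g' i (T k i (x' i))) := by
            rintro i ⟨hiJ, hiS⟩
            have hiS' : i ∉ SF := fun hh => hiS (Finset.mem_coe.mpr hh)
            exact ((hxg i).2 hiS').2 k hk hiJ
          have hinf : ¬ (Function.mulSupport (fun i => g' i (T k i (x' i)))).Finite :=
            (((hJ1 k hk).2).diff SF.finite_toSet).mono hsub
          rw [prodFun_of_infinite hinf, smul_zero]
        rw [e1, e2, add_zero] at h0
        exact hne0 h0
      · push_neg at hgood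
        set Φ : ∀ i, Set ((X i →ₗ[ℂ] Y i) →ₗ[ℂ] ℂ) := fun i =>
          {φ | ∃ (xi : X i) (gi : Module.Dual ℂ (Y i)),
            ∀ S : X i →ₗ[ℂ] Y i, φ S = gi (S xi)} with hΦ
        have hΦsep : ∀ i (w : X i →ₗ[ℂ] Y i), w ≠ 0 → ∃ φ ∈ Φ i, φ w ≠ 0 := by
          intro i w hw
          obtain ⟨xi, hxi⟩ := exists_apply_ne_zero hw
          obtain ⟨gi, hgi⟩ := exists_dual_eq_one hxi
          refine ⟨gi ∘ₗ evAt xi, ⟨xi, gi, fun S => rfl⟩, ?_⟩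
          simp only [LinearMap.coe_comp, Function.comp_apply, evAt, LinearMap.coe_mk,
            AddHom.coe_mk, hgi]
          exact one_ne_zero
        have hkey : ∀ φ : ∀ i, ((X i →ₗ[ℂ] Y i) →ₗ[ℂ] ℂ), (∀ i ∈ SF, φ i ∈ Φ i) →
            ∑ k ∈ C, c k * ∏ i ∈ SF, φ i (T k i) = 0 := by
          intro φ hφ
          have hch : ∀ i : I, ∃ (xi : X i) (gi : Module.Dual ℂ (Y i)),
              i ∈ SF → ∀ S : X i →ₗ[ℂ] Y i, φ i S = gi (S xi) := by
            intro i
            by_cases hi : i ∈ SF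
            · obtain ⟨xi, gi, hx⟩ := hφ i hi; exact ⟨xi, gi, fun _ => hx⟩
            · exact ⟨0, 0, fun hh => absurd hh hi⟩
          choose xf gf hfg using hch
          have h1 := hgood xf gf
          rw [← h1]
          refine Finset.sum_congr rfl fun k hk => ?_
          rw [Finset.prod_congr rfl fun i hi => hfg i hi (T k i)]
        have hrem1 : ∑ k ∈ C, c k • tprod ℂ (T k) = 0 :=
          multilinear_kill (fun i => X i →ₗ[ℂ] Y i) Φ hΦsep C (tprod ℂ) SF c T (T p)
            (fun k hk i hi => hDC k hk i hi) hkey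
        have hrem2 : ∀ x : ∀ i, X i,
            ∑ k ∈ C, c k • tprod ℂ (fun i => T k i (x i)) = 0 := by
          intro x
          have hmk := multilinear_kill (fun i => X i →ₗ[ℂ] Y i) Φ hΦsep C
            ((tprod ℂ : MultilinearMap ℂ Y _).compLinearMap (fun i => evAt (x i))) SF c T (T p)
            (fun k hk i hi => hDC k hk i hi) hkey
          simpa only [MultilinearMap.compLinearMap_apply, evAt, LinearMap.coe_mk,
            AddHom.coe_mk] using hmk
        set s' : Finset (Fin n) := s.filter (fun k => ¬ (D k).Finite) with hs'
        have hss' : s' ⊂ s := by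
          refine (Finset.ssubset_iff_of_subset (Finset.filter_subset _ _)).mpr ?_
          exact ⟨p, hps, by simp [hs', Finset.mem_filter, hDp]⟩
        have h' : ∀ x : ∀ i, X i, ∑ k ∈ s', c k • tprod ℂ (fun i => T k i (x i)) = 0 := by
          intro x
          have hsplit := Finset.sum_filter_add_sum_filter_not s (fun k => (D k).Finite)
            (fun k => c k • tprod ℂ (fun i => T k i (x i)))
          rw [← hC, ← hs', hrem2 x, h x, zero_add] at hsplit
          exact hsplit
        have hfin := ih s' hss' h'
        have hsplit2 := Finset.sum_filter_add_sum_filter_not s (fun k => (D k).Finite)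
          (fun k => c k • tprod ℂ (T k))
        rw [← hC, ← hs', hrem1, hfin, add_zero] at hsplit2
        exact hsplit2.symm

end Core

end PTHAux

open scoped TensorProduct

/-- The canonical map `Ψ : ⨂_{i∈I} L(X_i; Y_i) → L(⨂_{i∈I} X_i; ⨂_{i∈I} Y_i)`, determined on
elementary tensors by `Ψ(⊗T)(⊗x) = ⊗(T_i(x_i))`, is injective for families of nonzero
complex vector spaces over an infinite index set. -/
theorem piTensorHom_injective {I : Type*} [Infinite I]
    (X : I → Type*) (Y : I → Type*)
    [∀ i, AddCommGroup (X i)] [∀ i, Module ℂ (X i)] [∀ i, Nontrivial (X i)]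
    [∀ i, AddCommGroup (Y i)] [∀ i, Module ℂ (Y i)] [∀ i, Nontrivial (Y i)]
    (Ψ : (⨂[ℂ] i, (X i →ₗ[ℂ] Y i)) →ₗ[ℂ] (⨂[ℂ] i, X i) →ₗ[ℂ] ⨂[ℂ] i, Y i)
    (hΨ : ∀ (T : ∀ i, X i →ₗ[ℂ] Y i) (x : ∀ i, X i),
      Ψ (PiTensorProduct.tprod ℂ T) (PiTensorProduct.tprod ℂ x) =
        PiTensorProduct.tprod ℂ (fun i => T i (x i))) :
    Function.Injective Ψ := by
  classical
  have hker : ∀ u : ⨂[ℂ] i, (X i →ₗ[ℂ] Y i), Ψ u = 0 → u = 0 := by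
    intro u hu
    have hmem : u ∈ Submodule.span ℂ
        (Set.range (PiTensorProduct.tprod ℂ (s := fun i => X i →ₗ[ℂ] Y i))) := by
      rw [PiTensorProduct.span_tprod_eq_top]; exact Submodule.mem_top
    obtain ⟨m, f, gT, hsum⟩ := Submodule.mem_span_set'.mp hmem
    have hrep : ∀ k, ∃ T : ∀ i, X i →ₗ[ℂ] Y i,
        PiTensorProduct.tprod ℂ T = (gT k : ⨂[ℂ] i, (X i →ₗ[ℂ] Y i)) := fun k => (gT k).2
    choose T hT using hrep
    have hu' : ∑ k ∈ Finset.univ, f k • PiTensorProduct.tprod ℂ (T k) = u := by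
      rw [← hsum]
      exact Finset.sum_congr rfl fun k _ => by rw [hT k]
    have hx : ∀ x : ∀ i, X i,
        ∑ k ∈ Finset.univ, f k • PiTensorProduct.tprod ℂ (fun i => T k i (x i)) = 0 := by
      intro x
      have h1 : Ψ u (PiTensorProduct.tprod ℂ x) = 0 := by rw [hu]; rfl
      rw [← hu'] at h1
      rw [map_sum] at h1
      rw [LinearMap.sum_apply] at h1
      rw [← h1]
      refine Finset.sum_congr rfl fun k _ => ?_
      rw [LinearMapClass.map_smul, LinearMap.smul_apply, hΨ]
    have := PTHAux.core f T Finset.univ hx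
    rw [hu'] at this
    exact this
  intro a b hab
  have h0 : Ψ (a - b) = 0 := by rw [map_sub, hab, sub_self]
  have := hker _ h0
  exact sub_eq_zero.mp this
end

section
/- Let (A_i)_{i∈I} be unital associative ℂ-algebras, let (X_i)_{i∈I} be nonzero complex vector spaces, and let Ψ_i : A_i →ₐ[ℂ] Module.End ℂ X_i be injective unital ℂ-algebra homomorphisms (i.e. each X_i is a faithful unital A_i-module). Then the induced ℂ-algebra homomorphism ⨂_{i∈I} A_i → Module.End ℂ (⨂_{i∈I} X_i), determined by sending ⊗a to the endomorphism with (⊗a)·(⊗x) = ⊗(Ψ_i(a_i)(x_i)), is injective. In particular, ⨂_{i∈I} X_i is a faithful module over ⨂_{i∈I} A_i. -/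
open scoped TensorProduct
open Module Function

section Helpers
variable {V : Type*} [AddCommGroup V] [Module ℂ V]

lemma exists_dual_one {v : V} (hv : v ≠ 0) : ∃ φ : Module.Dual ℂ V, φ v = 1 := by
  have := (Module.forall_dual_apply_eq_zero_iff ℂ v).not.mpr hv
  push_neg at this
  obtain ⟨φ, hφ⟩ := this
  exact ⟨(φ v)⁻¹ • φ, by simp [inv_mul_cancel₀ hφ]⟩

lemma exists_not_mem_proper {κ : Type*} (s : Finset κ) (W : κ → Submodule ℂ V)
    (hW : ∀ k ∈ s, W k ≠ ⊤) : ∃ x : V, ∀ k ∈ s, x ∉ W k := by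
  classical
  have h : ⋃ p ∈ s.image W, (p : Set V) ≠ Set.univ := by
    refine Subspace.biUnion_ne_univ_of_top_notMem ?_
    intro h
    obtain ⟨k, hk, hWk⟩ := Finset.mem_image.mp h
    exact hW k hk hWk
  obtain ⟨x, hx⟩ := Set.ne_univ_iff_exists_notMem _ |>.mp h
  refine ⟨x, fun k hk hxk => hx ?_⟩
  simp only [Set.mem_iUnion]
  exact ⟨W k, by simp [Finset.mem_image]; exact ⟨k, hk, rfl⟩, hxk⟩

/-- Find a functional with prescribed value 1 at `u` and avoiding value 1 at finitely many
vectors different from `u`. -/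
lemma exists_dual_avoiding {κ : Type*} (s : Finset κ) (u : V) (hu : u ≠ 0)
    (v : κ → V) (hv : ∀ k ∈ s, v k ≠ u) :
    ∃ φ : Module.Dual ℂ V, φ u = 1 ∧ ∀ k ∈ s, φ (v k) ≠ 1 := by
  classical
  obtain ⟨φ₀, hφ₀⟩ := exists_dual_one hu
  -- quotient by span of u
  set Q := V ⧸ Submodule.span ℂ {u}
  set π : V →ₗ[ℂ] Q := Submodule.mkQ _
  -- choose ψ in annihilator of u, nonzero on relevant v k
  have hψ : ∃ ψ' : Module.Dual ℂ Q, ∀ k ∈ s.filter (fun k => φ₀ (v k) = 1), ψ' (π (v k)) ≠ 0 := by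
    apply exists_not_mem_proper (W := fun k => LinearMap.ker (LinearMap.applyₗ (π (v k)) :
        Module.Dual ℂ Q →ₗ[ℂ] ℂ))
    intro k hk
    rw [Finset.mem_filter] at hk
    have hvk : π (v k) ≠ 0 := by
      intro h0
      rw [Submodule.mkQ_apply, Submodule.Quotient.mk_eq_zero, Submodule.mem_span_singleton] at h0
      obtain ⟨c, hc⟩ := h0
      have : φ₀ (v k) = c := by rw [← hc, map_smul, hφ₀, smul_eq_mul, mul_one]
      rw [hk.2] at this
      exact hv k hk.1 (by rw [← hc, ← this, one_smul])
    intro htop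
    obtain ⟨g, hg⟩ := exists_dual_one hvk
    have hmem : g ∈ LinearMap.ker (LinearMap.applyₗ (π (v k)) :
        Module.Dual ℂ Q →ₗ[ℂ] ℂ) := by rw [htop]; trivial
    rw [LinearMap.mem_ker] at hmem
    have : g (π (v k)) = 0 := hmem
    rw [this] at hg; exact zero_ne_one hg
  obtain ⟨ψ', hψ'⟩ := hψ
  set ψ : Module.Dual ℂ V := ψ'.comp π
  have hψu : ψ u = 0 := by
    have hπu : π u = 0 := by
      rw [Submodule.mkQ_apply, Submodule.Quotient.mk_eq_zero]
      exact Submodule.mem_span_singleton_self u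
    simp only [ψ, LinearMap.comp_apply, hπu, map_zero]
  -- choose scalar c avoiding finitely many bad values
  obtain ⟨c, hc⟩ := Infinite.exists_notMem_finset
    (s.image fun k => (1 - φ₀ (v k)) / ψ (v k))
  refine ⟨φ₀ + c • ψ, by simp [hφ₀, hψu], fun k hk => ?_⟩
  intro hbad
  simp only [LinearMap.add_apply, LinearMap.smul_apply, smul_eq_mul] at hbad
  by_cases hz : ψ (v k) = 0
  · rw [hz, mul_zero, add_zero] at hbad
    have : k ∈ s.filter (fun k => φ₀ (v k) = 1) := Finset.mem_filter.mpr ⟨hk, hbad⟩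
    exact hψ' k this (by simpa [ψ] using hz)
  · apply hc
    rw [Finset.mem_image]
    refine ⟨k, hk, ?_⟩
    field_simp
    linear_combination -hbad

lemma exists_good_pair {X : Type*} [AddCommGroup X] [Module ℂ X] {κ : Type*} (s : Finset κ)
    (S : Module.End ℂ X) (hS : S ≠ 0) (T : κ → Module.End ℂ X)
    (hT : ∀ k ∈ s, ∀ c : ℂ, T k ≠ c • S) :
    ∃ (x : X) (φ : Module.Dual ℂ X), φ (S x) = 1 ∧ ∀ k ∈ s, φ (T k x) ≠ 1 := by
  classical
  -- choose x with S x ≠ 0 and (T k - S) x ≠ 0 for k ∈ s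
  have hproper : ∀ o ∈ insert none (s.image some),
      Option.elim o (LinearMap.ker S) (fun k => LinearMap.ker (T k - S)) ≠ ⊤ := by
    intro o hk
    cases o with
    | none =>
      simp only [Option.elim]
      intro h
      apply hS
      ext v
      have : v ∈ LinearMap.ker S := by rw [h]; trivial
      simpa using this
    | some k =>
      simp only [Option.elim]
      intro h
      rw [Finset.mem_insert] at hk
      rcases hk with h' | h'
      · exact (Option.some_ne_none k h').elim
      · obtain ⟨k', hk', hkk⟩ := Finset.mem_image.mp h'
        have hkeq : k' = k := Option.some_injective _ hkk
        rw [hkeq] at hk'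
        have h0 : T k - S = 0 := by rwa [LinearMap.ker_eq_top] at h
        exact hT k hk' 1 (by rw [one_smul]; exact sub_eq_zero.mp h0)
  obtain ⟨x, hx⟩ := exists_not_mem_proper (insert none (s.image some)) _ hproper
  have hSx : S x ≠ 0 := by
    have := hx none (Finset.mem_insert_self _ _)
    simp only [Option.elim, LinearMap.mem_ker] at this
    exact this
  have hTx : ∀ k ∈ s, T k x ≠ S x := by
    intro k hk
    have := hx (some k) (Finset.mem_insert_of_mem (Finset.mem_image_of_mem _ hk))
    simp only [Option.elim, LinearMap.mem_ker, LinearMap.sub_apply, sub_eq_zero] at this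
    exact this
  obtain ⟨φ, hφ1, hφ2⟩ := exists_dual_avoiding s (S x) hSx (fun k => T k x) hTx
  exact ⟨x, φ, hφ1, hφ2⟩

end Helpers

section MVal
attribute [local instance] Classical.propDecidable

/-- Auxiliary "infinite product" value: the product of `g` over its multiplicative support
if that is finite, and `0` otherwise. -/
noncomputable def mval {I : Type*} (g : I → ℂ) : ℂ :=
  if h : (Function.mulSupport g).Finite then ∏ i ∈ h.toFinset, g i else 0

variable {I : Type*}

lemma mval_eq_prod {g : I → ℂ} (hf : (Function.mulSupport g).Finite) (s : Finset I)
    (hs : Function.mulSupport g ⊆ ↑s) : mval g = ∏ i ∈ s, g i := by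
  rw [mval]
  rw [dif_pos hf]
  refine Finset.prod_subset (fun i hi => ?_) (fun i _ hi => ?_)
  · exact hs (hf.mem_toFinset.mp hi)
  · by_contra h
    exact hi (hf.mem_toFinset.mpr h)

lemma mval_eq_zero_of_infinite {g : I → ℂ} (hg : (Function.mulSupport g).Infinite) :
    mval g = 0 := by rw [mval]; exact dif_neg hg

lemma mval_update [DecidableEq I] (g : I → ℂ) (j : I) (c : ℂ) :
    mval (Function.update g j c) =
      (if hD : (Function.mulSupport g \ {j}).Finite then (∏ i ∈ hD.toFinset, g i) * c else 0) := by
  classical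
  have hsupp_off : Function.mulSupport (Function.update g j c) \ {j} =
      Function.mulSupport g \ {j} := by
    ext i
    simp only [Set.mem_diff, Set.mem_singleton_iff, Function.mem_mulSupport]
    constructor
    · rintro ⟨h1, h2⟩; rw [Function.update_of_ne h2] at h1; exact ⟨h1, h2⟩
    · rintro ⟨h1, h2⟩; rw [Function.update_of_ne h2]; exact ⟨h1, h2⟩
  by_cases hD : (Function.mulSupport g \ {j}).Finite
  · rw [dif_pos hD]
    have hfin : (Function.mulSupport (Function.update g j c)).Finite := by
      have : Function.mulSupport (Function.update g j c) ⊆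
          (Function.mulSupport g \ {j}) ∪ {j} := by
        intro i hi
        by_cases hij : i = j
        · exact Or.inr hij
        · left; rw [← hsupp_off]; exact ⟨hi, hij⟩
      exact Set.Finite.subset (hD.union (Set.finite_singleton j)) this
    rw [mval]
    rw [dif_pos hfin]
    have hsub : hfin.toFinset ⊆ hD.toFinset ∪ {j} := by
      intro i hi
      rw [Set.Finite.mem_toFinset] at hi
      by_cases hij : i = j
      · exact Finset.mem_union_right _ (by simp [hij])
      · exact Finset.mem_union_left _ (by rw [Set.Finite.mem_toFinset, ← hsupp_off]; exact ⟨hi, hij⟩)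
    rw [Finset.prod_subset hsub (fun i _ hi => by
      by_contra h
      exact hi ((Set.Finite.mem_toFinset hfin).mpr h))]
    have hjd : j ∉ hD.toFinset := by simp [Set.Finite.mem_toFinset]
    rw [Finset.prod_union (by simp [Finset.disjoint_singleton_right, hjd])]
    simp only [Finset.prod_singleton, Function.update_self]
    congr 1
    refine Finset.prod_congr rfl (fun i hi => ?_)
    rw [Set.Finite.mem_toFinset] at hi
    exact Function.update_of_ne hi.2 _ _
  · rw [dif_neg hD]
    apply mval_eq_zero_of_infinite
    intro hfin
    exact hD (Set.Finite.subset (hfin.union (Set.finite_singleton j)) (by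
      rw [← hsupp_off]; exact fun i hi => Or.inl hi.1))

end MVal

section MDual
attribute [local instance] Classical.propDecidable

variable {I : Type*} {X : I → Type*} [∀ i, AddCommGroup (X i)] [∀ i, Module ℂ (X i)]

/-- The multilinear functional on a family of vector spaces given by formally multiplying the
values of fixed functionals, when only finitely many of these values differ from `1`,
and `0` otherwise. -/
noncomputable def MDual (φ : ∀ i, Module.Dual ℂ (X i)) : MultilinearMap ℂ X ℂ where
  toFun z := mval (fun i => φ i (z i))
  map_update_add' := by
    intro _ z j x y
    have key : ∀ w : X j, (fun i => φ i (Function.update z j w i)) =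
        Function.update (fun i => φ i (z i)) j (φ j w) := by
      intro w
      funext i
      rcases eq_or_ne i j with rfl | h
      · simp
      · rw [Function.update_of_ne h, Function.update_of_ne h]
    show mval (fun i => φ i (Function.update z j (x + y) i)) =
      mval (fun i => φ i (Function.update z j x i)) + mval (fun i => φ i (Function.update z j y i))
    rw [key, key, key, mval_update, mval_update, mval_update]
    by_cases hD : (Function.mulSupport (fun i => φ i (z i)) \ {j}).Finite
    · rw [dif_pos hD, dif_pos hD, dif_pos hD, map_add, mul_add]
    · rw [dif_neg hD, dif_neg hD, dif_neg hD, add_zero]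
  map_update_smul' := by
    intro _ z j c x
    have key : ∀ w : X j, (fun i => φ i (Function.update z j w i)) =
        Function.update (fun i => φ i (z i)) j (φ j w) := by
      intro w
      funext i
      rcases eq_or_ne i j with rfl | h
      · simp
      · rw [Function.update_of_ne h, Function.update_of_ne h]
    show mval (fun i => φ i (Function.update z j (c • x) i)) =
      c • mval (fun i => φ i (Function.update z j x i))
    rw [key, key, mval_update, mval_update]
    by_cases hD : (Function.mulSupport (fun i => φ i (z i)) \ {j}).Finite
    · rw [dif_pos hD, dif_pos hD, map_smul]
      simp only [smul_eq_mul]; ring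
    · rw [dif_neg hD, dif_neg hD, smul_zero]

lemma MDual_apply (φ : ∀ i, Module.Dual ℂ (X i)) (z : ∀ i, X i) :
    MDual φ z = mval (fun i => φ i (z i)) := rfl

end MDual

section ProdFun
attribute [local instance] Classical.propDecidable

lemma prodfun {ι : Type*} {β : ι → Type*} {Z : ι → Type*} [∀ i, Nonempty (Z i)]
    (g : ∀ i, β i → Z i → ℂ)
    (hind : ∀ (i : ι) (t : Finset (β i)) (e : β i → ℂ),
      (∀ z : Z i, ∑ α ∈ t, e α * g i α z = 0) → ∀ α ∈ t, e α = 0)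
    (s : Finset ι) :
    ∀ (F : Finset (∀ i, β i)) (D : (∀ i, β i) → ℂ),
    (∀ z : ∀ i, Z i, ∑ f ∈ F, D f * ∏ i ∈ s, g i (f i) (z i) = 0) →
    ∀ f ∈ F, ∀ F' : Finset (∀ i, β i),
      (∀ f', f' ∈ F' ↔ (f' ∈ F ∧ ∀ i ∈ s, f' i = f i)) →
      ∑ f' ∈ F', D f' = 0 := by
  induction s using Finset.induction_on with
  | empty =>
    intro F D h f hf F' hF'
    have hFF : F' = F := by
      ext f'
      rw [hF' f']
      simp
    rw [hFF]
    have hz := h (fun i => Classical.arbitrary (Z i))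
    simpa using hz
  | @insert j s₀ hj ih =>
    intro F D h f hf F' hF'
    set tv : Finset (β j) := F.image (fun f' => f' j) with htv
    have key : ∀ (z : ∀ i, Z i), ∀ α ∈ tv,
        ∑ f' ∈ F.filter (fun f' => f' j = α), D f' * ∏ i ∈ s₀, g i (f' i) (z i) = 0 := by
      intro z
      have h2 : ∀ zj : Z j, ∑ α ∈ tv,
          (∑ f' ∈ F.filter (fun f' => f' j = α), D f' * ∏ i ∈ s₀, g i (f' i) (z i))
            * g j α zj = 0 := by
        intro zj
        have hz := h (Function.update z j zj)
        have hc : ∀ f' ∈ F, D f' * ∏ i ∈ insert j s₀, g i (f' i) (Function.update z j zj i)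
            = (D f' * ∏ i ∈ s₀, g i (f' i) (z i)) * g j (f' j) zj := by
          intro f' _
          rw [Finset.prod_insert hj]
          have hcong : ∀ i ∈ s₀, g i (f' i) (Function.update z j zj i) = g i (f' i) (z i) := by
            intro i hi
            rw [Function.update_of_ne (by rintro rfl; exact hj hi)]
          rw [Finset.prod_congr rfl hcong, Function.update_self]
          ring
        rw [Finset.sum_congr rfl hc] at hz
        rw [← Finset.sum_fiberwise_of_maps_to
          (fun f' hf' => Finset.mem_image_of_mem (fun f' => f' j) hf')
          (fun f' => (D f' * ∏ i ∈ s₀, g i (f' i) (z i)) * g j (f' j) zj)] at hz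
        have hc2 : ∀ α ∈ tv,
            ∑ f' ∈ F.filter (fun f' => f' j = α),
              (D f' * ∏ i ∈ s₀, g i (f' i) (z i)) * g j (f' j) zj
            = (∑ f' ∈ F.filter (fun f' => f' j = α), D f' * ∏ i ∈ s₀, g i (f' i) (z i))
              * g j α zj := by
          intro α hα
          rw [Finset.sum_mul]
          refine Finset.sum_congr rfl (fun f' hf' => ?_)
          rw [(Finset.mem_filter.mp hf').2]
        rw [Finset.sum_congr rfl hc2] at hz
        exact hz
      exact hind j tv _ h2
    have hα : f j ∈ tv := Finset.mem_image_of_mem _ hf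
    exact ih (F.filter (fun f' => f' j = f j)) D (fun z => key z (f j) hα) f
      (Finset.mem_filter.mpr ⟨hf, rfl⟩) F' (by
        intro f'
        rw [hF' f']
        constructor
        · rintro ⟨h1, h2⟩
          refine ⟨Finset.mem_filter.mpr ⟨h1, h2 j (Finset.mem_insert_self _ _)⟩,
            fun i hi => h2 i (Finset.mem_insert_of_mem hi)⟩
        · rintro ⟨h1, h2⟩
          obtain ⟨h3, h4⟩ := Finset.mem_filter.mp h1
          refine ⟨h3, fun i hi => ?_⟩
          rcases Finset.mem_insert.mp hi with rfl | hi'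
          · exact h4
          · exact h2 i hi')

end ProdFun

section FinSep
attribute [local instance] Classical.propDecidable

lemma finSep {ι : Type*} [Fintype ι] (A : ι → Type*) (X : ι → Type*)
    [∀ i, AddCommGroup (A i)] [∀ i, Module ℂ (A i)]
    [∀ i, AddCommGroup (X i)] [∀ i, Module ℂ (X i)]
    (Ψ : ∀ i, A i →ₗ[ℂ] Module.End ℂ (X i)) (hΨ : ∀ i, Function.Injective (Ψ i))
    {κ : Type*} (K : Finset κ) (μ : κ → ℂ) (a : κ → ∀ i, A i)
    (h : ∀ (x : ∀ i, X i) (φ : ∀ i, Module.Dual ℂ (X i)),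
      ∑ k ∈ K, μ k * ∏ i, φ i (Ψ i (a k i) (x i)) = 0) :
    ∑ k ∈ K, μ k • PiTensorProduct.tprod ℂ (a k) = 0 := by
  classical
  set b : ∀ i, Basis (Basis.ofVectorSpaceIndex ℂ (A i)) ℂ (A i) :=
    fun i => Basis.ofVectorSpace ℂ (A i) with hb
  set S : ∀ i, Finset (Basis.ofVectorSpaceIndex ℂ (A i)) :=
    fun i => K.sup (fun k => ((b i).repr (a k i)).support) with hS
  set c : κ → ∀ i, Basis.ofVectorSpaceIndex ℂ (A i) → ℂ :=
    fun k i α => (b i).repr (a k i) α with hc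
  have hrepr : ∀ k ∈ K, a k = fun i => ∑ α ∈ S i, c k i α • b i α := by
    intro k hk
    funext i
    have hsub : ((b i).repr (a k i)).support ⊆ S i :=
      Finset.le_sup (f := fun k => ((b i).repr (a k i)).support) hk
    conv_lhs => rw [← (b i).linearCombination_repr (a k i)]
    rw [Finsupp.linearCombination_apply, Finsupp.sum]
    exact Finset.sum_subset hsub (fun α _ hα => by
      rw [Finsupp.notMem_support_iff.mp hα, zero_smul])
  -- tensor side expansion
  have htens : ∀ k ∈ K, (PiTensorProduct.tprod ℂ (a k) : ⨂[ℂ] i, A i)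
      = ∑ f ∈ Fintype.piFinset S, (∏ i, c k i (f i)) • PiTensorProduct.tprod ℂ
          (fun i => b i (f i)) := by
    intro k hk
    conv_lhs => rw [hrepr k hk]
    rw [MultilinearMap.map_sum_finset]
    exact Finset.sum_congr rfl (fun f hf => MultilinearMap.map_smul_univ _ _ _)
  -- scalar side multilinear map
  set G : (∀ i, X i) → (∀ i, Module.Dual ℂ (X i)) → MultilinearMap ℂ A ℂ :=
    fun x φ => (MultilinearMap.mkPiAlgebra ℂ ι ℂ).compLinearMap
      (fun i => (φ i).comp ((LinearMap.applyₗ (x i)).comp (Ψ i))) with hG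
  have hGapp : ∀ x φ (v : ∀ i, A i), G x φ v = ∏ i, φ i (Ψ i (v i) (x i)) := by
    intro x φ v
    simp [hG, MultilinearMap.compLinearMap_apply, MultilinearMap.mkPiAlgebra_apply]
  set D : (∀ i, Basis.ofVectorSpaceIndex ℂ (A i)) → ℂ :=
    fun f => ∑ k ∈ K, μ k * ∏ i, c k i (f i) with hD
  -- hypothesis in expanded form
  have hexp : ∀ (z : ∀ i, X i × Module.Dual ℂ (X i)),
      ∑ f ∈ Fintype.piFinset S, D f * ∏ i, (z i).2 (Ψ i (b i (f i)) ((z i).1)) = 0 := by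
    intro z
    set x : ∀ i, X i := fun i => (z i).1
    set φ : ∀ i, Module.Dual ℂ (X i) := fun i => (z i).2
    have hh := h x φ
    have hk : ∀ k ∈ K, μ k * ∏ i, φ i (Ψ i (a k i) (x i))
        = ∑ f ∈ Fintype.piFinset S, μ k * ((∏ i, c k i (f i)) *
            ∏ i, φ i (Ψ i (b i (f i)) (x i))) := by
      intro k hk
      rw [← hGapp x φ (a k)]
      conv_lhs => rw [hrepr k hk]
      rw [MultilinearMap.map_sum_finset, Finset.mul_sum]
      refine Finset.sum_congr rfl (fun f hf => ?_)
      rw [MultilinearMap.map_smul_univ, smul_eq_mul, hGapp]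
    rw [Finset.sum_congr rfl hk, Finset.sum_comm] at hh
    rw [← hh]
    refine Finset.sum_congr rfl (fun f hf => ?_)
    rw [hD]
    simp only [Finset.sum_mul]
    refine Finset.sum_congr rfl (fun k hk => ?_)
    ring
  -- independence of the scalar functions at each coordinate
  have hind : ∀ (i : ι) (t : Finset (Basis.ofVectorSpaceIndex ℂ (A i)))
      (e : Basis.ofVectorSpaceIndex ℂ (A i) → ℂ),
      (∀ z : X i × Module.Dual ℂ (X i),
        ∑ α ∈ t, e α * (z.2 (Ψ i (b i α) (z.1))) = 0) → ∀ α ∈ t, e α = 0 := by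
    intro i t e he
    have hzero : (∑ α ∈ t, e α • b i α) = 0 := by
      apply hΨ i
      rw [map_zero]
      apply LinearMap.ext
      intro x
      rw [LinearMap.zero_apply]
      rw [← Module.forall_dual_apply_eq_zero_iff ℂ]
      intro φ
      have h5 := he (x, φ)
      rw [← h5]
      rw [map_sum]
      simp only [LinearMap.sum_apply, map_sum]
      refine Finset.sum_congr rfl (fun α hα => ?_)
      rw [map_smul, LinearMap.smul_apply, map_smul, smul_eq_mul]
    exact linearIndependent_iff'.mp (b _).linearIndependent t e hzero
  have hDzero : ∀ f ∈ Fintype.piFinset S, D f = 0 := by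
    intro f hf
    have := prodfun (Z := fun i => X i × Module.Dual ℂ (X i))
      (fun i α z => z.2 (Ψ i (b i α) z.1)) hind Finset.univ (Fintype.piFinset S) D hexp f hf
      {f} (by
        intro f'
        constructor
        · intro h1
          rw [Finset.mem_singleton] at h1
          subst h1
          exact ⟨hf, fun i _ => rfl⟩
        · rintro ⟨_, h2⟩
          rw [Finset.mem_singleton]
          funext i
          exact h2 i (Finset.mem_univ i))
    rw [Finset.sum_singleton] at this
    exact this
  calc ∑ k ∈ K, μ k • PiTensorProduct.tprod ℂ (a k)
      = ∑ k ∈ K, ∑ f ∈ Fintype.piFinset S,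
          (μ k * ∏ i, c k i (f i)) • PiTensorProduct.tprod ℂ (fun i => b i (f i)) := by
        refine Finset.sum_congr rfl (fun k hk => ?_)
        rw [htens k hk, Finset.smul_sum]
        exact Finset.sum_congr rfl (fun f hf => by rw [smul_smul])
    _ = ∑ f ∈ Fintype.piFinset S, D f • PiTensorProduct.tprod ℂ (fun i => b i (f i)) := by
        rw [Finset.sum_comm]
        refine Finset.sum_congr rfl (fun f hf => ?_)
        rw [hD, Finset.sum_smul]
    _ = 0 := by
        refine Finset.sum_eq_zero (fun f hf => ?_)
        rw [hDzero f hf, zero_smul]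

end FinSep


section Extend
attribute [local instance] Classical.propDecidable

variable {I : Type*} (E : Finset I)
  {A : I → Type*} [∀ i, AddCommGroup (A i)] [∀ i, Module ℂ (A i)]
  {N : I → Type*} [∀ i, AddCommGroup (N i)] [∀ i, Module ℂ (N i)]

/-- The multilinear map `(b_i)_{i ∈ E} ↦ ⊗ᵢ (if i ∈ E then L i (b i) else w i)`. -/
noncomputable def mlExtend (L : ∀ i, A i →ₗ[ℂ] N i) (w : ∀ i, N i) :
    MultilinearMap ℂ (fun i : ↥E => A ↑i) (⨂[ℂ] i, N i) where
  toFun b := PiTensorProduct.tprod ℂ (fun i => if h : i ∈ E then L i (b ⟨i, h⟩) else w i)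
  map_update_add' := by
    intro _ b j x y
    have key : ∀ v : A ↑j,
        (fun i => if h : i ∈ E then L i (Function.update b j v ⟨i, h⟩) else w i)
        = Function.update (fun i => if h : i ∈ E then L i (b ⟨i, h⟩) else w i) ↑j (L ↑j v) := by
      intro v
      funext i
      by_cases hij : i = (j : I)
      · subst hij
        rw [Function.update_self, dif_pos j.2]
        simp only [Subtype.coe_eta, Function.update_self]
      · rw [Function.update_of_ne hij]
        by_cases hiE : i ∈ E
        · rw [dif_pos hiE, dif_pos hiE]
          have hne : (⟨i, hiE⟩ : ↥E) ≠ j := fun hc => hij (by rw [← hc])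
          rw [Function.update_of_ne hne]
        · rw [dif_neg hiE, dif_neg hiE]
    show PiTensorProduct.tprod ℂ _ = PiTensorProduct.tprod ℂ _ + PiTensorProduct.tprod ℂ _
    rw [key, key, key, map_add, MultilinearMap.map_update_add]
  map_update_smul' := by
    intro _ b j cc x
    have key : ∀ v : A ↑j,
        (fun i => if h : i ∈ E then L i (Function.update b j v ⟨i, h⟩) else w i)
        = Function.update (fun i => if h : i ∈ E then L i (b ⟨i, h⟩) else w i) ↑j (L ↑j v) := by
      intro v
      funext i
      by_cases hij : i = (j : I)
      · subst hij
        rw [Function.update_self, dif_pos j.2]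
        simp only [Subtype.coe_eta, Function.update_self]
      · rw [Function.update_of_ne hij]
        by_cases hiE : i ∈ E
        · rw [dif_pos hiE, dif_pos hiE]
          have hne : (⟨i, hiE⟩ : ↥E) ≠ j := fun hc => hij (by rw [← hc])
          rw [Function.update_of_ne hne]
        · rw [dif_neg hiE, dif_neg hiE]
    show PiTensorProduct.tprod ℂ _ = cc • PiTensorProduct.tprod ℂ _
    rw [key, key, map_smul, MultilinearMap.map_update_smul]

lemma mlExtend_apply (L : ∀ i, A i →ₗ[ℂ] N i) (w : ∀ i, N i) (b : ∀ i : ↥E, A ↑i) :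
    mlExtend E L w b
      = PiTensorProduct.tprod ℂ (fun i => if h : i ∈ E then L i (b ⟨i, h⟩) else w i) := rfl

lemma tprod_smul_finset (lam : I → ℂ) (s : Finset I) (u v : ∀ i, N i)
    (h1 : ∀ i ∈ s, u i = lam i • v i) (h2 : ∀ i ∉ s, u i = v i) :
    PiTensorProduct.tprod ℂ u = (∏ i ∈ s, lam i) • PiTensorProduct.tprod ℂ v := by
  classical
  have hu : u = s.piecewise (fun i => lam i • v i) v := by
    funext i
    by_cases hi : i ∈ s
    · rw [Finset.piecewise_eq_of_mem _ _ _ hi]; exact h1 i hi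
    · rw [Finset.piecewise_eq_of_notMem _ _ _ hi]; exact h2 i hi
  rw [hu]
  exact MultilinearMap.map_piecewise_smul _ _ _ _

end Extend

section Main
attribute [local instance] Classical.propDecidable
open PiTensorProduct

lemma main_induction {I : Type*} {A : I → Type*} {X : I → Type*}
    [∀ i, Ring (A i)] [∀ i, Algebra ℂ (A i)]
    [∀ i, AddCommGroup (X i)] [∀ i, Module ℂ (X i)]
    (Ψ : ∀ i, A i →ₐ[ℂ] Module.End ℂ (X i)) (hΨ : ∀ i, Function.Injective (Ψ i))
    {κ : Type*} (n : ℕ) (K : Finset κ) (hK : K.card = n) (μ : κ → ℂ) (a : κ → ∀ i, A i)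
    (H : ∀ x : ∀ i, X i,
      ∑ k ∈ K, μ k • PiTensorProduct.tprod ℂ (fun i => Ψ i (a k i) (x i)) = 0) :
    ∑ k ∈ K, μ k • PiTensorProduct.tprod ℂ (a k) = 0 := by
  induction n using Nat.strong_induction_on generalizing K μ a with
  | _ n ih =>
  subst hK
  rcases Finset.eq_empty_or_nonempty K with rfl | ⟨k₀, hk₀⟩
  · simp
  by_cases hzero : ∃ i, a k₀ i = 0
  · -- drop the term k₀, which is zero on both sides
    obtain ⟨i0, hi0⟩ := hzero
    have hdrop1 : PiTensorProduct.tprod ℂ (a k₀) = 0 :=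
      MultilinearMap.map_coord_zero _ i0 hi0
    have hdrop2 : ∀ x : ∀ i, X i,
        PiTensorProduct.tprod ℂ (fun i => Ψ i (a k₀ i) (x i)) = 0 := by
      intro x
      apply MultilinearMap.map_coord_zero _ i0
      rw [hi0, map_zero, LinearMap.zero_apply]
    have hrest := ih (K.erase k₀).card (by rw [← Finset.card_erase_add_one hk₀]; omega)
      (K.erase k₀) rfl μ a (fun x => by
        have hx := H x
        rw [← Finset.add_sum_erase _ _ hk₀, hdrop2 x, smul_zero, zero_add] at hx
        exact hx)
    rw [← Finset.add_sum_erase _ _ hk₀, hdrop1, smul_zero, zero_add]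
    exact hrest
  push_neg at hzero
  have hnz : ∀ i, a k₀ i ≠ 0 := hzero
  -- proportionality data
  set prp : κ → I → Prop := fun k i => ∃ cc : ℂ, a k i = cc • a k₀ i with hprp
  set P : κ → Set I := fun k => {i | ¬ prp k i} with hP
  set lam : κ → I → ℂ := fun k i => if h : prp k i then h.choose else 1 with hlam
  have hlamspec : ∀ k i, prp k i → a k i = lam k i • a k₀ i := by
    intro k i h
    have : lam k i = h.choose := dif_pos h
    rw [this]
    exact h.choose_spec
  have hprp0 : ∀ i, prp k₀ i := fun i => ⟨1, (one_smul _ _).symm⟩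
  have hlam0 : ∀ i, lam k₀ i = 1 := by
    intro i
    have h2 : lam k₀ i • a k₀ i = (1 : ℂ) • a k₀ i := by
      rw [← hlamspec k₀ i (hprp0 i), one_smul]
    exact smul_left_injective ℂ (hnz i) h2
  -- the finite exceptional set E
  have hEfin : (⋃ k ∈ (K : Set κ), (if (P k).Finite then P k else ∅)).Finite := by
    apply Set.Finite.biUnion K.finite_toSet
    intro k _
    split_ifs with h
    · exact h
    · exact Set.finite_empty
  set E : Finset I := hEfin.toFinset with hE
  have hPE : ∀ k ∈ K, (P k).Finite → ∀ i ∈ P k, i ∈ E := by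
    intro k hk hPf i hi
    rw [hE, Set.Finite.mem_toFinset]
    refine Set.mem_biUnion hk ?_
    rw [if_pos hPf]
    exact hi
  set Lam : κ → Set I := fun k => {i | i ∉ E ∧ lam k i ≠ 1} with hLam
  set good : κ → Prop := fun k => (P k).Finite ∧ (Lam k).Finite with hgood
  have hgood₀ : good k₀ := by
    constructor
    · have : P k₀ = ∅ := by
        ext i; simp only [hP, Set.mem_setOf_eq, Set.mem_empty_iff_false, iff_false, not_not]
        exact hprp0 i
      rw [this]; exact Set.finite_empty
    · have : Lam k₀ = ∅ := by
        ext i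
        simp only [hLam, Set.mem_setOf_eq, Set.mem_empty_iff_false, iff_false, not_and]
        intro _
        rw [hlam0 i]
        exact fun h => h rfl
      rw [this]; exact Set.finite_empty
  -- normalization scalars
  set ν : κ → ℂ := fun k => if h : (Lam k).Finite then ∏ i ∈ h.toFinset, lam k i else 1 with hν
  -- coordinate choices outside E
  have hcoord : ∀ i : I, ∃ p : X i × Module.Dual ℂ (X i),
      p.2 (Ψ i (a k₀ i) p.1) = 1 ∧ ∀ k ∈ K, i ∈ P k → p.2 (Ψ i (a k i) p.1) ≠ 1 := by
    intro i
    have hS0 : (Ψ i (a k₀ i) : Module.End ℂ (X i)) ≠ 0 := by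
      intro h0
      exact hnz i (hΨ i (by rw [h0, map_zero]))
    have hT : ∀ k ∈ K.filter (fun k => i ∈ P k), ∀ cc : ℂ,
        (Ψ i (a k i) : Module.End ℂ (X i)) ≠ cc • Ψ i (a k₀ i) := by
      intro k hk cc hTc
      have hik : i ∈ P k := (Finset.mem_filter.mp hk).2
      apply hik
      refine ⟨cc, hΨ i ?_⟩
      rw [hTc, map_smul]
    obtain ⟨x, φ, h1, h2⟩ := exists_good_pair (K.filter (fun k => i ∈ P k))
      (Ψ i (a k₀ i)) hS0 (fun k => Ψ i (a k i)) hT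
    exact ⟨(x, φ), h1, fun k hk hPk => h2 k (Finset.mem_filter.mpr ⟨hk, hPk⟩)⟩
  choose pc hpc1 hpc2 using hcoord
  -- the key finite-coordinates identity
  have hEkey : ∀ (xE : ∀ i, X i) (φE : ∀ i, Module.Dual ℂ (X i)),
      ∑ k ∈ K.filter good, (μ k * ν k) * ∏ i ∈ E, φE i (Ψ i (a k i) (xE i)) = 0 := by
    intro xE φE
    set xf : ∀ i, X i := fun i => if i ∈ E then xE i else (pc i).1 with hxf
    set φf : ∀ i, Module.Dual ℂ (X i) := fun i => if i ∈ E then φE i else (pc i).2 with hφf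
    have happ := congrArg (PiTensorProduct.lift (MDual φf)) (H xf)
    rw [map_sum, map_zero] at happ
    have happ2 : ∑ k ∈ K, μ k * MDual φf (fun i => Ψ i (a k i) (xf i)) = 0 := by
      rw [← happ]
      refine Finset.sum_congr rfl (fun k hk => ?_)
      rw [map_smul, PiTensorProduct.lift.tprod, smul_eq_mul]
    -- killed terms
    have hkill : ∀ k ∈ K, ¬ good k → MDual φf (fun i => Ψ i (a k i) (xf i)) = 0 := by
      intro k hk hng
      rw [MDual_apply]
      apply mval_eq_zero_of_infinite
      by_cases hPf : (P k).Finite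
      · have hLinf : (Lam k).Infinite := by
          intro hLf
          exact hng ⟨hPf, hLf⟩
        apply Set.Infinite.mono ?_ (hLinf.diff hPf)
        rintro i ⟨⟨hiE, hl1⟩, hiP⟩
        have hpp : prp k i := not_not.mp hiP
        rw [Function.mem_mulSupport]
        have hxfi : xf i = (pc i).1 := if_neg hiE
        have hφfi : φf i = (pc i).2 := if_neg hiE
        have hval : φf i (Ψ i (a k i) (xf i)) = lam k i := by
          rw [hlamspec k i hpp, map_smul, LinearMap.smul_apply, map_smul, hxfi, hφfi,
            hpc1, smul_eq_mul, mul_one]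
        rw [hval]
        exact hl1
      · have hPinf : (P k).Infinite := hPf
        apply Set.Infinite.mono ?_ (hPinf.diff E.finite_toSet)
        rintro i ⟨hiP, hiE0⟩
        have hiE : i ∉ E := fun h => hiE0 (Finset.mem_coe.mpr h)
        rw [Function.mem_mulSupport]
        have hxfi : xf i = (pc i).1 := if_neg hiE
        have hφfi : φf i = (pc i).2 := if_neg hiE
        rw [hxfi, hφfi]
        exact hpc2 i k hk hiP
    -- surviving terms
    have hsurv : ∀ k ∈ K, good k → MDual φf (fun i => Ψ i (a k i) (xf i))
        = ν k * ∏ i ∈ E, φE i (Ψ i (a k i) (xE i)) := by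
      intro k hk hg
      obtain ⟨hPf, hLf⟩ := hg
      rw [MDual_apply]
      have hvalout : ∀ i, i ∉ E → φf i (Ψ i (a k i) (xf i)) = lam k i := by
        intro i hiE
        have hiP : i ∉ P k := fun hip => hiE (hPE k hk hPf i hip)
        have hpp : prp k i := not_not.mp hiP
        have hxfi : xf i = (pc i).1 := if_neg hiE
        have hφfi : φf i = (pc i).2 := if_neg hiE
        rw [hlamspec k i hpp, map_smul, LinearMap.smul_apply, map_smul, hxfi, hφfi,
          hpc1, smul_eq_mul, mul_one]
      have hsupp : Function.mulSupport (fun i => φf i (Ψ i (a k i) (xf i)))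
          ⊆ ↑(E ∪ hLf.toFinset) := by
        intro i hi
        rw [Function.mem_mulSupport] at hi
        by_cases hiE : i ∈ E
        · simp only [Finset.coe_union, Set.mem_union, Finset.mem_coe]
          exact Or.inl hiE
        · have hiL : i ∈ Lam k := ⟨hiE, by rw [← hvalout i hiE]; exact hi⟩
          simp only [Finset.coe_union, Set.mem_union, Finset.mem_coe, Set.Finite.mem_toFinset]
          exact Or.inr hiL
      have hdisj : Disjoint E hLf.toFinset := by
        rw [Finset.disjoint_left]
        intro i hiE hiL
        exact ((Set.Finite.mem_toFinset _).mp hiL).1 hiE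
      rw [mval_eq_prod (Set.Finite.subset (E ∪ hLf.toFinset).finite_toSet hsupp) _ hsupp]
      rw [Finset.prod_union hdisj, mul_comm]
      congr 1
      · rw [show ν k = ∏ i ∈ hLf.toFinset, lam k i from dif_pos hLf]
        refine Finset.prod_congr rfl (fun i hiL => ?_)
        exact hvalout i ((Set.Finite.mem_toFinset _).mp hiL).1
      · refine Finset.prod_congr rfl (fun i hiE => ?_)
        have hxfi : xf i = xE i := if_pos hiE
        have hφfi : φf i = φE i := if_pos hiE
        rw [hxfi, hφfi]
    rw [← Finset.sum_filter_add_sum_filter_not K good] at happ2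
    have hzero2 : ∑ k ∈ K.filter (fun k => ¬ good k),
        μ k * MDual φf (fun i => Ψ i (a k i) (xf i)) = 0 := by
      refine Finset.sum_eq_zero (fun k hk => ?_)
      obtain ⟨hk1, hk2⟩ := Finset.mem_filter.mp hk
      rw [hkill k hk1 hk2, mul_zero]
    rw [hzero2, add_zero] at happ2
    rw [← happ2]
    refine Finset.sum_congr rfl (fun k hk => ?_)
    obtain ⟨hk1, hk2⟩ := Finset.mem_filter.mp hk
    rw [hsurv k hk1 hk2]
    ring
  -- apply the finite-coordinate separation
  have hfin := finSep (fun i : ↥E => A ↑i) (fun i : ↥E => X ↑i)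
    (fun i => (Ψ ↑i).toLinearMap) (fun i => hΨ ↑i)
    (K.filter good) (fun k => μ k * ν k) (fun k => fun i : ↥E => a k ↑i)
    (by
      intro x φ
      have hkey := hEkey (fun i => if h : i ∈ E then x ⟨i, h⟩ else 0)
        (fun i => if h : i ∈ E then φ ⟨i, h⟩ else 0)
      rw [← hkey]
      refine Finset.sum_congr rfl (fun k hk => ?_)
      congr 1
      refine Eq.trans ?_ (Finset.prod_coe_sort E (fun i =>
        (if h : i ∈ E then φ ⟨i, h⟩ else (0 : Module.Dual ℂ (X i)))
          (Ψ i (a k i) (if h : i ∈ E then x ⟨i, h⟩ else (0 : X i)))))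
      refine Finset.prod_congr rfl (fun i _ => ?_)
      rw [dif_pos i.2, dif_pos i.2]
      rfl)
  -- transfer back to the full tensor product: algebra side
  set atil : κ → ∀ i, A i := fun k i => if i ∈ E then a k i else a k₀ i with hatil
  have hext : ∀ k, PiTensorProduct.lift
      (mlExtend E (fun i => (LinearMap.id : A i →ₗ[ℂ] A i)) (a k₀))
      (PiTensorProduct.tprod ℂ (fun i : ↥E => a k ↑i))
      = PiTensorProduct.tprod ℂ (atil k) := by
    intro k
    rw [PiTensorProduct.lift.tprod, mlExtend_apply]
    refine congrArg (PiTensorProduct.tprod ℂ) (funext fun i => ?_)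
    by_cases hiE : i ∈ E
    · rw [dif_pos hiE, show atil k i = a k i from if_pos hiE]
      rfl
    · rw [dif_neg hiE, show atil k i = a k₀ i from if_neg hiE]
  have hA0 : ∑ k ∈ K.filter good, (μ k * ν k) • PiTensorProduct.tprod ℂ (atil k) = 0 := by
    have hmap := congrArg (PiTensorProduct.lift
      (mlExtend E (fun i => (LinearMap.id : A i →ₗ[ℂ] A i)) (a k₀))) hfin
    rw [map_sum, map_zero] at hmap
    rw [← hmap]
    refine Finset.sum_congr rfl (fun k hk => ?_)
    rw [map_smul, hext k]
  have hscale : ∀ k ∈ K.filter good,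
      PiTensorProduct.tprod ℂ (a k) = ν k • PiTensorProduct.tprod ℂ (atil k) := by
    intro k hk
    obtain ⟨hkK, hPf, hLf⟩ : k ∈ K ∧ (P k).Finite ∧ (Lam k).Finite := by
      have := Finset.mem_filter.mp hk
      exact ⟨this.1, this.2.1, this.2.2⟩
    have hνk : ν k = ∏ i ∈ hLf.toFinset, lam k i := dif_pos hLf
    rw [hνk]
    apply tprod_smul_finset (lam k) hLf.toFinset
    · intro i hi
      obtain ⟨hiE, _⟩ := (Set.Finite.mem_toFinset _).mp hi
      have hiP : i ∉ P k := fun hip => hiE (hPE k hkK hPf i hip)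
      have hpp : prp k i := not_not.mp hiP
      rw [hlamspec k i hpp, show atil k i = a k₀ i from if_neg hiE]
    · intro i hi
      rw [Set.Finite.mem_toFinset] at hi
      by_cases hiE : i ∈ E
      · exact (show atil k i = a k i from if_pos hiE).symm
      · have hl1 : lam k i = 1 := by
          by_contra hne
          exact hi ⟨hiE, hne⟩
        have hiP : i ∉ P k := fun hip => hiE (hPE k hkK hPf i hip)
        have hpp : prp k i := not_not.mp hiP
        rw [hlamspec k i hpp, hl1, one_smul, show atil k i = a k₀ i from if_neg hiE]
  have hgoodpart : ∑ k ∈ K.filter good, μ k • PiTensorProduct.tprod ℂ (a k) = 0 := by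
    rw [← hA0]
    refine Finset.sum_congr rfl (fun k hk => ?_)
    rw [hscale k hk, smul_smul]
  -- X side for each x
  have hgoodX : ∀ x : ∀ i, X i, ∑ k ∈ K.filter good,
      μ k • PiTensorProduct.tprod ℂ (fun i => Ψ i (a k i) (x i)) = 0 := by
    intro x
    set LX : ∀ i, A i →ₗ[ℂ] X i :=
      fun i => (LinearMap.applyₗ (x i)).comp (Ψ i).toLinearMap with hLX
    set wX : ∀ i, X i := fun i => Ψ i (a k₀ i) (x i) with hwX
    have hextX : ∀ k, PiTensorProduct.lift (mlExtend E LX wX)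
        (PiTensorProduct.tprod ℂ (fun i : ↥E => a k ↑i))
        = PiTensorProduct.tprod ℂ (fun i => Ψ i (atil k i) (x i)) := by
      intro k
      rw [PiTensorProduct.lift.tprod, mlExtend_apply]
      refine congrArg (PiTensorProduct.tprod ℂ) (funext fun i => ?_)
      by_cases hiE : i ∈ E
      · rw [dif_pos hiE]
        show Ψ i (a k i) (x i) = Ψ i (atil k i) (x i)
        rw [show atil k i = a k i from if_pos hiE]
      · rw [dif_neg hiE]
        show Ψ i (a k₀ i) (x i) = Ψ i (atil k i) (x i)
        rw [show atil k i = a k₀ i from if_neg hiE]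
    have hmap := congrArg (PiTensorProduct.lift (mlExtend E LX wX)) hfin
    rw [map_sum, map_zero] at hmap
    have hX0 : ∑ k ∈ K.filter good,
        (μ k * ν k) • PiTensorProduct.tprod ℂ (fun i => Ψ i (atil k i) (x i)) = 0 := by
      rw [← hmap]
      refine Finset.sum_congr rfl (fun k hk => ?_)
      rw [map_smul, hextX k]
    rw [← hX0]
    refine Finset.sum_congr rfl (fun k hk => ?_)
    obtain ⟨hkK, hPf, hLf⟩ : k ∈ K ∧ (P k).Finite ∧ (Lam k).Finite := by
      have := Finset.mem_filter.mp hk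
      exact ⟨this.1, this.2.1, this.2.2⟩
    have hνk : ν k = ∏ i ∈ hLf.toFinset, lam k i := dif_pos hLf
    have hXscale : PiTensorProduct.tprod ℂ (fun i => Ψ i (a k i) (x i))
        = ν k • PiTensorProduct.tprod ℂ (fun i => Ψ i (atil k i) (x i)) := by
      rw [hνk]
      apply tprod_smul_finset (lam k) hLf.toFinset
      · intro i hi
        obtain ⟨hiE, _⟩ := (Set.Finite.mem_toFinset _).mp hi
        have hiP : i ∉ P k := fun hip => hiE (hPE k hkK hPf i hip)
        have hpp : prp k i := not_not.mp hiP
        rw [hlamspec k i hpp]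
        have hatile : atil k i = a k₀ i := if_neg hiE
        rw [hatile, map_smul, LinearMap.smul_apply]
      · intro i hi
        rw [Set.Finite.mem_toFinset] at hi
        by_cases hiE : i ∈ E
        · rw [show atil k i = a k i from if_pos hiE]
        · have hl1 : lam k i = 1 := by
            by_contra hne
            exact hi ⟨hiE, hne⟩
          have hiP : i ∉ P k := fun hip => hiE (hPE k hkK hPf i hip)
          have hpp : prp k i := not_not.mp hiP
          have hatile : atil k i = a k₀ i := if_neg hiE
          rw [hlamspec k i hpp, hl1, one_smul, hatile]
    rw [hXscale, smul_smul]
  -- the remaining terms, by induction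
  have hk₀good : k₀ ∈ K.filter good := Finset.mem_filter.mpr ⟨hk₀, hgood₀⟩
  have hlt : (K.filter (fun k => ¬ good k)).card < K.card := by
    apply Finset.card_lt_card
    rw [Finset.ssubset_iff_of_subset (Finset.filter_subset _ _)]
    exact ⟨k₀, hk₀, fun hmem => (Finset.mem_filter.mp hmem).2 hgood₀⟩
  have hrest := ih (K.filter (fun k => ¬ good k)).card hlt
    (K.filter (fun k => ¬ good k)) rfl μ a (fun x => by
      have hx := H x
      rw [← Finset.sum_filter_add_sum_filter_not K good, hgoodX x, zero_add] at hx
      exact hx)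
  rw [← Finset.sum_filter_add_sum_filter_not K good, hgoodpart, hrest, add_zero]

end Main


/-- If `X_i` is a faithful unital module over the unital `ℂ`-algebra `A_i` for every `i`
(witnessed by injective algebra homomorphisms `Ψ_i : A_i → End(X_i)`), then
`⨂_{i∈I} X_i` is a faithful module over `⨂_{i∈I} A_i`: the induced algebra homomorphism
`⨂_{i∈I} A_i → End(⨂_{i∈I} X_i)` is injective. -/
theorem piTensorProduct_faithful_module {I : Type*} [Infinite I]
    (A : I → Type*) (X : I → Type*)
    [∀ i, Ring (A i)] [∀ i, Algebra ℂ (A i)]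
    [∀ i, AddCommGroup (X i)] [∀ i, Module ℂ (X i)] [∀ i, Nontrivial (X i)]
    (Ψ : ∀ i, A i →ₐ[ℂ] Module.End ℂ (X i)) (hΨ : ∀ i, Function.Injective (Ψ i))
    (Θ : (⨂[ℂ] i, A i) →ₐ[ℂ] Module.End ℂ (⨂[ℂ] i, X i))
    (hΘ : ∀ (a : ∀ i, A i) (x : ∀ i, X i),
      Θ (PiTensorProduct.tprod ℂ a) (PiTensorProduct.tprod ℂ x) =
        PiTensorProduct.tprod ℂ (fun i => Ψ i (a i) (x i))) :
    Function.Injective Θ := by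
  rw [injective_iff_map_eq_zero]
  intro t ht
  have htop : t ∈ Submodule.span ℂ (Set.range (PiTensorProduct.tprod ℂ)) := by
    rw [PiTensorProduct.span_tprod_eq_top]; trivial
  obtain ⟨n, μ, v, hsum⟩ := Submodule.mem_span_set'.mp htop
  choose a ha using fun k => (v k).2
  have hrepr : t = ∑ k : Fin n, μ k • PiTensorProduct.tprod ℂ (a k) := by
    rw [← hsum]
    refine Finset.sum_congr rfl (fun k _ => ?_)
    rw [ha k]
  have H : ∀ x : ∀ i, X i,
      ∑ k ∈ Finset.univ, μ k • PiTensorProduct.tprod ℂ (fun i => Ψ i (a k i) (x i)) = 0 := by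
    intro x
    have hθt := congrArg (fun (T : Module.End ℂ (⨂[ℂ] i, X i)) => T (PiTensorProduct.tprod ℂ x)) ht
    simp only [LinearMap.zero_apply] at hθt
    rw [← hθt]
    rw [hrepr, map_sum]
    rw [LinearMap.sum_apply]
    refine Finset.sum_congr rfl (fun k _ => ?_)
    rw [map_smul, LinearMap.smul_apply, hΘ]
  have := main_induction Ψ hΨ (Finset.univ : Finset (Fin n)).card Finset.univ rfl μ a H
  rw [hrepr]
  exact this
end

section
/- Let β : I → ℂ satisfy β_i ≠ 0 for every i ∈ I. Then for every α : I → ℂ with α_i ≠ 0 for every i and α ∼ β, one has ⊗α = (∏_{i∈I} α_i·β_i⁻¹) • (⊗β) in ⨂_{i∈I} ℂ, where the product is the finite product over the finitely many indices i with α_i ≠ β_i (e.g. as finprod). Consequently, the ℂ-linear span of {⊗α : α : I → ℂ, α_i ≠ 0 for all i, α ∼ β} equals the one-dimensional subspace ℂ • (⊗β). -/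
open scoped TensorProduct

/-- In `⨂_{i∈I} ℂ`, for a nowhere-zero family `β`, every elementary tensor `⊗α` with `α`
nowhere zero and `α ∼ β` is the scalar multiple of `⊗β` by `∏_{i} α_i·β_i⁻¹` (a finite
product); consequently the span of all such `⊗α` is the line spanned by `⊗β`. -/
theorem tprod_sim_smul_and_span {I : Type*} [Infinite I] (β : I → ℂ) (hβ : ∀ i, β i ≠ 0) :
    (∀ α : I → ℂ, (∀ i, α i ≠ 0) → {i | α i ≠ β i}.Finite →
      PiTensorProduct.tprod ℂ α =
        (∏ᶠ i, α i * (β i)⁻¹) • PiTensorProduct.tprod ℂ β) ∧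
    Submodule.span ℂ {t : ⨂[ℂ] _ : I, ℂ | ∃ α : I → ℂ,
        (∀ i, α i ≠ 0) ∧ {i | α i ≠ β i}.Finite ∧ t = PiTensorProduct.tprod ℂ α} =
      Submodule.span ℂ {PiTensorProduct.tprod ℂ β} := by
  classical
  have key : ∀ α : I → ℂ, (∀ i, α i ≠ 0) → {i | α i ≠ β i}.Finite →
      PiTensorProduct.tprod ℂ α =
        (∏ᶠ i, α i * (β i)⁻¹) • PiTensorProduct.tprod ℂ β := by
    intro α hα hfin
    set s : Finset I := hfin.toFinset with hs
    have hαeq : α = s.piecewise (fun i => (α i * (β i)⁻¹) • β i) β := by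
      funext i
      by_cases h : i ∈ s
      · simp only [Finset.piecewise_eq_of_mem _ _ _ h, smul_eq_mul]
        rw [mul_assoc, inv_mul_cancel₀ (hβ i), mul_one]
      · have : ¬ α i ≠ β i := by simpa [hs] using h
        simp [Finset.piecewise_eq_of_notMem _ _ _ h, not_not.mp this]
    have hmap := (PiTensorProduct.tprod ℂ (s := fun _ : I => ℂ)).map_piecewise_smul
      (fun i => α i * (β i)⁻¹) β s
    have hprod : (∏ᶠ i, α i * (β i)⁻¹) = ∏ i ∈ s, α i * (β i)⁻¹ := by
      apply finprod_eq_prod_of_mulSupport_subset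
      intro i hi
      simp only [Set.mem_setOf_eq, Function.mem_mulSupport] at hi
      have : α i ≠ β i := by
        intro h
        apply hi
        rw [h]
        exact mul_inv_cancel₀ (hβ i)
      simpa [hs] using this
    conv_lhs => rw [hαeq]
    rw [hmap, hprod]
  refine ⟨key, le_antisymm ?_ ?_⟩
  · rw [Submodule.span_le]
    rintro t ⟨α, hα, hfin, rfl⟩
    rw [key α hα hfin]
    exact Submodule.smul_mem _ _ (Submodule.subset_span rfl)
  · apply Submodule.span_mono
    rintro t rfl
    exact ⟨β, hβ, by simp, rfl⟩
end

section
/- Let (G_i)_{i∈I} be a family of groups indexed by an infinite set I. The ℂ-algebra homomorphism λ : MonoidAlgebra ℂ (Π_{i∈I} G_i) → ⨂_{i∈I} MonoidAlgebra ℂ G_i, determined by λ(single g 1) = ⊗_i (single g_i 1) for g ∈ Π_{i∈I} G_i, is injective. In particular, the elements ⊗_i(single g_i 1), as g ranges over Π_{i∈I} G_i, are ℂ-linearly independent in ⨂_{i∈I} MonoidAlgebra ℂ G_i. -/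
open scoped TensorProduct


open Function Pi

noncomputable section CharAux

instance : RootableBy ℂˣ ℕ :=
  rootableByOfPowLeftSurj _ _ (fun {n} hn x => by
    obtain ⟨z, hz⟩ := IsAlgClosed.exists_pow_nat_eq (x : ℂ) (Nat.pos_of_ne_zero hn)
    have hz0 : z ≠ 0 := by
      rintro rfl
      exact x.ne_zero (by simpa [zero_pow hn] using hz.symm)
    refine ⟨Units.mk0 z hz0, Units.ext ?_⟩
    simpa using hz)

instance : RootableBy ℂˣ ℤ := Group.rootableByIntOfRootableByNat ℂˣ

instance : DivisibleBy (Additive ℂˣ) ℤ where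
  div a n := Additive.ofMul (RootableBy.root a.toMul n)
  div_zero a := by
    simp [RootableBy.root_zero]
  div_cancel a hn := by
    show _ • Additive.ofMul _ = a
    rw [← ofMul_zpow, RootableBy.root_cancel _ hn]; rfl

variable (κ : Type*)

/-- The subgroup of `κ → ℂˣ` of finitely supported tuples. -/
def finSuppSubgroup : Subgroup (κ → ℂˣ) where
  carrier := {x | (mulSupport x).Finite}
  one_mem' := by simp
  mul_mem' := by
    intro a b ha hb
    exact ((ha.union hb).subset (mulSupport_mul a b))
  inv_mem' := by
    intro a ha
    simpa [mulSupport_inv] using ha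

/-- The finite-product character on the finitely supported subgroup. -/
def finProdChar : finSuppSubgroup κ →* ℂˣ where
  toFun x := ∏ᶠ i, (x : κ → ℂˣ) i
  map_one' := finprod_one
  map_mul' x y := finprod_mul_distrib x.2 y.2

theorem exists_char : ∃ χ : (κ → ℂˣ) →* ℂˣ,
    ∀ x : κ → ℂˣ, (mulSupport x).Finite → χ x = ∏ᶠ i, x i := by
  obtain ⟨h, hh⟩ := (Module.Baer.of_divisible (Additive ℂˣ)).extension_property_addMonoidHom
      (MonoidHom.toAdditive ((finSuppSubgroup κ).subtype))
      (fun x y hxy => by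
        apply Subtype.ext
        exact congrArg Additive.toMul hxy)
      (MonoidHom.toAdditive (finProdChar κ))
  refine ⟨MonoidHom.toAdditive.symm h, fun x hx => ?_⟩
  have := congrArg (fun φ : Additive (finSuppSubgroup κ) →+ Additive ℂˣ =>
    φ (Additive.ofMul (⟨x, hx⟩ : finSuppSubgroup κ))) hh
  show Additive.toMul (h (Additive.ofMul x)) = _
  have h2 : h (Additive.ofMul x) = Additive.ofMul (finProdChar κ ⟨x, hx⟩) := by
    simpa using this
  rw [h2]
  rfl

/-- A fixed character extending the finite product. -/
def theChar : (κ → ℂˣ) →* ℂˣ := (exists_char κ).choose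

theorem theChar_spec : ∀ x : κ → ℂˣ, (mulSupport x).Finite →
    theChar κ x = ∏ᶠ i, x i := (exists_char κ).choose_spec

variable {κ}

theorem theChar_mulSingle [DecidableEq κ] (i : κ) (a : ℂˣ) :
    theChar κ (mulSingle i a) = a := by
  rw [theChar_spec κ _ ((Set.finite_singleton i).subset mulSupport_mulSingle_subset),
    finprod_eq_single (mulSingle i a) i (fun j hj => by simp [hj]), Pi.mulSingle_eq_same]

variable (κ)

/-- The underlying function of the multilinear functional. -/
def F0 (x : κ → ℂ) : ℂ :=
  letI := Classical.propDecidable (∀ i, x i ≠ 0)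
  if h : ∀ i, x i ≠ 0 then (theChar κ (fun i => Units.mk0 (x i) (h i)) : ℂ) else 0

theorem F0_pos (x : κ → ℂ) (h : ∀ i, x i ≠ 0) :
    F0 κ x = theChar κ (fun i => Units.mk0 (x i) (h i)) := by
  unfold F0
  rw [dif_pos h]

theorem F0_neg (x : κ → ℂ) (h : ¬ ∀ i, x i ≠ 0) : F0 κ x = 0 := by
  unfold F0
  rw [dif_neg h]

variable {κ}

theorem F0_update [DecidableEq κ] (x : κ → ℂ) (i : κ) (a : ℂ) :
    F0 κ (update x i a) = a * F0 κ (update x i 1) := by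
  by_cases hx : ∀ j, j ≠ i → x j ≠ 0
  · have h1 : ∀ j, update x i 1 j ≠ 0 := fun j => by
      rcases eq_or_ne j i with rfl | h
      · simp
      · rw [update_of_ne h]; exact hx j h
    have hF1 : F0 κ (update x i 1) = theChar κ (fun j => Units.mk0 _ (h1 j)) := F0_pos κ _ h1
    by_cases ha : a = 0
    · subst ha
      rw [F0_neg κ _ (fun hall => hall i (by simp)), zero_mul]
    · have h2 : ∀ j, update x i a j ≠ 0 := fun j => by
        rcases eq_or_ne j i with rfl | h
        · simpa using ha
        · rw [update_of_ne h]; exact hx j h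
      rw [F0_pos κ _ h2, hF1]
      have key : (fun j => Units.mk0 (update x i a j) (h2 j)) =
          (fun j => Units.mk0 (update x i 1 j) (h1 j)) * mulSingle i (Units.mk0 a ha) := by
        funext j
        apply Units.ext
        rcases eq_or_ne j i with rfl | h
        · simp
        · simp [update_of_ne h, Pi.mulSingle_eq_of_ne h]
      rw [key, map_mul, theChar_mulSingle i (Units.mk0 a ha), Units.val_mul, Units.val_mk0]
      ring
  · push_neg at hx
    obtain ⟨j, hj, hxj⟩ := hx
    have hz : ∀ v : ℂ, F0 κ (update x i v) = 0 := fun v =>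
      F0_neg κ _ (fun hall => hall j (by rwa [update_of_ne hj]))
    rw [hz, hz, mul_zero]

variable (κ)

/-- The multilinear functional on `κ → ℂ` with value `1` at the constant tuple `1`. -/
def Fml : MultilinearMap ℂ (fun _ : κ => ℂ) ℂ where
  toFun := F0 κ
  map_update_add' m i x y := by
    rw [F0_update m i (x + y), F0_update m i x, F0_update m i y, add_mul]
  map_update_smul' m i c x := by
    rw [F0_update m i (c • x), F0_update m i x, smul_eq_mul, smul_eq_mul]
    ring

theorem Fml_one : Fml κ (fun _ => (1 : ℂ)) = 1 := by
  have h : ∀ i : κ, (fun _ : κ => (1:ℂ)) i ≠ 0 := fun _ => one_ne_zero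
  rw [show Fml κ (fun _ => (1:ℂ)) = F0 κ (fun _ => (1:ℂ)) from rfl, F0_pos κ _ h]
  have : (fun i : κ => Units.mk0 ((fun _ : κ => (1:ℂ)) i) (h i)) = 1 := by
    funext i; exact Units.ext rfl
  rw [this, map_one, Units.val_one]

end CharAux

open scoped TensorProduct


/-- The `ℂ`-algebra homomorphism `λ : ℂ[Π_{i∈I} G_i] → ⨂_{i∈I} ℂ[G_i]`, determined by
`λ(single g 1) = ⊗(single gᵢ 1)`, is injective; in particular the elementary tensors
`⊗(single gᵢ 1)`, `g ∈ Π_{i∈I} G_i`, are linearly independent. -/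
theorem monoidAlgebra_pi_to_piTensor_injective {I : Type*} [Infinite I]
    (G : I → Type*) [∀ i, Group (G i)]
    (lam : MonoidAlgebra ℂ (∀ i, G i) →ₐ[ℂ] ⨂[ℂ] i, MonoidAlgebra ℂ (G i))
    (hlam : ∀ g : ∀ i, G i,
      lam (MonoidAlgebra.single g 1) =
        PiTensorProduct.tprod ℂ (fun i => MonoidAlgebra.single (g i) (1 : ℂ))) :
    Function.Injective lam ∧
      LinearIndependent ℂ (fun g : ∀ i, G i =>
        PiTensorProduct.tprod ℂ (fun i => MonoidAlgebra.single (g i) (1 : ℂ))) := by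
  classical
  set v : (∀ i, G i) → ⨂[ℂ] i, MonoidAlgebra ℂ (G i) := fun g =>
    PiTensorProduct.tprod ℂ (fun i => MonoidAlgebra.single (g i) (1 : ℂ)) with hv
  have hLI : LinearIndependent ℂ v := by
    rw [linearIndependent_iff']
    intro s c hsum g₀ hg₀
    set φ : ∀ i, MonoidAlgebra ℂ (G i) →ₗ[ℂ] ℂ := fun i => Finsupp.lapply (g₀ i) ∘ₗ (MonoidAlgebra.coeffLinearEquiv (R := ℂ)).toLinearMap with hφ
    set Ψ : MultilinearMap ℂ (fun i => MonoidAlgebra ℂ (G i)) ℂ :=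
      (Fml I).compLinearMap φ with hΨ
    have happ : ∀ g : ∀ i, G i,
        PiTensorProduct.lift Ψ (v g) = if g = g₀ then 1 else 0 := by
      intro g
      rw [hv]
      rw [PiTensorProduct.lift.tprod]
      have hco : Ψ (fun i => MonoidAlgebra.single (g i) (1 : ℂ))
          = Fml I (fun i => (MonoidAlgebra.single (g i) (1 : ℂ)).coeff (g₀ i)) := rfl
      rw [hco]
      by_cases hgg : g = g₀
      · subst hgg
        have h1 : (fun i => (MonoidAlgebra.single (g i) (1 : ℂ)).coeff (g i))
            = fun _ : I => (1 : ℂ) := by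
          funext i
          exact Finsupp.single_eq_same
        rw [h1, Fml_one, if_pos rfl]
      · obtain ⟨i, hi⟩ := Function.ne_iff.mp hgg
        rw [if_neg hgg]
        exact (Fml I).map_coord_zero i (Finsupp.single_eq_of_ne' hi)
    have h0 := congrArg (PiTensorProduct.lift Ψ) hsum
    rw [map_sum, map_zero] at h0
    simp only [map_smul, happ, smul_eq_mul, mul_ite, mul_one, mul_zero] at h0
    rw [Finset.sum_ite_eq' s g₀ c, if_pos hg₀] at h0
    exact h0
  refine ⟨?_, hLI⟩
  have hrep : lam.toLinearMap = Finsupp.linearCombination ℂ v ∘ₗ (MonoidAlgebra.coeffLinearEquiv (R := ℂ)).toLinearMap := by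
    apply MonoidAlgebra.lhom_ext'
    intro g; apply LinearMap.ext; intro b
    show lam (MonoidAlgebra.single g b) = Finsupp.linearCombination ℂ v (Finsupp.single g b)
    have hb : (MonoidAlgebra.single g b : MonoidAlgebra ℂ (∀ i, G i))
        = b • MonoidAlgebra.single g 1 := by
      rw [MonoidAlgebra.smul_single', mul_one]
    rw [hb, map_smul, Finsupp.linearCombination_single]
    show b • lam (MonoidAlgebra.single g 1) = b • v g
    rw [hlam g, hv]
  have hinj : Function.Injective lam := by
    intro x y hxy
    have hsub : lam (x - y) = 0 := by rw [map_sub, hxy, sub_self]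
    have h0 : Finsupp.linearCombination ℂ v (x - y).coeff = 0 := by
      rw [← hsub]
      exact (DFunLike.congr_fun hrep (x - y)).symm
    have := linearIndependent_iff.mp hLI (x - y).coeff h0
    exact sub_eq_zero.mp (MonoidAlgebra.coeff_eq_zero.mp this)
  exact hinj
end

section
/- Let 𝕋 denote the circle group (the unit complex numbers, Mathlib's Circle), let N be the subgroup of Π_{i∈I} 𝕋 consisting of the families equal to 1 for all but finitely many i ∈ I, and let Ω^ut_{I;ℂ} := (Π_{i∈I} 𝕋)/N. Let ℂ^{⊗I}_ut denote the ℂ-linear span in ⨂_{i∈I} ℂ of {⊗α : α ∈ Π_{i∈I} 𝕋} (this span is a unital ℂ-subalgebra). Then there exists an injective ℂ-algebra homomorphism Φ from the group algebra MonoidAlgebra ℂ Ω^ut_{I;ℂ} into ⨂_{i∈I} ℂ whose range is exactly ℂ^{⊗I}_ut and such that for every α ∈ Π_{i∈I} 𝕋, Φ(single [α] 1) is a scalar multiple of ⊗α by a complex number of modulus 1. In particular, ℂ^{⊗I}_ut is isomorphic as a ℂ-algebra to MonoidAlgebra ℂ Ω^ut_{I;ℂ}. -/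
open scoped TensorProduct

/-- The subgroup `N` of `Π_{i∈I} 𝕋` consisting of the families that equal `1` at all but
finitely many coordinates. -/
noncomputable def circleFinSupport (I : Type*) : Subgroup (∀ _ : I, Circle) where
  carrier := {α | {i | α i ≠ 1}.Finite}
  one_mem' := by simp
  mul_mem' := by
    intro a b ha hb
    refine (ha.union hb).subset fun i hi => ?_
    by_cases h1 : a i = 1
    · exact Or.inr fun e => hi (by rw [Pi.mul_apply, h1, e, one_mul])
    · exact Or.inl h1
  inv_mem' := by
    intro a ha
    exact ha.subset fun i hi => fun e => hi (by rw [Pi.inv_apply, e, inv_one])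

/-- The span `ℂ^{⊗I}_ut` of the elementary tensors of families of unit complex numbers
inside `⨂_{i∈I} ℂ`. -/
noncomputable def unitaryTensorSpan (I : Type*) : Submodule ℂ (⨂[ℂ] _ : I, ℂ) :=
  Submodule.span ℂ {t | ∃ α : ∀ _ : I, Circle,
    t = PiTensorProduct.tprod ℂ (fun i => (α i : ℂ))}

namespace OmegaAux

universe u
variable {I : Type u}

open PiTensorProduct

/-! ### The finite-support product character and its extension -/

/-- The product of the entries of a finitely supported family of unit complex numbers. -/
noncomputable def chi (I : Type u) : (circleFinSupport I) →* Circle where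
  toFun a := ∏ᶠ i, (a : ∀ _ : I, Circle) i
  map_one' := by simp
  map_mul' a b := by
    have ha : (Function.mulSupport fun i => (a : ∀ _ : I, Circle) i).Finite := a.2
    have hb : (Function.mulSupport fun i => (b : ∀ _ : I, Circle) i).Finite := b.2
    simp only [Subgroup.coe_mul, Pi.mul_apply]
    exact finprod_mul_distrib ha hb

lemma circle_exp_zpow (n : ℤ) (r : ℝ) : Circle.exp ((n : ℝ) * r) = Circle.exp r ^ n := by
  have h := map_zsmul Circle.expHom n r
  simpa [zsmul_eq_mul] using congrArg Additive.toMul h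

noncomputable instance : DivisibleBy (Additive Circle) ℤ where
  div a n := Additive.ofMul (Circle.exp (Complex.arg (Additive.toMul a : Circle) / (n : ℝ)))
  div_zero a := by simp [Circle.exp_zero]
  div_cancel {n} a hn := by
    apply Additive.toMul.injective
    have hn' : (n : ℝ) ≠ 0 := Int.cast_ne_zero.mpr hn
    show Circle.exp (Complex.arg (Additive.toMul a : Circle) / (n : ℝ)) ^ n = Additive.toMul a
    rw [← circle_exp_zpow, mul_div_cancel₀ _ hn', Circle.exp_arg]

/-- Since `𝕋` is a divisible (hence injective) abelian group, the character `chi` on the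
finite-support subgroup extends to the whole product group. -/
lemma exists_chiExt (I : Type u) :
    ∃ χt : (∀ _ : I, Circle) →* Circle, ∀ a : circleFinSupport I, χt a = chi I a := by
  have hInj : Module.Injective ℤ (ULift.{u} (Additive Circle)) :=
    Module.ulift_injective_of_injective (R := ℤ)
      ((Module.Baer.of_divisible (Additive Circle)).injective)
  let f : Additive (circleFinSupport I) →ₗ[ℤ] Additive (∀ _ : I, Circle) :=
    (MonoidHom.toAdditive (circleFinSupport I).subtype).toIntLinearMap
  have hf : Function.Injective f := fun a b hab => by
    have h2 : ((Additive.toMul a : circleFinSupport I) : ∀ _ : I, Circle)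
        = (Additive.toMul b : circleFinSupport I) := congrArg Additive.toMul hab
    exact Additive.toMul.injective (Subtype.ext h2)
  let g : Additive (circleFinSupport I) →ₗ[ℤ] ULift.{u} (Additive Circle) :=
    ULift.moduleEquiv.symm.toLinearMap ∘ₗ (MonoidHom.toAdditive (chi I)).toIntLinearMap
  obtain ⟨h, hh⟩ := hInj.out f hf g
  refine ⟨MonoidHom.toAdditive.symm
    ((ULift.moduleEquiv.toLinearMap ∘ₗ h).toAddMonoidHom), fun a => ?_⟩
  have h3 := congrArg (fun z : ULift.{u} (Additive Circle) => Additive.toMul z.down)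
    (hh (Additive.ofMul a))
  exact h3

/-! ### A separating family of multilinear functionals -/

open scoped Classical in
/-- `∏_{j∈S} F j` when `S` is finite, `0` otherwise. -/
noncomputable def Qprod (S : Set I) (F : I → ℂ) : ℂ :=
  if h : S.Finite then ∏ j ∈ h.toFinset, F j else 0

lemma Qprod_congr {S T : Set I} (h : S = T) {F G : I → ℂ} (hFG : ∀ j ∈ T, F j = G j) :
    Qprod S F = Qprod T G := by
  subst h
  unfold Qprod
  split_ifs with h1
  · exact Finset.prod_congr rfl fun j hj => hFG j (h1.mem_toFinset.mp hj)
  · rfl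

lemma Qprod_eq_zero {S : Set I} (h : ¬ S.Finite) (F : I → ℂ) : Qprod S F = 0 := dif_neg h

lemma Qprod_empty (F : I → ℂ) : Qprod (∅ : Set I) F = 1 := by
  unfold Qprod
  rw [dif_pos Set.finite_empty, Finset.prod_eq_one]
  intro j hj
  simp at hj

lemma Qprod_insert {S : Set I} (hS : S.Finite) {i : I} (hi : i ∉ S) (F : I → ℂ) :
    Qprod (insert i S) F = F i * Qprod S F := by
  unfold Qprod
  rw [dif_pos (hS.insert i), dif_pos hS]
  classical
  have : (hS.insert i).toFinset = insert i hS.toFinset := by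
    ext j; simp
  rw [this, Finset.prod_insert (by simpa using hi)]

/-- The coordinatewise "ratio to `β`" functional. -/
noncomputable def Lfun (β : ∀ _ : I, Circle) (f : I → ℂ) : ℂ :=
  Qprod {i | f i ≠ (β i : ℂ)} (fun i => f i / (β i : ℂ))

noncomputable def Pfun (β : ∀ _ : I, Circle) (f : I → ℂ) (i : I) : ℂ :=
  Qprod {j | j ≠ i ∧ f j ≠ (β j : ℂ)} (fun j => f j / (β j : ℂ))

lemma Pfun_update [DecidableEq I] (β : ∀ _ : I, Circle) (f : I → ℂ) (i : I) (x : ℂ) :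
    Pfun β (Function.update f i x) i = Pfun β f i := by
  refine Qprod_congr ?_ fun j hj => by rw [Function.update_of_ne hj.1]
  ext j
  by_cases hj : j = i <;> simp [hj, Function.update_of_ne]

lemma Lfun_factor [DecidableEq I] (β : ∀ _ : I, Circle) (f : I → ℂ) (i : I) :
    Lfun β f = Pfun β f i * (f i / (β i : ℂ)) := by
  by_cases hx : f i = (β i : ℂ)
  · have hdiv : f i / (β i : ℂ) = 1 := by rw [hx]; exact div_self (Circle.coe_ne_zero _)
    have hset : {j | f j ≠ (β j : ℂ)} = {j | j ≠ i ∧ f j ≠ (β j : ℂ)} := by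
      ext j
      exact ⟨fun hj => ⟨fun e => hj (by rw [e, hx]), hj⟩, fun hj => hj.2⟩
    rw [hdiv, mul_one]
    exact Qprod_congr hset fun _ _ => rfl
  · have hset : {j | f j ≠ (β j : ℂ)} = insert i {j | j ≠ i ∧ f j ≠ (β j : ℂ)} := by
      ext j
      by_cases hj : j = i <;> simp [hj, hx]
    by_cases h : {j | j ≠ i ∧ f j ≠ (β j : ℂ)}.Finite
    · rw [show Lfun β f = Qprod (insert i {j | j ≠ i ∧ f j ≠ (β j : ℂ)})
          (fun j => f j / (β j : ℂ)) from Qprod_congr hset fun _ _ => rfl,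
        Qprod_insert h (by simp) _]
      exact mul_comm _ _
    · have hS : ¬ {j | f j ≠ (β j : ℂ)}.Finite := fun hS =>
        h (hS.subset (by rw [hset]; exact Set.subset_insert _ _))
      rw [show Lfun β f = 0 from Qprod_eq_zero hS _,
        show Pfun β f i = 0 from Qprod_eq_zero h _, zero_mul]

/-- `Lfun β` as a multilinear map. -/
noncomputable def Lmap (β : ∀ _ : I, Circle) : MultilinearMap ℂ (fun _ : I => ℂ) ℂ where
  toFun := Lfun β
  map_update_add' := by
    intro _ m i x y
    rw [Lfun_factor β _ i, Lfun_factor β _ i, Lfun_factor β _ i,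
      Pfun_update, Pfun_update, Pfun_update, Function.update_self, Function.update_self,
      Function.update_self]
    ring
  map_update_smul' := by
    intro _ m i c x
    rw [Lfun_factor β _ i, Lfun_factor β _ i, Pfun_update, Pfun_update,
      Function.update_self, Function.update_self, smul_eq_mul, smul_eq_mul]
    ring

lemma Lfun_self (β : ∀ _ : I, Circle) : Lfun β (fun i => (β i : ℂ)) = 1 := by
  have h0 : {i | (fun i => (β i : ℂ)) i ≠ (β i : ℂ)} = (∅ : Set I) := by ext; simp
  rw [show Lfun β (fun i => (β i : ℂ)) = Qprod (∅ : Set I) (fun i => (β i : ℂ) / (β i : ℂ))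
    from Qprod_congr h0 fun _ _ => rfl, Qprod_empty]

lemma Lfun_orth (β α : ∀ _ : I, Circle) (h : ¬ {i | α i ≠ β i}.Finite) :
    Lfun β (fun i => (α i : ℂ)) = 0 := by
  have hset : {i | (fun i => (α i : ℂ)) i ≠ (β i : ℂ)} = {i | α i ≠ β i} := by
    ext i
    exact not_iff_not.mpr Circle.coe_inj
  rw [show Lfun β (fun i => (α i : ℂ)) = Qprod {i | α i ≠ β i} (fun i => (α i : ℂ) / (β i : ℂ))
    from Qprod_congr hset fun _ _ => rfl, Qprod_eq_zero h]

/-! ### Elementary unitary tensors as units -/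

/-- The elementary tensors of unit families, as units of `⨂_{i∈I} ℂ`. -/
noncomputable def tprodUnit (I : Type u) :
    (∀ _ : I, Circle) →* (⨂[ℂ] _ : I, ℂ)ˣ where
  toFun α :=
    { val := tprod ℂ (fun i => (α i : ℂ))
      inv := tprod ℂ (fun i => (((α i)⁻¹ : Circle) : ℂ))
      val_inv := by
        rw [tprod_mul_tprod]
        rw [one_def]
        congr 1
        funext i
        show (α i : ℂ) * (((α i)⁻¹ : Circle) : ℂ) = 1
        rw [← Circle.coe_mul, mul_inv_cancel, Circle.coe_one]
      inv_val := by
        rw [tprod_mul_tprod]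
        rw [one_def]
        congr 1
        funext i
        show (((α i)⁻¹ : Circle) : ℂ) * (α i : ℂ) = 1
        rw [← Circle.coe_mul, inv_mul_cancel, Circle.coe_one] }
  map_one' := by
    ext
    show tprod ℂ (fun i => (((1 : ∀ _ : I, Circle)) i : ℂ)) = 1
    rw [one_def]
    rfl
  map_mul' α β := by
    ext
    show tprod ℂ (fun i => (((α * β) i : Circle) : ℂ)) = _
    rw [Units.val_mul]
    show _ = tprod ℂ (fun i => (α i : ℂ)) * tprod ℂ (fun i => (β i : ℂ))
    rw [tprod_mul_tprod]
    rfl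

lemma tprod_of_finSupport (a : ∀ _ : I, Circle) (ha : a ∈ circleFinSupport I) :
    tprod ℂ (fun i => (a i : ℂ)) = ((chi I ⟨a, ha⟩ : Circle) : ℂ) • 1 := by
  classical
  have hfin : {i | a i ≠ 1}.Finite := ha
  have h1 : (fun i => (a i : ℂ))
      = hfin.toFinset.piecewise (fun i => (a i : ℂ) • (1 : ℂ)) (fun _ => (1 : ℂ)) := by
    funext i
    by_cases h : a i = 1
    · rw [Finset.piecewise_eq_of_notMem]
      · rw [h, Circle.coe_one]
      · simp [h]
    · rw [Finset.piecewise_eq_of_mem]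
      · rw [smul_eq_mul, mul_one]
      · simp [h]
  rw [h1, MultilinearMap.map_piecewise_smul (PiTensorProduct.tprod ℂ) _ _ _]
  have h2 : (chi I ⟨a, ha⟩ : Circle) = ∏ i ∈ hfin.toFinset, a i := by
    refine finprod_eq_prod_of_mulSupport_subset _ ?_
    intro i hi
    simpa using hi
  have h3 : ((chi I ⟨a, ha⟩ : Circle) : ℂ) = ∏ i ∈ hfin.toFinset, (a i : ℂ) := by
    rw [h2]
    exact map_prod Circle.coeHom _ _
  rw [h3]
  rfl

end OmegaAux

/-- There is an injective algebra homomorphism from the group algebra of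
`Ω^ut_{I;ℂ} = (Π_{i∈I} 𝕋)/N` into `⨂_{i∈I} ℂ` whose range is exactly `ℂ^{⊗I}_ut` and which
sends each class `[α]` to a unimodular scalar multiple of `⊗α`. -/
theorem monoidAlgebra_omega_iso_unitaryTensorSpan (I : Type*) [Infinite I] :
    ∃ Φ : MonoidAlgebra ℂ ((∀ _ : I, Circle) ⧸ circleFinSupport I) →ₐ[ℂ] ⨂[ℂ] _ : I, ℂ,
      Function.Injective Φ ∧
      Set.range Φ = (unitaryTensorSpan I : Set (⨂[ℂ] _ : I, ℂ)) ∧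
      ∀ α : ∀ _ : I, Circle, ∃ c : ℂ, ‖c‖ = 1 ∧
        Φ (MonoidAlgebra.single (QuotientGroup.mk α) 1) =
          c • PiTensorProduct.tprod ℂ (fun i => (α i : ℂ)) := by
  classical
  obtain ⟨χt, hχt⟩ := OmegaAux.exists_chiExt I
  set N := circleFinSupport I
  set Ω := (∀ _ : I, Circle) ⧸ circleFinSupport I
  -- the unimodular-scalar monoid hom into the units
  let sU : Circle →* (⨂[ℂ] _ : I, ℂ)ˣ :=
    (Units.map (algebraMap ℂ (⨂[ℂ] _ : I, ℂ) : ℂ →* (⨂[ℂ] _ : I, ℂ))).comp Circle.toUnits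
  let G : (∀ _ : I, Circle) →* (⨂[ℂ] _ : I, ℂ)ˣ :=
    MonoidHom.mk' (fun α => (sU (χt α))⁻¹ * OmegaAux.tprodUnit I α) (fun a b => by
      rw [map_mul, map_mul, map_mul, mul_inv_rev]; ext1; simp only [Units.val_mul]; ring)
  have hGval : ∀ α : ∀ _ : I, Circle,
      ((G α : (⨂[ℂ] _ : I, ℂ)ˣ) : ⨂[ℂ] _ : I, ℂ)
        = ((((χt α)⁻¹ : Circle)) : ℂ) • PiTensorProduct.tprod ℂ (fun i => (α i : ℂ)) := by
    intro α
    have h1 : G α = sU ((χt α)⁻¹) * OmegaAux.tprodUnit I α := by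
      show (sU (χt α))⁻¹ * OmegaAux.tprodUnit I α = sU ((χt α)⁻¹) * OmegaAux.tprodUnit I α
      rw [map_inv]
    rw [h1, Units.val_mul]
    show (algebraMap ℂ (⨂[ℂ] _ : I, ℂ) ((((χt α)⁻¹ : Circle)) : ℂ))
      * (PiTensorProduct.tprod ℂ (fun i => (α i : ℂ))) = _
    rw [← Algebra.smul_def]
  have hG1 : N ≤ G.ker := by
    intro a ha
    rw [MonoidHom.mem_ker]
    ext
    rw [hGval a, OmegaAux.tprod_of_finSupport a ha, hχt ⟨a, ha⟩, smul_smul, ← Circle.coe_mul,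
      inv_mul_cancel, Circle.coe_one, one_smul]
    rfl
  let gbar : Ω →* (⨂[ℂ] _ : I, ℂ) :=
    (Units.coeHom _).comp (QuotientGroup.lift N G hG1)
  have hgbar : ∀ α : ∀ _ : I, Circle, gbar (QuotientGroup.mk α)
      = ((((χt α)⁻¹ : Circle)) : ℂ) • PiTensorProduct.tprod ℂ (fun i => (α i : ℂ)) := by
    intro α
    show ((QuotientGroup.lift N G hG1 (QuotientGroup.mk α) : (⨂[ℂ] _ : I, ℂ)ˣ) :
      (⨂[ℂ] _ : I, ℂ)) = _
    rw [QuotientGroup.lift_mk']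
    exact hGval α
  let Φ : MonoidAlgebra ℂ Ω →ₐ[ℂ] (⨂[ℂ] _ : I, ℂ) := MonoidAlgebra.lift ℂ _ Ω gbar
  have hΦsingle : ∀ (ω : Ω) (c : ℂ), Φ (MonoidAlgebra.single ω c) = c • gbar ω := fun ω c =>
    MonoidAlgebra.lift_single gbar ω c
  -- representatives
  have hout : ∀ ω : Ω, QuotientGroup.mk (Quotient.out ω) = ω := fun ω => Quotient.out_eq' ω
  -- vanishing of Φ implies vanishing of coefficients
  have hzero : ∀ x : MonoidAlgebra ℂ Ω, Φ x = 0 → x = 0 := by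
    intro x hx
    refine MonoidAlgebra.coeff_injective (Finsupp.ext fun ω₀ => ?_)
    show x.coeff ω₀ = 0
    set β : ∀ _ : I, Circle := Quotient.out ω₀ with hβ
    set Λ : (⨂[ℂ] _ : I, ℂ) →ₗ[ℂ] ℂ := PiTensorProduct.lift (OmegaAux.Lmap β) with hΛ
    have hι : ∀ ω : Ω, Λ (gbar ω) = ((((χt (Quotient.out ω))⁻¹ : Circle)) : ℂ)
        * OmegaAux.Lfun β (fun i => ((Quotient.out ω) i : ℂ)) := by
      intro ω
      conv_lhs => rw [← hout ω]
      rw [hgbar, map_smul, hΛ, PiTensorProduct.lift.tprod, smul_eq_mul]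
      rfl
    have horth : ∀ ω : Ω, ω ≠ ω₀ → Λ (gbar ω) = 0 := by
      intro ω hne
      rw [hι ω]
      have hdiff : ¬ {i | (Quotient.out ω) i ≠ β i}.Finite := by
        intro hfin
        apply hne
        rw [← hout ω, ← hout ω₀, ← hβ]
        refine QuotientGroup.eq.mpr ?_
        refine hfin.subset fun i hi => ?_
        simp only [Set.mem_setOf_eq, Pi.mul_apply, Pi.inv_apply] at hi ⊢
        intro e
        apply hi
        rw [e, inv_mul_cancel]
      rw [OmegaAux.Lfun_orth β _ hdiff, mul_zero]
    have hΛΦ : Λ (Φ x) = x.coeff ω₀ * ((((χt β)⁻¹ : Circle)) : ℂ) := by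
      rw [MonoidAlgebra.lift_apply, map_finsuppSum]
      have : (x.coeff.sum fun ω c => Λ (c • gbar ω)) = x.coeff.sum fun ω c => c • Λ (gbar ω) :=
        Finsupp.sum_congr fun ω _ => map_smul Λ _ _
      rw [this, Finsupp.sum_eq_single ω₀
        (fun ω _ hne => by rw [horth ω hne, smul_zero])
        (fun _ => by rw [zero_smul])]
      rw [hι ω₀, ← hβ, OmegaAux.Lfun_self, mul_one, smul_eq_mul]
    rw [hx, map_zero] at hΛΦ
    have hc : ((((χt β)⁻¹ : Circle)) : ℂ) ≠ 0 := Circle.coe_ne_zero _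
    exact (mul_eq_zero.mp hΛΦ.symm).resolve_right hc
  have hinj : Function.Injective Φ := by
    intro a b hab
    have := hzero (a - b) (by rw [map_sub, hab, sub_self])
    exact sub_eq_zero.mp this
  have hrange : Set.range Φ = (unitaryTensorSpan I : Set (⨂[ℂ] _ : I, ℂ)) := by
    apply Set.eq_of_subset_of_subset
    · rintro y ⟨x, rfl⟩
      show Φ x ∈ unitaryTensorSpan I
      rw [MonoidAlgebra.lift_apply]
      refine Submodule.sum_mem _ fun ω _ => Submodule.smul_mem _ _ ?_
      rw [← hout ω, hgbar]
      exact Submodule.smul_mem _ _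
        (Submodule.subset_span ⟨Quotient.out (QuotientGroup.mk (Quotient.out ω)), by rw [hout]⟩)
    · intro y hy
      have hle : unitaryTensorSpan I ≤ LinearMap.range Φ.toLinearMap := by
        rw [unitaryTensorSpan, Submodule.span_le]
        rintro t ⟨α, rfl⟩
        refine ⟨MonoidAlgebra.single (QuotientGroup.mk α) (((χt α : Circle)) : ℂ), ?_⟩
        show Φ (MonoidAlgebra.single _ _) = _
        rw [hΦsingle, hgbar, smul_smul, ← Circle.coe_mul, mul_inv_cancel, Circle.coe_one, one_smul]
      obtain ⟨x, hxy⟩ := hle hy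
      exact ⟨x, hxy⟩
  refine ⟨Φ, hinj, hrange, fun α => ⟨((((χt α)⁻¹ : Circle)) : ℂ), ?_, ?_⟩⟩
  · rw [Circle.norm_coe]
  · rw [hΦsingle, one_smul, hgbar]
end

section
/- Let (A_i)_{i∈I} be unital *-algebras over ℂ and suppose there is a finite subset F₀ ⊆ I such that for every i ∈ I∖F₀, A_i equals the ℂ-linear span of its unitary elements. Then for every u ∈ Π_{i∈I} unitary A_i, the class [u] lies in the center of the group Ω^ut_{I;A} if and only if u_i lies in the center of A_i for all but finitely many i ∈ I. Consequently, Ω^ut_{I;A} is equal to its center (i.e. is abelian) if and only if all but finitely many of the A_i are commutative. -/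
open scoped TensorProduct

variable {I : Type*} (A : I → Type*) [∀ i, Ring (A i)] [∀ i, Algebra ℂ (A i)]
  [∀ i, StarRing (A i)] [∀ i, StarModule ℂ (A i)]

/-- The normal subgroup `N` of `Π_{i∈I} U(A_i)` consisting of the families of unitaries
that equal `1` at all but finitely many coordinates. -/
def unitaryFinSupport : Subgroup (∀ i, unitary (A i)) where
  carrier := {u | {i | u i ≠ 1}.Finite}
  one_mem' := by simp
  mul_mem' := by
    intro a b ha hb
    refine (ha.union hb).subset fun i hi => ?_
    by_cases h1 : a i = 1
    · exact Or.inr fun e => hi (by rw [Pi.mul_apply, h1, e, one_mul])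
    · exact Or.inl h1
  inv_mem' := by
    intro a ha
    exact ha.subset fun i hi => fun e => hi (by rw [Pi.inv_apply, e, inv_one])

instance unitaryFinSupport_normal : (unitaryFinSupport A).Normal := by
  constructor
  intro n hn g
  refine hn.subset fun i hi => ?_
  intro e
  exact hi (by rw [Pi.mul_apply, Pi.mul_apply, Pi.inv_apply, e, mul_one, mul_inv_cancel])

lemma mem_unitaryFinSupport (x : ∀ i, unitary (A i)) :
    x ∈ unitaryFinSupport A ↔ {i | x i ≠ 1}.Finite := Iff.rfl

lemma unitary_center_of_comm {B : Type*} [Ring B] [Algebra ℂ B] [StarRing B] [StarModule ℂ B]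
    (hB : Submodule.span ℂ (unitary B : Set B) = ⊤)
    (u : B) (h : ∀ v : unitary B, (v : B) * u = u * (v : B)) : u ∈ Set.center B := by
  rw [Semigroup.mem_center_iff]
  intro g
  have hle : Submodule.span ℂ (unitary B : Set B) ≤
      Subalgebra.toSubmodule (Subalgebra.centralizer ℂ {u}) := by
    refine Submodule.span_le.2 fun x hx => ?_
    refine (Subalgebra.mem_centralizer_iff ℂ).2 fun y hy => ?_
    rcases hy with rfl
    exact (h ⟨x, hx⟩).symm
  rw [hB] at hle
  have hg := (Subalgebra.mem_centralizer_iff ℂ).1 (hle (Submodule.mem_top : g ∈ ⊤))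
  exact (hg u rfl).symm

lemma exists_noncentral_unitary {B : Type*} [Ring B] [Algebra ℂ B] [StarRing B] [StarModule ℂ B]
    (hB : Submodule.span ℂ (unitary B : Set B) = ⊤)
    (hnc : ¬ ∀ a b : B, a * b = b * a) :
    ∃ u : unitary B, (u : B) ∉ Set.center B := by
  by_contra h
  push_neg at h
  apply hnc
  intro a b
  have hle : Submodule.span ℂ (unitary B : Set B) ≤
      Subalgebra.toSubmodule (Subalgebra.center ℂ B) := by
    refine Submodule.span_le.2 fun x hx => ?_
    show x ∈ Subalgebra.center ℂ B
    rw [Subalgebra.mem_center_iff]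
    intro g
    exact Semigroup.mem_center_iff.1 (h ⟨x, hx⟩) g
  rw [hB] at hle
  have ha := (Subalgebra.mem_center_iff (R := ℂ)).1 (hle (Submodule.mem_top : a ∈ ⊤))
  exact (ha b).symm

/-- For unital `*`-algebras `A_i` all but finitely many of which are spanned by their
unitaries, a class `[u]` is central in `Ω^ut_{I;A}` iff `u_i` is central in `A_i` for all but
finitely many `i`; consequently `Ω^ut_{I;A}` is abelian iff all but finitely many `A_i`
are commutative. -/
theorem center_omega_ut {I : Type*} [Infinite I]
    (A : I → Type*) [∀ i, Ring (A i)] [∀ i, Algebra ℂ (A i)]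
    [∀ i, StarRing (A i)] [∀ i, StarModule ℂ (A i)]
    (F₀ : Finset I)
    (hA : ∀ i ∉ F₀, Submodule.span ℂ (unitary (A i) : Set (A i)) = ⊤) :
    (∀ u : ∀ i, unitary (A i),
      ((QuotientGroup.mk u : (∀ i, unitary (A i)) ⧸ unitaryFinSupport A) ∈
          Subgroup.center ((∀ i, unitary (A i)) ⧸ unitaryFinSupport A) ↔
        {i | (u i : A i) ∉ Set.center (A i)}.Finite)) ∧
    (Subgroup.center ((∀ i, unitary (A i)) ⧸ unitaryFinSupport A) = ⊤ ↔
      {i | ¬ ∀ a b : A i, a * b = b * a}.Finite) := by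
  classical
  have key : ∀ u : ∀ i, unitary (A i),
      ((QuotientGroup.mk u : (∀ i, unitary (A i)) ⧸ unitaryFinSupport A) ∈
          Subgroup.center ((∀ i, unitary (A i)) ⧸ unitaryFinSupport A) ↔
        {i | (u i : A i) ∉ Set.center (A i)}.Finite) := by
    intro u
    constructor
    · intro h
      by_contra hinf
      replace hinf : {i | (u i : A i) ∉ Set.center (A i)}.Infinite := hinf
      have hchoice : ∀ i, i ∉ F₀ → (u i : A i) ∉ Set.center (A i) →
          ∃ v : unitary (A i), ¬ ((v : A i) * (u i : A i) = (u i : A i) * (v : A i)) := by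
        intro i hi hnc
        by_contra hc
        push_neg at hc
        exact hnc (unitary_center_of_comm (hA i hi) _ hc)
      let v : ∀ i, unitary (A i) := fun i =>
        if h' : i ∉ F₀ ∧ (u i : A i) ∉ Set.center (A i) then (hchoice i h'.1 h'.2).choose else 1
      have hv : ∀ i, i ∉ F₀ → (u i : A i) ∉ Set.center (A i) →
          ¬ ((v i : A i) * (u i : A i) = (u i : A i) * (v i : A i)) := by
        intro i h1 h2
        simp only [v, dif_pos (And.intro h1 h2)]
        exact (hchoice i h1 h2).choose_spec
      have hcomm := Subgroup.mem_center_iff.1 h (QuotientGroup.mk v)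
      rw [← QuotientGroup.mk_mul, ← QuotientGroup.mk_mul, QuotientGroup.eq,
        mem_unitaryFinSupport] at hcomm
      have hfin : {i | v i * u i ≠ u i * v i}.Finite := by
        refine hcomm.subset fun i hi => ?_
        intro heq1
        apply hi
        rw [Pi.mul_apply, Pi.inv_apply, Pi.mul_apply, Pi.mul_apply, inv_mul_eq_one] at heq1
        exact heq1
      refine (hinf.diff F₀.finite_toSet) (hfin.subset ?_)
      rintro i ⟨h2, h1⟩
      intro heq
      exact hv i h1 h2 (congrArg Subtype.val heq)
    · intro hfin
      rw [Subgroup.mem_center_iff]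
      intro g
      obtain ⟨w, rfl⟩ := QuotientGroup.mk_surjective g
      rw [← QuotientGroup.mk_mul, ← QuotientGroup.mk_mul, QuotientGroup.eq,
        mem_unitaryFinSupport]
      refine hfin.subset fun i hi => ?_
      intro hc
      apply hi
      rw [Pi.mul_apply, Pi.inv_apply, Pi.mul_apply, Pi.mul_apply, inv_mul_eq_one,
        Subtype.ext_iff]
      push_cast
      exact Semigroup.mem_center_iff.1 hc (w i : A i)
  refine ⟨key, ?_⟩
  constructor
  · intro htop
    by_contra hinf
    replace hinf : {i | ¬ ∀ a b : A i, a * b = b * a}.Infinite := hinf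
    have hchoice : ∀ i, i ∉ F₀ → (¬ ∀ a b : A i, a * b = b * a) →
        ∃ w : unitary (A i), (w : A i) ∉ Set.center (A i) := fun i hi hnc =>
      exists_noncentral_unitary (hA i hi) hnc
    let u : ∀ i, unitary (A i) := fun i =>
      if h' : i ∉ F₀ ∧ ¬ ∀ a b : A i, a * b = b * a then (hchoice i h'.1 h'.2).choose else 1
    have hu : ∀ i, i ∉ F₀ → (¬ ∀ a b : A i, a * b = b * a) →
        (u i : A i) ∉ Set.center (A i) := by
      intro i h1 h2
      simp only [u, dif_pos (And.intro h1 h2)]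
      exact (hchoice i h1 h2).choose_spec
    have hcent : (QuotientGroup.mk u : (∀ i, unitary (A i)) ⧸ unitaryFinSupport A) ∈
        Subgroup.center _ := by rw [htop]; trivial
    have hfin := (key u).1 hcent
    refine (hinf.diff F₀.finite_toSet) (hfin.subset ?_)
    rintro i ⟨h2, h1⟩
    exact hu i h1 h2
  · intro hfin
    rw [Subgroup.eq_top_iff']
    intro g
    obtain ⟨w, rfl⟩ := QuotientGroup.mk_surjective g
    refine (key w).2 (hfin.subset fun i hi => ?_)
    intro hcomm
    apply hi
    rw [Semigroup.mem_center_iff]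
    intro g'
    exact hcomm g' (w i : A i)
end

section
/- Let (A_i)_{i∈I} be unital *-algebras over ℂ and suppose there is a finite subset F₀ ⊆ I such that for every i ∈ I∖F₀, A_i equals the ℂ-linear span of its unitary elements. If u ∈ Π_{i∈I} unitary A_i is such that the set {i ∈ I : u_i does not lie in the center of A_i} is infinite, then the conjugacy class {g·[u]·g⁻¹ : g ∈ Ω^ut_{I;A}} of [u] in Ω^ut_{I;A} is an infinite set. -/
open scoped TensorProduct

variable {I : Type*} (A : I → Type*) [∀ i, Ring (A i)] [∀ i, Algebra ℂ (A i)]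
  [∀ i, StarRing (A i)] [∀ i, StarModule ℂ (A i)]

/-- If `u_i` fails to be central in `A_i` for infinitely many `i`, then the conjugacy class
of `[u]` in `Ω^ut_{I;A}` is infinite (assuming all but finitely many `A_i` are spanned by
their unitaries). -/
theorem conjugacy_class_infinite {I : Type*} [Infinite I]
    (A : I → Type*) [∀ i, Ring (A i)] [∀ i, Algebra ℂ (A i)]
    [∀ i, StarRing (A i)] [∀ i, StarModule ℂ (A i)]
    (F₀ : Finset I)
    (hA : ∀ i ∉ F₀, Submodule.span ℂ (unitary (A i) : Set (A i)) = ⊤)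
    (u : ∀ i, unitary (A i))
    (hu : {i | (u i : A i) ∉ Set.center (A i)}.Infinite) :
    {x : (∀ i, unitary (A i)) ⧸ unitaryFinSupport A |
      ∃ g : (∀ i, unitary (A i)) ⧸ unitaryFinSupport A,
        x = g * QuotientGroup.mk u * g⁻¹}.Infinite := by
  classical
  set S : Set I := {i | (u i : A i) ∉ Set.center (A i)} \ ↑F₀ with hSdef
  have hS : S.Infinite := hu.diff F₀.finite_toSet
  have key : ∀ i ∈ S, ∃ v : unitary (A i), v * u i ≠ u i * v := by
    rintro i ⟨hi, hiF⟩
    by_contra h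
    push_neg at h
    apply hi
    rw [Set.mem_center_iff]
    constructor
    · intro g
      have hg : g ∈ Submodule.span ℂ (unitary (A i) : Set (A i)) := by
        rw [hA i hiF]; trivial
      induction hg using Submodule.span_induction with
      | mem x hx =>
        have := h ⟨x, hx⟩
        have := congrArg (Subtype.val) this
        exact (by simpa using this.symm : (u i : A i) * x = x * u i)
      | zero => simp
      | add x y _ _ hx hy => exact hx.add_right hy
      | smul c x _ hx => exact hx.smul_right c
    all_goals intro a b; rw [mul_assoc]
  choose! v hv using key
  have hvi : ∀ i ∈ S, (v i) * u i * (v i)⁻¹ ≠ u i := by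
    intro i hi h
    exact hv i hi (by rw [mul_inv_eq_iff_eq_mul] at h; rw [h])
  -- an injection ℕ × ℕ into S
  let e : ℕ × ℕ → I := fun p => ((hS.natEmbedding S) ((Denumerable.eqv (ℕ × ℕ)) p) : I)
  have he : Function.Injective e :=
    Subtype.val_injective.comp ((hS.natEmbedding S).injective.comp
      (Denumerable.eqv (ℕ × ℕ)).injective)
  have heS : ∀ p, e p ∈ S := fun p => ((hS.natEmbedding S) _).2
  let T : ℕ → Set I := fun n => Set.range (fun k => e (n, k))
  have hTS : ∀ n, T n ⊆ S := by rintro n i ⟨k, rfl⟩; exact heS _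
  have hTdisj : ∀ m n, m ≠ n → ∀ i, i ∈ T m → i ∉ T n := by
    rintro m n hmn i ⟨k, rfl⟩ ⟨k', hk'⟩
    have h' := he hk'.symm
    simp only [Prod.mk.injEq] at h'
    exact hmn h'.1
  have hTinf : ∀ n, (T n).Infinite :=
    fun n => Set.infinite_range_of_injective (fun k k' h => by
      simpa using congrArg Prod.snd (he h))
  let g : ℕ → ∀ i, unitary (A i) := fun n i => if i ∈ T n then v i else 1
  apply Set.infinite_of_injective_forall_mem
    (f := fun n : ℕ => (QuotientGroup.mk (g n * u * (g n)⁻¹) :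
      (∀ i, unitary (A i)) ⧸ unitaryFinSupport A))
  · intro m n hmn
    by_contra hne
    rw [QuotientGroup.eq] at hmn
    have hmem : {i | ((g m * u * (g m)⁻¹)⁻¹ * (g n * u * (g n)⁻¹)) i ≠ 1}.Finite := hmn
    refine ((hTinf n).mono ?_) hmem
    intro i hi
    have h1 : g m i = 1 := by
      simp only [g, if_neg (hTdisj n m (Ne.symm hne) i hi)]
    have h2 : g n i = v i := by simp only [g, if_pos hi]
    simp only [Set.mem_setOf_eq, Pi.mul_apply, Pi.inv_apply, h1, h2,
      one_mul, mul_one, inv_one]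
    intro h
    rw [inv_mul_eq_one] at h
    exact hvi i (hTS n hi) h.symm
  · intro n
    exact ⟨QuotientGroup.mk (g n), by
      simp [QuotientGroup.mk_mul, QuotientGroup.mk_inv]⟩
end

section
/- Let n ∈ ℕ, λ : Fin n → ℂ, and let x⁽¹⁾, …, x⁽ⁿ⁾ ∈ Π_{i∈I} H_i satisfy ‖x⁽ᵏ⁾_i‖ ≤ 1 for every k and every i ∈ I. Then the complex number z := Σ_{k,l} conj(λ_k)·λ_l·h(x⁽ᵏ⁾, x⁽ˡ⁾) is a nonnegative real number: z.im = 0 and 0 ≤ z.re. -/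
open scoped TensorProduct Classical ComplexConjugate

/-- The form `h(x,y)`: the (finite) product `∏_{i∈I} ⟪x_i, y_i⟫` when `⟪x_i, y_i⟫ = 1` for
all but finitely many `i`, and `0` otherwise. -/
noncomputable def hform {I : Type*} (H : I → Type*) [∀ i, NormedAddCommGroup (H i)]
    [∀ i, InnerProductSpace ℂ (H i)] (x y : ∀ i, H i) : ℂ :=
  if {i | (inner ℂ (x i) (y i) : ℂ) ≠ 1}.Finite then ∏ᶠ i, (inner ℂ (x i) (y i) : ℂ) else 0

private lemma sum_swap3 {M : Type*} [AddCommMonoid M] {α β γ : Type*}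
    [Fintype α] [Fintype β] [Fintype γ] (t : α → β → γ → M) :
    ∑ k, ∑ l, ∑ m, t k l m = ∑ m, ∑ k, ∑ l, t k l m := by
  have h1 : ∀ k : α, (∑ l, ∑ m, t k l m) = ∑ m, ∑ l, t k l m := fun k => Finset.sum_comm
  simp only [h1]
  exact Finset.sum_comm

private lemma inner_eq_one_aux {E : Type*} [NormedAddCommGroup E] [InnerProductSpace ℂ E]
    {u v : E} (hu : ‖u‖ ≤ 1) (hv : ‖v‖ ≤ 1) (h : (inner ℂ u v : ℂ) = 1) : u = v := by
  have h1 : (1 : ℝ) ≤ ‖u‖ * ‖v‖ := by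
    have h2 := norm_inner_le_norm (𝕜 := ℂ) u v
    rw [h] at h2; simpa using h2
  have hu1 : ‖u‖ = 1 :=
    le_antisymm hu (by nlinarith [norm_nonneg u, norm_nonneg v])
  have hv1 : ‖v‖ = 1 :=
    le_antisymm hv (by nlinarith [norm_nonneg u, norm_nonneg v])
  exact (inner_eq_one_iff_of_norm_eq_one hu1 hv1).mp h

private lemma key_lemma {I : Type*} {H : I → Type*} [∀ i, NormedAddCommGroup (H i)]
    [∀ i, InnerProductSpace ℂ (H i)] {n : ℕ} (x : Fin n → ∀ i, H i) (S : Finset I)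
    (c : Fin n → ℂ) :
    (∑ k, ∑ l, conj (c k) * c l * ∏ i ∈ S, (inner ℂ (x k i) (x l i) : ℂ)).im = 0 ∧
      0 ≤ (∑ k, ∑ l, conj (c k) * c l * ∏ i ∈ S, (inner ℂ (x k i) (x l i) : ℂ)).re := by
  induction S using Finset.induction generalizing c with
  | empty =>
    have hw : (∑ k, ∑ l, conj (c k) * c l * ∏ i ∈ (∅ : Finset I), (inner ℂ (x k i) (x l i) : ℂ))
        = conj (∑ l, c l) * (∑ l, c l) := by
      rw [map_sum, Finset.sum_mul_sum]
      simp only [Finset.prod_empty, mul_one]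
    rw [hw, mul_comm, Complex.mul_conj]
    simp [Complex.normSq_nonneg]
  | @insert a S ha IH =>
    let V := Submodule.span ℂ (Set.range fun k => x k a)
    haveI : FiniteDimensional ℂ V :=
      FiniteDimensional.span_of_finite ℂ (Set.finite_range _)
    let b := stdOrthonormalBasis ℂ V
    let u' : Fin n → V := fun k => ⟨x k a, Submodule.subset_span (Set.mem_range_self k)⟩
    let C : Fin (Module.finrank ℂ V) → Fin n → ℂ := fun m k => (inner ℂ (b m) (u' k) : ℂ)
    have hinner : ∀ k l : Fin n, (inner ℂ (x k a) (x l a) : ℂ)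
        = ∑ m, conj (C m k) * C m l := by
      intro k l
      have h1 : (inner ℂ (u' k) (u' l) : ℂ) = (inner ℂ (x k a) (x l a) : ℂ) :=
        Submodule.coe_inner V (u' k) (u' l)
      rw [← h1, ← b.sum_inner_mul_inner (u' k) (u' l)]
      exact Finset.sum_congr rfl fun m _ => by rw [← inner_conj_symm]
    have hz : (∑ k, ∑ l, conj (c k) * c l * ∏ i ∈ insert a S, (inner ℂ (x k i) (x l i) : ℂ))
        = ∑ m, ∑ k, ∑ l, conj (C m k * c k) * (C m l * c l)
            * ∏ i ∈ S, (inner ℂ (x k i) (x l i) : ℂ) := by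
      rw [← sum_swap3]
      refine Finset.sum_congr rfl fun k _ => Finset.sum_congr rfl fun l _ => ?_
      rw [Finset.prod_insert ha, hinner k l, Finset.sum_mul, Finset.mul_sum]
      exact Finset.sum_congr rfl fun m _ => by simp only [map_mul]; ring
    constructor
    · rw [hz, Complex.im_sum]
      exact Finset.sum_eq_zero fun m _ => (IH (fun k => C m k * c k)).1
    · rw [hz, Complex.re_sum]
      exact Finset.sum_nonneg fun m _ => (IH (fun k => C m k * c k)).2

/-- For families of vectors of norm at most `1`, the quadratic expression
`Σ_{k,l} conj(λ_k)·λ_l·h(x⁽ᵏ⁾, x⁽ˡ⁾)` is a nonnegative real number. -/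
theorem hform_positive {I : Type*} [Infinite I] (H : I → Type*)
    [∀ i, NormedAddCommGroup (H i)] [∀ i, InnerProductSpace ℂ (H i)]
    (n : ℕ) (lam : Fin n → ℂ) (x : Fin n → ∀ i, H i)
    (hx : ∀ k i, ‖x k i‖ ≤ 1) :
    (∑ k, ∑ l, conj (lam k) * lam l * hform H (x k) (x l)).im = 0 ∧
      0 ≤ (∑ k, ∑ l, conj (lam k) * lam l * hform H (x k) (x l)).re := by
  set f : Fin n → Fin n → ℂ := fun k l => conj (lam k) * lam l * hform H (x k) (x l) with hf
  set T : Fin n → Fin n → Set I :=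
    fun k l => {i | (inner ℂ (x k i) (x l i) : ℂ) ≠ 1} with hT
  set Rel : Fin n → Fin n → Prop := fun k l => (T k l).Finite with hRel
  -- basic facts
  have key1 : ∀ k l : Fin n, ∀ i, (inner ℂ (x k i) (x l i) : ℂ) = 1 →
      (inner ℂ (x l i) (x k i) : ℂ) = 1 := by
    intro k l i h1
    rw [← inner_conj_symm, h1, map_one]
  have key2 : ∀ k l m : Fin n, ∀ i, (inner ℂ (x k i) (x l i) : ℂ) = 1 →
      (inner ℂ (x l i) (x m i) : ℂ) = 1 → (inner ℂ (x k i) (x m i) : ℂ) = 1 := by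
    intro k l m i h1 h2
    rw [show x k i = x l i from inner_eq_one_aux (hx k i) (hx l i) h1]
    exact h2
  have hRsymm : ∀ {k l : Fin n}, Rel k l → Rel l k := by
    intro k l h
    exact h.subset fun i hi => fun h1 => hi (key1 k l i h1)
  have hRtrans : ∀ {k l m : Fin n}, Rel k l → Rel l m → Rel k m := by
    intro k l m h1 h2
    refine (h1.union h2).subset fun i (hi : _ ≠ 1) => ?_
    by_cases hkl : (inner ℂ (x k i) (x l i) : ℂ) = 1
    · by_cases hlm : (inner ℂ (x l i) (x m i) : ℂ) = 1
      · exact absurd (key2 k l m i hkl hlm) hi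
      · exact Set.mem_union_right _ hlm
    · exact Set.mem_union_left _ hkl
  have hzero : ∀ k l : Fin n, ¬ Rel k l → f k l = 0 := by
    intro k l h
    simp only [hf, hform]
    rw [if_neg h, mul_zero]
  -- the setoid
  letI σ : Setoid (Fin n) :=
    ⟨fun k l => Rel k l ∨ k = l,
      ⟨fun k => Or.inr rfl,
        fun h => h.elim (fun h' => Or.inl (hRsymm h')) (fun h' => Or.inr h'.symm),
        fun h h' => by
          rcases h with h | rfl
          · rcases h' with h' | rfl
            · exact Or.inl (hRtrans h h')
            · exact Or.inl h
          · exact h'⟩⟩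
  -- per-class positivity
  have hclass : ∀ q : Quotient σ,
      ((∑ k, ∑ l, if Quotient.mk σ k = q ∧ Quotient.mk σ l = q then f k l else 0).im = 0 ∧
        0 ≤ (∑ k, ∑ l,
          if Quotient.mk σ k = q ∧ Quotient.mk σ l = q then f k l else 0).re) := by
    intro q
    by_cases hq : ∀ k l : Fin n, Quotient.mk σ k = q → Quotient.mk σ l = q → Rel k l
    · set T' : Fin n → Fin n → Set I :=
        fun k l => if Quotient.mk σ k = q ∧ Quotient.mk σ l = q then T k l else ∅ with hT'
      have hT'fin : ∀ k l, (T' k l).Finite := by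
        intro k l
        by_cases h : Quotient.mk σ k = q ∧ Quotient.mk σ l = q
        · simpa [hT', h] using hq k l h.1 h.2
        · simp [hT', h]
      have hU : (⋃ k, ⋃ l, T' k l).Finite :=
        Set.finite_iUnion fun k => Set.finite_iUnion fun l => hT'fin k l
      set SF := hU.toFinset with hSF
      set c : Fin n → ℂ := fun k => if Quotient.mk σ k = q then lam k else 0 with hc
      have hprod : ∀ k l : Fin n, Quotient.mk σ k = q → Quotient.mk σ l = q →
          hform H (x k) (x l) = ∏ i ∈ SF, (inner ℂ (x k i) (x l i) : ℂ) := by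
        intro k l hk hl
        rw [hform, if_pos (hq k l hk hl)]
        refine finprod_eq_prod_of_mulSupport_subset _ ?_
        intro i hi
        rw [hSF, Set.Finite.coe_toFinset]
        refine Set.mem_iUnion.mpr ⟨k, Set.mem_iUnion.mpr ⟨l, ?_⟩⟩
        show i ∈ T' k l
        rw [show T' k l = T k l from if_pos ⟨hk, hl⟩]
        exact hi
      have hrw : (∑ k, ∑ l, if Quotient.mk σ k = q ∧ Quotient.mk σ l = q then f k l else 0)
          = ∑ k, ∑ l, conj (c k) * c l * ∏ i ∈ SF, (inner ℂ (x k i) (x l i) : ℂ) := by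
        refine Finset.sum_congr rfl fun k _ => Finset.sum_congr rfl fun l _ => ?_
        by_cases h : Quotient.mk σ k = q ∧ Quotient.mk σ l = q
        · rw [if_pos h]
          show conj (lam k) * lam l * hform H (x k) (x l) = _
          rw [hprod k l h.1 h.2]
          simp only [hc, if_pos h.1, if_pos h.2]
        · rw [if_neg h]
          rcases not_and_or.mp h with h' | h'
          · simp only [hc, if_neg h', map_zero, zero_mul]
          · simp only [hc, if_neg h', mul_zero, zero_mul]
      rw [hrw]
      exact key_lemma x SF c
    · push_neg at hq
      obtain ⟨k0, l0, hk0, hl0, hnrel⟩ := hq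
      have hk0l0 : k0 = l0 :=
        (Quotient.exact (hk0.trans hl0.symm)).resolve_left hnrel
      subst hk0l0
      have hsingle : ∀ k : Fin n, Quotient.mk σ k = q → k = k0 := by
        intro k hk
        rcases Quotient.exact (hk.trans hk0.symm) with hr | hr
        · exact absurd (hRtrans (hRsymm hr) hr) hnrel
        · exact hr
      have hall : ∀ k l : Fin n,
          (if Quotient.mk σ k = q ∧ Quotient.mk σ l = q then f k l else 0) = 0 := by
        intro k l
        by_cases h : Quotient.mk σ k = q ∧ Quotient.mk σ l = q
        · rw [if_pos h, hsingle k h.1, hsingle l h.2]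
          exact hzero k0 k0 hnrel
        · exact if_neg h
      simp only [hall, Finset.sum_const_zero]
      simp
  -- regroup the sum by classes
  have hsplit : (∑ k, ∑ l, f k l)
      = ∑ q : Quotient σ, ∑ k, ∑ l,
          if Quotient.mk σ k = q ∧ Quotient.mk σ l = q then f k l else 0 := by
    rw [← sum_swap3]
    refine Finset.sum_congr rfl fun k _ => Finset.sum_congr rfl fun l _ => ?_
    by_cases h : Quotient.mk σ k = Quotient.mk σ l
    · have h1 : ∀ q : Quotient σ,
          (if Quotient.mk σ k = q ∧ Quotient.mk σ l = q then f k l else 0)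
            = if Quotient.mk σ k = q then f k l else 0 := by
        intro q
        rw [← h]
        simp
      simp only [h1]
      rw [Finset.sum_ite_eq Finset.univ (Quotient.mk σ k) fun _ => f k l]
      simp
    · have h0 : f k l = 0 := by
        refine hzero k l fun hr => h (Quotient.sound (Or.inl hr))
      rw [h0]
      refine (Finset.sum_eq_zero fun q _ => ?_).symm
      refine if_neg fun hc => h (hc.1.trans hc.2.symm)
  constructor
  · rw [show (∑ k, ∑ l, conj (lam k) * lam l * hform H (x k) (x l)) = ∑ k, ∑ l, f k l from rfl,
      hsplit, Complex.im_sum]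
    exact Finset.sum_eq_zero fun q _ => (hclass q).1
  · rw [show (∑ k, ∑ l, conj (lam k) * lam l * hform H (x k) (x l)) = ∑ k, ∑ l, f k l from rfl,
      hsplit, Complex.re_sum]
    exact Finset.sum_nonneg fun q _ => (hclass q).2
end

section
/- There exists a map B : (⨂^un_{i∈I} H_i) × (⨂^un_{i∈I} H_i) → ℂ which is additive and conjugate-ℂ-linear in the first variable, additive and ℂ-linear in the second variable, satisfies B(⊗x, ⊗y) = h(x,y) for all x, y ∈ Π_{i∈I} H_i with ‖x_i‖ = ‖y_i‖ = 1 for every i, satisfies B(η, ξ) = conj(B(ξ, η)) for all ξ, η, and is positive definite: B(ξ, ξ) is a nonnegative real number for every ξ ∈ ⨂^un_{i∈I} H_i, and B(ξ, ξ) = 0 implies ξ = 0. In other words, ⨂^un_{i∈I} H_i carries an inner product determined on elementary tensors of unit families by the formula h. -/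
open scoped TensorProduct Classical ComplexConjugate

/-- `⨂^un_{i∈I} H_i`: the span in `⨂_{i∈I} H_i` of the elementary tensors of families of
unit vectors. -/
noncomputable def unTensorSpan {I : Type*} (H : I → Type*) [∀ i, NormedAddCommGroup (H i)]
    [∀ i, InnerProductSpace ℂ (H i)] : Submodule ℂ (⨂[ℂ] i, H i) :=
  Submodule.span ℂ {t | ∃ x : ∀ i, H i, (∀ i, ‖x i‖ = 1) ∧ t = PiTensorProduct.tprod ℂ x}

/-- The elementary tensor of a family of unit vectors, as an element of `⨂^un_{i∈I} H_i`. -/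
noncomputable def unTensorElem {I : Type*} (H : I → Type*) [∀ i, NormedAddCommGroup (H i)]
    [∀ i, InnerProductSpace ℂ (H i)] (x : ∀ i, H i) (hx : ∀ i, ‖x i‖ = 1) :
    unTensorSpan H :=
  ⟨PiTensorProduct.tprod ℂ x, Submodule.subset_span ⟨x, hx, rfl⟩⟩

namespace UnTensorAux

open PiTensorProduct

variable {I : Type*} {H : I → Type*} [∀ i, NormedAddCommGroup (H i)]
    [∀ i, InnerProductSpace ℂ (H i)]

section Update

variable [DecidableEq I]

lemma update_cond_iff (a x : ∀ i, H i) (i₀ : I) (v : H i₀) :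
    {i | (inner ℂ (a i) (Function.update x i₀ v i) : ℂ) ≠ 1}.Finite ↔
      {i | i ≠ i₀ ∧ (inner ℂ (a i) (x i) : ℂ) ≠ 1}.Finite := by
  constructor
  · intro h
    refine h.subset ?_
    rintro i ⟨hne, h1⟩
    show (inner ℂ (a i) (Function.update x i₀ v i) : ℂ) ≠ 1
    rwa [Function.update_of_ne hne]
  · intro h
    refine ((h.insert i₀).subset ?_)
    intro i hi
    rcases eq_or_ne i i₀ with rfl | hne
    · exact Set.mem_insert _ _
    · refine Set.mem_insert_of_mem _ ⟨hne, ?_⟩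
      have hi' : (inner ℂ (a i) (Function.update x i₀ v i) : ℂ) ≠ 1 := hi
      rwa [Function.update_of_ne hne] at hi'

lemma hform_update_eq (a x : ∀ i, H i) (i₀ : I) (v : H i₀)
    (hs : {i | i ≠ i₀ ∧ (inner ℂ (a i) (x i) : ℂ) ≠ 1}.Finite) :
    hform H a (Function.update x i₀ v) =
      (inner ℂ (a i₀) v : ℂ) * ∏ i ∈ hs.toFinset, (inner ℂ (a i) (x i) : ℂ) := by
  rw [hform, if_pos ((update_cond_iff a x i₀ v).2 hs)]
  have hi₀ : i₀ ∉ hs.toFinset := by simp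
  have hsub : (Function.mulSupport fun i => (inner ℂ (a i) (Function.update x i₀ v i) : ℂ))
      ⊆ ↑(insert i₀ hs.toFinset) := by
    intro i hi
    rw [Function.mem_mulSupport] at hi
    rcases eq_or_ne i i₀ with rfl | hne
    · simp
    · refine Finset.mem_coe.2 (Finset.mem_insert.2 (Or.inr ?_))
      rw [Set.Finite.mem_toFinset]
      refine ⟨hne, ?_⟩
      rwa [Function.update_of_ne hne] at hi
  rw [finprod_eq_prod_of_mulSupport_subset _ hsub, Finset.prod_insert hi₀]
  congr 1
  · simp
  · refine Finset.prod_congr rfl fun i hi => ?_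
    rw [Set.Finite.mem_toFinset] at hi
    rw [Function.update_of_ne hi.1]

lemma hform_update_zero (a x : ∀ i, H i) (i₀ : I) (v : H i₀)
    (hs : ¬ {i | i ≠ i₀ ∧ (inner ℂ (a i) (x i) : ℂ) ≠ 1}.Finite) :
    hform H a (Function.update x i₀ v) = 0 := by
  rw [hform, if_neg]
  exact fun h => hs ((update_cond_iff a x i₀ v).1 h)

lemma hform_update_add_right (a x : ∀ i, H i) (i₀ : I) (u v : H i₀) :
    hform H a (Function.update x i₀ (u + v)) =
      hform H a (Function.update x i₀ u) + hform H a (Function.update x i₀ v) := by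
  by_cases hs : {i | i ≠ i₀ ∧ (inner ℂ (a i) (x i) : ℂ) ≠ 1}.Finite
  · rw [hform_update_eq a x i₀ _ hs, hform_update_eq a x i₀ _ hs, hform_update_eq a x i₀ _ hs,
      inner_add_right, add_mul]
  · simp [hform_update_zero a x i₀ _ hs]

lemma hform_update_smul_right (a x : ∀ i, H i) (i₀ : I) (c : ℂ) (u : H i₀) :
    hform H a (Function.update x i₀ (c • u)) = c * hform H a (Function.update x i₀ u) := by
  by_cases hs : {i | i ≠ i₀ ∧ (inner ℂ (a i) (x i) : ℂ) ≠ 1}.Finite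
  · rw [hform_update_eq a x i₀ _ hs, hform_update_eq a x i₀ _ hs, inner_smul_right]
    ring
  · simp [hform_update_zero a x i₀ _ hs]

end Update

lemma hform_conj (x y : ∀ i, H i) : conj (hform H x y) = hform H y x := by
  have hconj1 : ∀ z : ℂ, conj z ≠ 1 ↔ z ≠ 1 := by
    intro z
    constructor
    · intro h hz
      exact h (by rw [hz, _root_.map_one])
    · intro h hz
      apply h
      simpa using congrArg conj hz
  have hset : {i | (inner ℂ (y i) (x i) : ℂ) ≠ 1} = {i | (inner ℂ (x i) (y i) : ℂ) ≠ 1} := by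
    ext i
    simp only [Set.mem_setOf_eq]
    rw [← inner_conj_symm (y i) (x i)]
    exact hconj1 _
  rw [hform, hform, hset]
  by_cases h : {i | (inner ℂ (x i) (y i) : ℂ) ≠ 1}.Finite
  · rw [if_pos h, if_pos h]
    have hsx : (Function.mulSupport fun i => (inner ℂ (x i) (y i) : ℂ)) ⊆ ↑h.toFinset := by
      intro i hi
      rw [Function.mem_mulSupport] at hi
      simpa using hi
    have hsy : (Function.mulSupport fun i => (inner ℂ (y i) (x i) : ℂ)) ⊆ ↑h.toFinset := by
      rw [show (Function.mulSupport fun i => (inner ℂ (y i) (x i) : ℂ))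
        = {i | (inner ℂ (y i) (x i) : ℂ) ≠ 1} from rfl, hset]
      intro i hi
      simpa using hi
    rw [finprod_eq_prod_of_mulSupport_subset _ hsx, finprod_eq_prod_of_mulSupport_subset _ hsy,
      map_prod]
    exact Finset.prod_congr rfl fun i _ => inner_conj_symm _ _
  · rw [if_neg h, if_neg h, map_zero]

/-- `hform H a ·` as a multilinear map. -/
noncomputable def mHform (a : ∀ i, H i) : MultilinearMap ℂ H ℂ where
  toFun x := hform H a x
  map_update_add' := by
    intro dec x i₀ u v
    exact hform_update_add_right a x i₀ u v
  map_update_smul' := by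
    intro dec x i₀ c u
    exact hform_update_smul_right a x i₀ c u

lemma mHform_apply (a x : ∀ i, H i) : mHform a x = hform H a x := rfl

noncomputable def Gfun (a : ∀ i, H i) : (⨂[ℂ] i, H i) →ₗ[ℂ] ℂ :=
  PiTensorProduct.lift (mHform a)

lemma Gfun_tprod (a x : ∀ i, H i) : Gfun a (tprod ℂ x) = hform H a x :=
  PiTensorProduct.lift.tprod _

noncomputable def phiFun (a : ∀ i, H i) : (⨂[ℂ] i, H i) →ₛₗ[starRingEnd ℂ] ℂ where
  toFun ξ := conj (Gfun a ξ)
  map_add' ξ η := by simp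
  map_smul' c ξ := by simp [smul_eq_mul]

lemma phiFun_apply (a : ∀ i, H i) (ξ : ⨂[ℂ] i, H i) : phiFun a ξ = conj (Gfun a ξ) := rfl

noncomputable def phiMl : MultilinearMap ℂ H ((⨂[ℂ] i, H i) →ₛₗ[starRingEnd ℂ] ℂ) where
  toFun a := phiFun a
  map_update_add' := by
    intro dec a i₀ u v
    have hm : mHform (Function.update a i₀ (u + v)) =
        mHform (Function.update a i₀ u) + mHform (Function.update a i₀ v) := by
      ext x
      show hform H _ x = hform H _ x + hform H _ x
      rw [← hform_conj x, ← hform_conj x, ← hform_conj x, ← map_add,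
        hform_update_add_right x a i₀ u v]
    refine LinearMap.ext fun ξ => ?_
    show conj (Gfun _ ξ) = conj (Gfun _ ξ) + conj (Gfun _ ξ)
    rw [← map_add, Gfun, Gfun, Gfun, hm, map_add]
    simp
  map_update_smul' := by
    intro dec a i₀ c u
    have hm : mHform (Function.update a i₀ (c • u)) =
        (conj c) • mHform (Function.update a i₀ u) := by
      ext x
      show hform H _ x = (conj c) • hform H _ x
      rw [← hform_conj x, ← hform_conj x, hform_update_smul_right x a i₀ c u, smul_eq_mul,
        _root_.map_mul]
    refine LinearMap.ext fun ξ => ?_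
    show conj (Gfun _ ξ) = c • conj (Gfun _ ξ)
    rw [Gfun, Gfun, hm, map_smul]
    simp [smul_eq_mul]

lemma phiMl_apply (a : ∀ i, H i) : phiMl (H := H) a = phiFun a := rfl

noncomputable def Psi : (⨂[ℂ] i, H i) →ₗ[ℂ] ((⨂[ℂ] i, H i) →ₛₗ[starRingEnd ℂ] ℂ) :=
  PiTensorProduct.lift phiMl

lemma Psi_tprod_tprod (x y : ∀ i, H i) :
    Psi (tprod ℂ y) (tprod ℂ x) = hform H x y := by
  rw [Psi, PiTensorProduct.lift.tprod]
  show conj (Gfun y (tprod ℂ x)) = hform H x y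
  rw [Gfun_tprod, hform_conj]

lemma Psi_conj (ξ η : ⨂[ℂ] i, H i) : Psi ξ η = conj (Psi η ξ) := by
  induction ξ using PiTensorProduct.induction_on with
  | smul_tprod r x =>
    induction η using PiTensorProduct.induction_on with
    | smul_tprod s y =>
      rw [Psi.map_smul, Psi.map_smul, LinearMap.smul_apply, LinearMap.smul_apply,
        LinearMap.map_smulₛₗ, LinearMap.map_smulₛₗ, Psi_tprod_tprod, Psi_tprod_tprod,
        ← hform_conj x y]
      simp only [smul_eq_mul, _root_.map_mul, Complex.conj_conj]
      ring
    | add η₁ η₂ h1 h2 =>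
      simp only [_root_.map_add, LinearMap.add_apply, h1, h2]
  | add ξ₁ ξ₂ h1 h2 =>
    simp only [_root_.map_add, LinearMap.add_apply, h1, h2]

lemma inner_self_unit {E : Type*} [NormedAddCommGroup E] [InnerProductSpace ℂ E]
    {v : E} (hv : ‖v‖ = 1) : (inner ℂ v v : ℂ) = 1 := by
  rw [inner_self_eq_norm_sq_to_K, hv]
  norm_num

lemma hform_eq_zero {x y : ∀ i, H i} (hx : ∀ i, ‖x i‖ = 1) (hy : ∀ i, ‖y i‖ = 1)
    (h : ¬ {i | x i ≠ y i}.Finite) : hform H x y = 0 := by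
  rw [hform, if_neg]
  intro hfin
  apply h
  refine hfin.subset ?_
  intro i hi
  simp only [Set.mem_setOf_eq] at hi ⊢
  intro h1
  exact hi ((inner_eq_one_iff_of_norm_eq_one (hx i) (hy i)).1 h1)

lemma hform_eq_prod {x y : ∀ i, H i} (hy : ∀ i, ‖y i‖ = 1)
    (S : Finset I) (hagree : ∀ i ∉ S, x i = y i) :
    hform H x y = ∏ i ∈ S, (inner ℂ (x i) (y i) : ℂ) := by
  have hsub : {i | (inner ℂ (x i) (y i) : ℂ) ≠ 1} ⊆ ↑S := by
    intro i hi
    by_contra hiS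
    apply hi
    rw [hagree i hiS]
    exact inner_self_unit (hy i)
  rw [hform, if_pos (S.finite_toSet.subset hsub)]
  exact finprod_eq_prod_of_mulSupport_subset _ hsub

lemma class_lemma {n : ℕ} (x : Fin n → ∀ i, H i) (hx : ∀ j i, ‖x j i‖ = 1)
    (a : Fin n → ℂ) (F : Finset (Fin n))
    (hF : ∀ j ∈ F, ∀ k ∈ F, {i | x j i ≠ x k i}.Finite) :
    ∃ r : ℝ, 0 ≤ r ∧
      (∑ j ∈ F, ∑ k ∈ F, conj (a j) * a k * hform H (x j) (x k)) = (r : ℂ) ∧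
      (r = 0 → (∑ j ∈ F, a j • PiTensorProduct.tprod ℂ (x j)) = (0 : ⨂[ℂ] i, H i)) := by
  rcases F.eq_empty_or_nonempty with rfl | ⟨j₀, hj₀⟩
  · exact ⟨0, le_refl _, by simp, fun _ => by simp⟩
  -- the finite set of coordinates where members of the class disagree
  have hD : (⋃ j ∈ F, ⋃ k ∈ F, {i | x j i ≠ x k i}).Finite :=
    F.finite_toSet.biUnion fun j hj => F.finite_toSet.biUnion fun k hk => hF j hj k hk
  set S : Finset I := hD.toFinset with hSdef
  have hagree : ∀ j ∈ F, ∀ i, i ∉ S → x j i = x j₀ i := by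
    intro j hj i hiS
    by_contra hne
    apply hiS
    rw [hSdef, Set.Finite.mem_toFinset]
    simp only [Set.mem_iUnion]
    exact ⟨j, hj, j₀, hj₀, hne⟩
  -- finite-dimensional submodules and orthonormal bases
  set V : ∀ i, Submodule ℂ (H i) := fun i =>
    Submodule.span ℂ (Set.range fun j : {j // j ∈ F} => x j.1 i) with hVdef
  haveI hfd : ∀ i, FiniteDimensional ℂ (V i) := fun i =>
    FiniteDimensional.span_of_finite ℂ (Set.finite_range _)
  set d : I → ℕ := fun i => Module.finrank ℂ (V i) with hddef
  set b : ∀ i, OrthonormalBasis (Fin (d i)) ℂ (V i) := fun i => stdOrthonormalBasis ℂ (V i)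
    with hbdef
  have hmem : ∀ j ∈ F, ∀ i, x j i ∈ V i := fun j hj i =>
    Submodule.subset_span ⟨⟨j, hj⟩, rfl⟩
  set u : Fin n → ∀ i, V i := fun j i => if hj : j ∈ F then ⟨x j i, hmem j hj i⟩ else 0
    with hudef
  have hucoe : ∀ j ∈ F, ∀ i, ((u j i : V i) : H i) = x j i := by
    intro j hj i
    rw [hudef]
    simp [hj]
  set c : Fin n → ∀ i, Fin (d i) → ℂ := fun j i t => (inner ℂ (b i t) (u j i) : ℂ) with hcdef
  -- expansion of vectors in the orthonormal basis
  have f1 : ∀ j ∈ F, ∀ i, x j i = ∑ t, c j i t • ((b i t : V i) : H i) := by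
    intro j hj i
    rw [← hucoe j hj i, ← (b i).sum_repr' (u j i)]
    push_cast
    rfl
  -- inner products via coordinates
  have f2 : ∀ j ∈ F, ∀ k ∈ F, ∀ i,
      (inner ℂ (x j i) (x k i) : ℂ) = ∑ t, conj (c j i t) * c k i t := by
    intro j hj k hk i
    rw [← hucoe j hj i, ← hucoe k hk i, ← Submodule.coe_inner,
      ← (b i).sum_inner_mul_inner (u j i) (u k i)]
    refine Finset.sum_congr rfl fun t _ => ?_
    rw [hcdef]
    congr 1
    exact (inner_conj_symm _ _).symm
  -- the restricted elementary-tensor map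
  set gT : MultilinearMap ℂ (fun i : {a : I // a ∈ S} => H i.1) (⨂[ℂ] i, H i) :=
    (PiTensorProduct.tprod ℂ).domDomRestrict (fun i => i ∈ S) (fun i => x j₀ i.1) with hgTdef
  set w : (∀ i : {a : I // a ∈ S}, Fin (d i.1)) → (∀ i, H i) := fun r i =>
    if h : i ∈ S then ((b i (r ⟨i, h⟩) : V i) : H i) else x j₀ i with hwdef
  -- expansion of elementary tensors
  have hexp : ∀ j ∈ F, PiTensorProduct.tprod ℂ (x j) =
      ∑ r : ∀ i : {a : I // a ∈ S}, Fin (d i.1),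
        (∏ i : {a : I // a ∈ S}, c j i.1 (r i)) • PiTensorProduct.tprod ℂ (w r) := by
    intro j hj
    have h0 : (PiTensorProduct.tprod ℂ) (x j) = gT (fun i => x j i.1) := by
      rw [hgTdef, MultilinearMap.domDomRestrict_apply]
      refine congrArg (PiTensorProduct.tprod ℂ) (funext fun i => ?_)
      by_cases h : i ∈ S
      · rw [dif_pos h]
      · rw [dif_neg h]
        exact hagree j hj i h
    rw [h0]
    calc gT (fun i => x j i.1)
        = gT (fun i => ∑ t, c j i.1 t • ((b i.1 t : V i.1) : H i.1)) := by
          refine congrArg gT (funext fun i => ?_)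
          exact f1 j hj i.1
      _ = ∑ r : ∀ i : {a : I // a ∈ S}, Fin (d i.1),
            gT (fun i => c j i.1 (r i) • ((b i.1 (r i) : V i.1) : H i.1)) :=
          gT.map_sum (g := fun i t => c j i.1 t • ((b i.1 t : V i.1) : H i.1))
      _ = ∑ r : ∀ i : {a : I // a ∈ S}, Fin (d i.1),
            (∏ i : {a : I // a ∈ S}, c j i.1 (r i)) •
              gT (fun i => ((b i.1 (r i) : V i.1) : H i.1)) :=
          Finset.sum_congr rfl fun r _ => gT.map_smul_univ _ _
      _ = ∑ r : ∀ i : {a : I // a ∈ S}, Fin (d i.1),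
            (∏ i : {a : I // a ∈ S}, c j i.1 (r i)) • PiTensorProduct.tprod ℂ (w r) := by
          refine Finset.sum_congr rfl fun r _ => ?_
          congr 1
  -- Gram entries via coordinates
  have g2 : ∀ j ∈ F, ∀ k ∈ F, hform H (x j) (x k)
      = ∑ r : ∀ i : {a : I // a ∈ S}, Fin (d i.1),
          conj (∏ i : {a : I // a ∈ S}, c j i.1 (r i)) *
            ∏ i : {a : I // a ∈ S}, c k i.1 (r i) := by
    intro j hj k hk
    have hag : ∀ i ∉ S, x j i = x k i := fun i hi =>
      (hagree j hj i hi).trans (hagree k hk i hi).symm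
    rw [hform_eq_prod (hx k) S hag, ← Finset.prod_coe_sort]
    calc ∏ i : {a : I // a ∈ S}, (inner ℂ (x j i.1) (x k i.1) : ℂ)
        = ∏ i : {a : I // a ∈ S}, ∑ t, conj (c j i.1 t) * c k i.1 t :=
          Finset.prod_congr rfl fun i _ => f2 j hj k hk i.1
      _ = ∑ r ∈ Fintype.piFinset (fun _ : {a : I // a ∈ S} => (Finset.univ : Finset (Fin (d _)))),
            ∏ i : {a : I // a ∈ S}, conj (c j i.1 (r i)) * c k i.1 (r i) :=
          Finset.prod_univ_sum _ _
      _ = ∑ r : ∀ i : {a : I // a ∈ S}, Fin (d i.1),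
            ∏ i : {a : I // a ∈ S}, conj (c j i.1 (r i)) * c k i.1 (r i) := by
          rw [Fintype.piFinset_univ]
      _ = ∑ r : ∀ i : {a : I // a ∈ S}, Fin (d i.1),
            conj (∏ i : {a : I // a ∈ S}, c j i.1 (r i)) *
              ∏ i : {a : I // a ∈ S}, c k i.1 (r i) := by
          refine Finset.sum_congr rfl fun r _ => ?_
          rw [Finset.prod_mul_distrib, map_prod]
  set γ : (∀ i : {a : I // a ∈ S}, Fin (d i.1)) → ℂ :=
    fun r => ∑ j ∈ F, a j * ∏ i : {a : I // a ∈ S}, c j i.1 (r i) with hγdef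
  have hQ : (∑ j ∈ F, ∑ k ∈ F, conj (a j) * a k * hform H (x j) (x k))
      = ∑ r : ∀ i : {a : I // a ∈ S}, Fin (d i.1), conj (γ r) * γ r := by
    calc ∑ j ∈ F, ∑ k ∈ F, conj (a j) * a k * hform H (x j) (x k)
        = ∑ j ∈ F, ∑ k ∈ F, ∑ r : ∀ i : {a : I // a ∈ S}, Fin (d i.1),
            conj (a j * ∏ i : {a : I // a ∈ S}, c j i.1 (r i)) *
              (a k * ∏ i : {a : I // a ∈ S}, c k i.1 (r i)) := by
          refine Finset.sum_congr rfl fun j hj => Finset.sum_congr rfl fun k hk => ?_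
          rw [g2 j hj k hk, Finset.mul_sum]
          refine Finset.sum_congr rfl fun r _ => ?_
          simp only [_root_.map_mul]
          ring
      _ = ∑ j ∈ F, ∑ r : ∀ i : {a : I // a ∈ S}, Fin (d i.1), ∑ k ∈ F,
            conj (a j * ∏ i : {a : I // a ∈ S}, c j i.1 (r i)) *
              (a k * ∏ i : {a : I // a ∈ S}, c k i.1 (r i)) :=
          Finset.sum_congr rfl fun j _ => Finset.sum_comm
      _ = ∑ r : ∀ i : {a : I // a ∈ S}, Fin (d i.1), ∑ j ∈ F, ∑ k ∈ F,
            conj (a j * ∏ i : {a : I // a ∈ S}, c j i.1 (r i)) *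
              (a k * ∏ i : {a : I // a ∈ S}, c k i.1 (r i)) :=
          Finset.sum_comm
      _ = ∑ r : ∀ i : {a : I // a ∈ S}, Fin (d i.1), conj (γ r) * γ r := by
          refine Finset.sum_congr rfl fun r _ => ?_
          rw [← Finset.sum_mul_sum]
          congr 1
          rw [hγdef, map_sum]
  refine ⟨∑ r : ∀ i : {a : I // a ∈ S}, Fin (d i.1), Complex.normSq (γ r), ?_, ?_, ?_⟩
  · exact Finset.sum_nonneg fun r _ => Complex.normSq_nonneg _
  · rw [hQ]
    push_cast
    refine Finset.sum_congr rfl fun r _ => ?_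
    rw [mul_comm, Complex.mul_conj]
  · intro hr0
    have hγ0 : ∀ r : ∀ i : {a : I // a ∈ S}, Fin (d i.1), γ r = 0 := by
      intro r
      have h := (Finset.sum_eq_zero_iff_of_nonneg
        (fun r _ => Complex.normSq_nonneg (γ r))).1 hr0 r (Finset.mem_univ r)
      exact Complex.normSq_eq_zero.1 h
    calc ∑ j ∈ F, a j • PiTensorProduct.tprod ℂ (x j)
        = ∑ j ∈ F, a j • ∑ r : ∀ i : {a : I // a ∈ S}, Fin (d i.1),
            (∏ i : {a : I // a ∈ S}, c j i.1 (r i)) • PiTensorProduct.tprod ℂ (w r) :=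
          Finset.sum_congr rfl fun j hj => by rw [hexp j hj]
      _ = ∑ j ∈ F, ∑ r : ∀ i : {a : I // a ∈ S}, Fin (d i.1),
            (a j * ∏ i : {a : I // a ∈ S}, c j i.1 (r i)) • PiTensorProduct.tprod ℂ (w r) := by
          refine Finset.sum_congr rfl fun j _ => ?_
          rw [Finset.smul_sum]
          refine Finset.sum_congr rfl fun r _ => ?_
          rw [smul_smul]
      _ = ∑ r : ∀ i : {a : I // a ∈ S}, Fin (d i.1), ∑ j ∈ F,
            (a j * ∏ i : {a : I // a ∈ S}, c j i.1 (r i)) • PiTensorProduct.tprod ℂ (w r) :=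
          Finset.sum_comm
      _ = ∑ r : ∀ i : {a : I // a ∈ S}, Fin (d i.1), γ r • PiTensorProduct.tprod ℂ (w r) := by
          refine Finset.sum_congr rfl fun r _ => ?_
          rw [← Finset.sum_smul]
      _ = 0 := Finset.sum_eq_zero fun r _ => by rw [hγ0 r, zero_smul]


lemma Psi_sum_sum {n : ℕ} (a : Fin n → ℂ) (x : Fin n → ∀ i, H i) :
    Psi (∑ k, a k • PiTensorProduct.tprod ℂ (x k)) (∑ j, a j • PiTensorProduct.tprod ℂ (x j))
      = ∑ j, ∑ k, conj (a j) * a k * hform H (x j) (x k) := by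
  simp only [map_sum, LinearMap.map_smul, LinearMap.sum_apply, LinearMap.smul_apply,
    LinearMap.map_smulₛₗ, Psi_tprod_tprod, smul_eq_mul, Finset.mul_sum]
  refine Finset.sum_congr rfl fun j _ => Finset.sum_congr rfl fun k _ => ?_
  simp only [RingHom.id_apply]
  ring

lemma fiber_double {n : ℕ} (T : Fin n → Fin n → ℂ) (rep : Fin n → Fin n)
    (hz : ∀ j k, rep j ≠ rep k → T j k = 0) :
    ∑ j, ∑ k, T j k = ∑ q, ∑ j ∈ Finset.univ.filter (fun j => rep j = q),
      ∑ k ∈ Finset.univ.filter (fun k => rep k = q), T j k := by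
  rw [← Finset.sum_fiberwise Finset.univ rep (fun j => ∑ k, T j k)]
  refine Finset.sum_congr rfl fun q _ => Finset.sum_congr rfl fun j hj => ?_
  rw [Finset.mem_filter] at hj
  refine (Finset.sum_filter_of_ne fun k _ hk => ?_).symm
  by_contra hq
  exact hk (hz j k (by rw [hj.2]; exact fun h' => hq h'.symm))

lemma key_psd (ξ : unTensorSpan H) :
    ∃ r : ℝ, 0 ≤ r ∧ Psi (ξ : ⨂[ℂ] i, H i) (ξ : ⨂[ℂ] i, H i) = (r : ℂ) ∧
      (r = 0 → ξ = 0) := by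
  have hmem : (ξ : ⨂[ℂ] i, H i) ∈ Submodule.span ℂ
      {t | ∃ x : ∀ i, H i, (∀ i, ‖x i‖ = 1) ∧ t = PiTensorProduct.tprod ℂ x} := ξ.2
  obtain ⟨n, aa, g, hsum⟩ := Submodule.mem_span_set'.1 hmem
  choose xx hxxu hxxe using fun j => (g j).2
  have hξ : (ξ : ⨂[ℂ] i, H i) = ∑ j, aa j • PiTensorProduct.tprod ℂ (xx j) := by
    rw [← hsum]
    exact Finset.sum_congr rfl fun j _ => by rw [hxxe j]
  -- the equivalence relation of being in the same class
  have hrefl : ∀ j, {i | xx j i ≠ xx j i}.Finite := fun j => by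
    simp only [ne_eq, not_true_eq_false, Set.setOf_false]
    exact Set.finite_empty
  have hsymm : ∀ {j k}, {i | xx j i ≠ xx k i}.Finite → {i | xx k i ≠ xx j i}.Finite :=
    fun {j k} h => h.subset fun i hi => Ne.symm hi
  have htrans : ∀ {j k l}, {i | xx j i ≠ xx k i}.Finite → {i | xx k i ≠ xx l i}.Finite →
      {i | xx j i ≠ xx l i}.Finite := by
    intro j k l h1 h2
    refine (h1.union h2).subset ?_
    intro i hi
    by_cases hjk : xx j i = xx k i
    · exact Or.inr fun h => hi (hjk.trans h)
    · exact Or.inl hjk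
  have hne : ∀ j, (Finset.univ.filter (fun k => {i | xx j i ≠ xx k i}.Finite)).Nonempty :=
    fun j => ⟨j, Finset.mem_filter.2 ⟨Finset.mem_univ _, hrefl j⟩⟩
  set rep : Fin n → Fin n :=
    fun j => (Finset.univ.filter (fun k => {i | xx j i ≠ xx k i}.Finite)).min' (hne j)
    with hrep
  have hreprel : ∀ j, {i | xx j i ≠ xx (rep j) i}.Finite := fun j =>
    (Finset.mem_filter.1
      ((Finset.univ.filter (fun k => {i | xx j i ≠ xx k i}.Finite)).min'_mem (hne j))).2
  have hrepeq : ∀ {j k}, {i | xx j i ≠ xx k i}.Finite → rep j = rep k := by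
    intro j k h
    have heq : Finset.univ.filter (fun l => {i | xx j i ≠ xx l i}.Finite)
        = Finset.univ.filter (fun l => {i | xx k i ≠ xx l i}.Finite) := by
      ext l
      simp only [Finset.mem_filter, Finset.mem_univ, true_and]
      exact ⟨fun h' => htrans (hsymm h) h', fun h' => htrans h h'⟩
    rw [hrep]
    simp only [heq]
  have hrel_of_rep : ∀ {j k}, rep j = rep k → {i | xx j i ≠ xx k i}.Finite := by
    intro j k h
    have h1 := hreprel j
    have h2 := hreprel k
    rw [h] at h1
    exact htrans h1 (hsymm h2)
  -- per class data
  have hclass := fun q : Fin n => class_lemma xx hxxu aa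
    (Finset.univ.filter (fun j => rep j = q))
    (fun j hj k hk => hrel_of_rep
      (by rw [(Finset.mem_filter.1 hj).2, (Finset.mem_filter.1 hk).2]))
  choose rr hrr0 hrrQ hrrz using hclass
  refine ⟨∑ q, rr q, Finset.sum_nonneg fun q _ => hrr0 q, ?_, ?_⟩
  · rw [hξ, Psi_sum_sum,
      fiber_double (fun j k => conj (aa j) * aa k * hform H (xx j) (xx k)) rep
        (fun j k h => by
          show conj (aa j) * aa k * hform H (xx j) (xx k) = 0
          rw [hform_eq_zero (hxxu j) (hxxu k) (fun hrel => h (hrepeq hrel)), mul_zero])]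
    push_cast
    exact Finset.sum_congr rfl fun q _ => hrrQ q
  · intro h0
    have hrq : ∀ q, rr q = 0 := fun q =>
      (Finset.sum_eq_zero_iff_of_nonneg (fun q _ => hrr0 q)).1 h0 q (Finset.mem_univ q)
    have hz : (ξ : ⨂[ℂ] i, H i) = 0 := by
      rw [hξ, ← Finset.sum_fiberwise Finset.univ rep
        (fun j => aa j • PiTensorProduct.tprod ℂ (xx j))]
      exact Finset.sum_eq_zero fun q _ => hrrz q (hrq q)
    exact Subtype.ext (hz.trans (ZeroMemClass.coe_zero _).symm)

end UnTensorAux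

/-- `⨂^un_{i∈I} H_i` carries an inner product (a conjugate-linear/linear, Hermitian,
positive definite form) determined on elementary tensors of unit families by `h`. -/
theorem exists_inner_product_unTensorSpan {I : Type*} [Infinite I] (H : I → Type*)
    [∀ i, NormedAddCommGroup (H i)] [∀ i, InnerProductSpace ℂ (H i)] :
    ∃ B : unTensorSpan H → unTensorSpan H → ℂ,
      (∀ ξ ξ' η : unTensorSpan H, B (ξ + ξ') η = B ξ η + B ξ' η) ∧
      (∀ (c : ℂ) (ξ η : unTensorSpan H), B (c • ξ) η = conj c * B ξ η) ∧
      (∀ ξ η η' : unTensorSpan H, B ξ (η + η') = B ξ η + B ξ η') ∧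
      (∀ (c : ℂ) (ξ η : unTensorSpan H), B ξ (c • η) = c * B ξ η) ∧
      (∀ (x y : ∀ i, H i) (hx : ∀ i, ‖x i‖ = 1) (hy : ∀ i, ‖y i‖ = 1),
        B (unTensorElem H x hx) (unTensorElem H y hy) = hform H x y) ∧
      (∀ ξ η : unTensorSpan H, B η ξ = conj (B ξ η)) ∧
      (∀ ξ : unTensorSpan H, (B ξ ξ).im = 0 ∧ 0 ≤ (B ξ ξ).re) ∧
      (∀ ξ : unTensorSpan H, B ξ ξ = 0 → ξ = 0) := by
  refine ⟨fun ξ η => UnTensorAux.Psi (η : ⨂[ℂ] i, H i) (ξ : ⨂[ℂ] i, H i),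
    ?_, ?_, ?_, ?_, ?_, ?_, ?_, ?_⟩
  · intro ξ ξ' η
    simp only [Submodule.coe_add, map_add]
  · intro c ξ η
    simp only [Submodule.coe_smul, LinearMap.map_smulₛₗ, smul_eq_mul]
  · intro ξ η η'
    simp only [Submodule.coe_add, map_add, LinearMap.add_apply]
  · intro c ξ η
    simp only [Submodule.coe_smul, map_smul, LinearMap.smul_apply, smul_eq_mul]
  · intro x y hx hy
    exact UnTensorAux.Psi_tprod_tprod x y
  · intro ξ η
    exact UnTensorAux.Psi_conj _ _
  · intro ξ
    obtain ⟨r, hr, heq, _⟩ := UnTensorAux.key_psd ξ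
    show (UnTensorAux.Psi (ξ : ⨂[ℂ] i, H i) (ξ : ⨂[ℂ] i, H i)).im = 0 ∧
      0 ≤ (UnTensorAux.Psi (ξ : ⨂[ℂ] i, H i) (ξ : ⨂[ℂ] i, H i)).re
    rw [heq]
    simpa using hr
  · intro ξ
    obtain ⟨r, _, heq, h8⟩ := UnTensorAux.key_psd ξ
    show UnTensorAux.Psi (ξ : ⨂[ℂ] i, H i) (ξ : ⨂[ℂ] i, H i) = 0 → ξ = 0
    rw [heq]
    intro h0
    exact h8 (by exact_mod_cast h0)
end

section
/- Let ⨂^ct_{i∈I} H_i denote the ℂ-linear span in ⨂_{i∈I} H_i of {⊗x : x ∈ Π_{i∈I} H_i, ‖x_i‖ ≤ 1 for every i}, and let K̃ denote the ℂ-linear span of {⊗x : x ∈ Π_{i∈I} H_i, ‖x_i‖ ≤ 1 for every i and ‖x_i‖ < 1 for infinitely many i}. Then ⨂^ct_{i∈I} H_i is the internal direct sum of K̃ and ⨂^un_{i∈I} H_i: their join (sum) is ⨂^ct_{i∈I} H_i and their intersection is the zero submodule. -/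
open scoped TensorProduct

/-- `⨂^ct_{i∈I} H_i`: the span of the elementary tensors of families of vectors of norm at
most `1`. -/
noncomputable def ctTensorSpan {I : Type*} (H : I → Type*) [∀ i, NormedAddCommGroup (H i)]
    [∀ i, InnerProductSpace ℂ (H i)] : Submodule ℂ (⨂[ℂ] i, H i) :=
  Submodule.span ℂ {t | ∃ x : ∀ i, H i, (∀ i, ‖x i‖ ≤ 1) ∧ t = PiTensorProduct.tprod ℂ x}

/-- `K̃`: the span of the elementary tensors of families of vectors of norm at most `1`,
infinitely many of which have norm strictly less than `1`. -/
noncomputable def ktilTensorSpan {I : Type*} (H : I → Type*) [∀ i, NormedAddCommGroup (H i)]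
    [∀ i, InnerProductSpace ℂ (H i)] : Submodule ℂ (⨂[ℂ] i, H i) :=
  Submodule.span ℂ {t | ∃ x : ∀ i, H i,
    ((∀ i, ‖x i‖ ≤ 1) ∧ {i | ‖x i‖ < 1}.Infinite) ∧ t = PiTensorProduct.tprod ℂ x}

open scoped Classical in
/-- Multilinear map which is `tprod` on families that are unit vectors at all but finitely many
coordinates, and `0` elsewhere. -/
noncomputable def unitPart {I : Type*} (H : I → Type*) [∀ i, NormedAddCommGroup (H i)]
    [∀ i, InnerProductSpace ℂ (H i)] : MultilinearMap ℂ H (⨂[ℂ] i, H i) where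
  toFun x := if {i | ‖x i‖ ≠ 1}.Finite then PiTensorProduct.tprod ℂ x else 0
  map_update_add' := by
    intro _ x j a b
    have key : ∀ v w : H j, {i | ‖Function.update x j v i‖ ≠ 1}.Finite →
        {i | ‖Function.update x j w i‖ ≠ 1}.Finite := by
      intro v w h
      apply (h.union (Set.finite_singleton j)).subset
      intro i hi
      by_cases hij : i = j
      · exact Or.inr hij
      · exact Or.inl (by simpa [Function.update_of_ne hij] using hi)
    by_cases h : {i | ‖Function.update x j a i‖ ≠ 1}.Finite
    · rw [if_pos h, if_pos (key a b h), if_pos (key a (a + b) h),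
        MultilinearMap.map_update_add]
    · rw [if_neg h, if_neg (fun h' => h (key b a h')), if_neg (fun h' => h (key (a + b) a h')),
        add_zero]
  map_update_smul' := by
    intro _ x j c a
    have key : ∀ v w : H j, {i | ‖Function.update x j v i‖ ≠ 1}.Finite →
        {i | ‖Function.update x j w i‖ ≠ 1}.Finite := by
      intro v w h
      apply (h.union (Set.finite_singleton j)).subset
      intro i hi
      by_cases hij : i = j
      · exact Or.inr hij
      · exact Or.inl (by simpa [Function.update_of_ne hij] using hi)
    by_cases h : {i | ‖Function.update x j a i‖ ≠ 1}.Finite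
    · rw [if_pos h, if_pos (key a (c • a) h), MultilinearMap.map_update_smul]
    · rw [if_neg h, if_neg (fun h' => h (key (c • a) a h')), smul_zero]

/-- `⨂^ct_{i∈I} H_i` is the internal direct sum of `K̃` and `⨂^un_{i∈I} H_i`. -/
theorem ctTensorSpan_directSum {I : Type*} [Infinite I] (H : I → Type*)
    [∀ i, NormedAddCommGroup (H i)] [∀ i, InnerProductSpace ℂ (H i)] :
    ktilTensorSpan H ⊔ unTensorSpan H = ctTensorSpan H ∧
      ktilTensorSpan H ⊓ unTensorSpan H = ⊥ := by
  classical
  constructor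
  · apply le_antisymm
    · apply sup_le
      · exact Submodule.span_mono (by rintro t ⟨x, ⟨hle, _⟩, rfl⟩; exact ⟨x, hle, rfl⟩)
      · exact Submodule.span_mono
          (by rintro t ⟨x, hx, rfl⟩; exact ⟨x, fun i => (hx i).le, rfl⟩)
    · rw [ctTensorSpan, Submodule.span_le]
      rintro t ⟨x, hx, rfl⟩
      by_cases hinf : {i | ‖x i‖ < 1}.Infinite
      · exact Submodule.mem_sup_left (Submodule.subset_span ⟨x, ⟨hx, hinf⟩, rfl⟩)
      · rw [Set.not_infinite] at hinf
        by_cases hz : ∃ i, x i = 0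
        · obtain ⟨i, hi⟩ := hz
          rw [(PiTensorProduct.tprod ℂ).map_coord_zero i hi]
          exact Submodule.zero_mem _
        · push_neg at hz
          set u : ∀ i, H i := fun i => ((‖x i‖ : ℂ))⁻¹ • x i with hu
          have hnx : ∀ i, (‖x i‖ : ℂ) ≠ 0 := fun i => by
            simpa using norm_ne_zero_iff.mpr (hz i)
          have hux : ∀ i, (‖x i‖ : ℂ) • u i = x i := fun i => by
            rw [hu, smul_smul, mul_inv_cancel₀ (hnx i), one_smul]
          have hnorm : ∀ i, ‖u i‖ = 1 := fun i => by
            rw [hu]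
            simp [norm_smul, inv_mul_cancel₀ (norm_ne_zero_iff.mpr (hz i))]
          have hxeq : x = (hinf.toFinset).piecewise (fun i => (‖x i‖ : ℂ) • u i) u := by
            funext i
            by_cases hi : i ∈ hinf.toFinset
            · rw [Finset.piecewise_eq_of_mem _ _ _ hi, hux]
            · rw [Finset.piecewise_eq_of_notMem _ _ _ hi]
              have h1 : ‖x i‖ = 1 := le_antisymm (hx i)
                (not_lt.mp (by simpa using hi))
              rw [hu]; simp [h1]
          rw [hxeq, (PiTensorProduct.tprod ℂ).map_piecewise_smul]
          exact Submodule.mem_sup_right (Submodule.smul_mem _ _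
            (Submodule.subset_span ⟨u, hnorm, rfl⟩))
  · rw [eq_bot_iff]
    set P := PiTensorProduct.lift (unitPart H) with hP
    have hK : ktilTensorSpan H ≤ LinearMap.ker P := by
      rw [ktilTensorSpan, Submodule.span_le]
      rintro t ⟨x, ⟨hle, hinf⟩, rfl⟩
      have : {i | ‖x i‖ ≠ 1}.Infinite := hinf.mono fun i hi => ne_of_lt hi
      simp only [SetLike.mem_coe, LinearMap.mem_ker, hP, PiTensorProduct.lift.tprod]
      show (if {i | ‖x i‖ ≠ 1}.Finite then PiTensorProduct.tprod ℂ x else 0) = 0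
      rw [if_neg this]
    have hU : unTensorSpan H ≤ LinearMap.ker (P - LinearMap.id) := by
      rw [unTensorSpan, Submodule.span_le]
      rintro t ⟨x, hx, rfl⟩
      have hfin : {i | ‖x i‖ ≠ 1}.Finite := by
        convert Set.finite_empty using 2
        ext i; simp [hx i]
      simp only [SetLike.mem_coe, LinearMap.mem_ker, LinearMap.sub_apply, LinearMap.id_apply,
        sub_eq_zero, hP, PiTensorProduct.lift.tprod]
      show (if {i | ‖x i‖ ≠ 1}.Finite then PiTensorProduct.tprod ℂ x else 0) = _
      rw [if_pos hfin]
    rintro t ⟨h1, h2⟩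
    have e1 : P t = 0 := hK h1
    have e2 : P t - t = 0 := by simpa [sub_eq_zero] using hU h2
    rw [Submodule.mem_bot]
    rw [e1] at e2
    simpa using e2.symm
end
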